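/- arXiv:2604.20339 — 6 statements merged into one kernel-verified Lean document; each statement's English description precedes it below -/
import Mathlib

section
/- (Half-interval Hardy-type estimate) For every n>0 and every γ∈(0,1) there exists a constant C>0 such that for every u∈V one has n·∫_{−1}^{−1/2} u(x)²/(1−x²)^γ dx ≤ C·∫_{−1}^{0} u(x)² dx + ∫_{−1}^{0} (1−x²)·u′(x)² dx. -/
open MeasureTheory Set Filter

noncomputable section

/-- `u` belongs to the weighted space `V` on `I = (-1,1)`: it is square integrable on `I`,
locally absolutely continuous on `I` with a.e. derivative `u'`, and `√(1-x²)·u'` is square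
integrable on `I`. -/
structure MemV (u u' : ℝ → ℝ) : Prop where
  sq_int : IntegrableOn (fun x => u x ^ 2) (Ioo (-1:ℝ) 1)
  locAC : ∀ a b : ℝ, a ∈ Ioo (-1:ℝ) 1 → b ∈ Ioo (-1:ℝ) 1 →
      u b - u a = ∫ t in a..b, u' t
  deriv_intble : ∀ a b : ℝ, a ∈ Ioo (-1:ℝ) 1 → b ∈ Ioo (-1:ℝ) 1 →
      IntervalIntegrable u' volume a b
  wsq_int : IntegrableOn (fun x => (1 - x ^ 2) * u' x ^ 2) (Ioo (-1:ℝ) 1)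

lemma my_integral_cs (μ : Measure ℝ) (f g : ℝ → ℝ)
    (hf2 : Integrable (fun t => f t ^ 2) μ) (hg2 : Integrable (fun t => g t ^ 2) μ)
    (hfg : Integrable (fun t => f t * g t) μ) :
    (∫ t, f t * g t ∂μ) ^ 2 ≤ (∫ t, f t ^ 2 ∂μ) * ∫ t, g t ^ 2 ∂μ := by
  have key : ∀ s : ℝ, 0 ≤ (∫ t, f t ^ 2 ∂μ) * (s * s) + (2 * ∫ t, f t * g t ∂μ) * s
      + ∫ t, g t ^ 2 ∂μ := by
    intro s
    have h0 : 0 ≤ ∫ t, (s * f t + g t) ^ 2 ∂μ := integral_nonneg fun t => sq_nonneg _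
    have hexp : ∫ t, (s * f t + g t) ^ 2 ∂μ
        = (∫ t, f t ^ 2 ∂μ) * (s * s) + (2 * ∫ t, f t * g t ∂μ) * s + ∫ t, g t ^ 2 ∂μ := by
      have heq : (fun t => (s * f t + g t) ^ 2)
          = fun t => (s * s) * f t ^ 2 + ((2 * s) * (f t * g t) + g t ^ 2) := by
        ext t; ring
      rw [heq]
      have h1 := integral_add (μ := μ) (hf2.const_mul (s*s)) ((hfg.const_mul (2*s)).add hg2)
      have h2 := integral_add (μ := μ) (hfg.const_mul (2*s)) hg2
      simp only [Pi.add_apply] at h1 h2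
      rw [h1, h2, integral_const_mul, integral_const_mul]
      ring
    linarith [hexp ▸ h0]
  have hd := discrim_le_zero key
  rw [discrim] at hd
  nlinarith [hd]

lemma aux_poly {x : ℝ} (h1 : -1 < x) (h2 : x ≤ 0) : x + 1 ≤ 1 - x^2 ∧ 0 < 1 - x^2 := by
  constructor <;> nlinarith

lemma aux_sub (p q : ℝ) : (p - q)^2 ≤ 2*p^2 + 2*q^2 := by nlinarith [sq_nonneg (p+q)]

set_option maxHeartbeats 2000000 in
/-- Half-interval Hardy-type estimate. -/
theorem half_interval_hardy (n : ℝ) (hn : 0 < n) (γ : ℝ) (hγ : γ ∈ Ioo (0:ℝ) 1) :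
    ∃ C : ℝ, 0 < C ∧ ∀ u u' : ℝ → ℝ, MemV u u' →
      n * ∫ x in Ioo (-1:ℝ) (-1/2), u x ^ 2 / (1 - x ^ 2) ^ γ
        ≤ C * (∫ x in Ioo (-1:ℝ) 0, u x ^ 2)
          + ∫ x in Ioo (-1:ℝ) 0, (1 - x ^ 2) * u' x ^ 2 := by
  obtain ⟨hγ0, hγ1⟩ := hγ
  set β : ℝ := (1 - γ)/2 with hβdef
  have hβ : 0 < β := by rw [hβdef]; linarith
  have hβ1 : β ≤ 1 := by rw [hβdef]; linarith
  have hγβ : γ + β < 1 := by rw [hβdef]; linarith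
  have hγβ0 : 0 < γ + β := by linarith
  have h1γβ : 1 - (γ + β) = β := by rw [hβdef]; ring
  clear_value β
  set δ : ℝ := min (1/4 : ℝ) ((β^2/(4*n)) ^ (1/β : ℝ)) with hδdef
  have hδ0 : 0 < δ := lt_min (by norm_num) (Real.rpow_pos_of_pos (by positivity) _)
  have hδ4 : δ ≤ 1/4 := min_le_left _ _
  have hδβ : δ ^ β ≤ β^2/(4*n) := by
    calc δ ^ β ≤ ((β^2/(4*n)) ^ (1/β : ℝ)) ^ β :=
          Real.rpow_le_rpow hδ0.le (min_le_right _ _) hβ.le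
    _ = β^2/(4*n) := by
        rw [← Real.rpow_mul (by positivity), one_div_mul_cancel hβ.ne', Real.rpow_one]
  have hδkey : 2*n*(2^β * δ^β) / β^2 ≤ 1 := by
    have h2β : (2:ℝ)^β ≤ 2 := by
      calc (2:ℝ)^β ≤ 2^(1:ℝ) := Real.rpow_le_rpow_of_exponent_le one_le_two hβ1
      _ = 2 := Real.rpow_one 2
    have hstep : 2*n*(2^β * δ^β) ≤ 2*n*(2 * (β^2/(4*n))) := by
      apply mul_le_mul_of_nonneg_left _ (by positivity)
      exact mul_le_mul h2β hδβ (Real.rpow_nonneg hδ0.le β) (by norm_num)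
    have h2 : 2*n*(2*(β^2/(4*n))) = β^2 := by field_simp; ring
    rw [div_le_one (by positivity)]; linarith
  have hδγpos : (0:ℝ) < δ ^ (-γ) := Real.rpow_pos_of_pos hδ0 _
  have hδ1γ : 0 < δ * (1 - γ) := mul_pos hδ0 (by linarith)
  have hCpos : 0 < n * (δ^(-γ) + 2/(δ*(1-γ))) + 1 := by
    have h1 : 0 ≤ δ^(-γ) + 2/(δ*(1-γ)) :=
      add_nonneg hδγpos.le (div_nonneg (by norm_num) hδ1γ.le)
    nlinarith
  clear_value δ
  refine ⟨n * (δ^(-γ) + 2/(δ*(1-γ))) + 1, hCpos, ?_⟩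
  intro u u' hu
  set A := ∫ x in Ioo (-1:ℝ) 0, u x ^ 2 with hAdef
  set D := ∫ x in Ioo (-1:ℝ) 0, (1 - x ^ 2) * u' x ^ 2 with hDdef
  have hsub10 : Ioo (-1:ℝ) 0 ⊆ Ioo (-1:ℝ) 1 := Ioo_subset_Ioo le_rfl (by norm_num)
  have hIu0 : IntegrableOn (fun x => u x ^ 2) (Ioo (-1:ℝ) 0) := hu.sq_int.mono_set hsub10
  have hID0 : IntegrableOn (fun x => (1 - x ^ 2) * u' x ^ 2) (Ioo (-1:ℝ) 0) :=
    hu.wsq_int.mono_set hsub10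
  have hA0 : 0 ≤ A := setIntegral_nonneg measurableSet_Ioo (fun x _ => sq_nonneg _)
  have hD0 : 0 ≤ D := setIntegral_nonneg measurableSet_Ioo (fun x hx =>
    mul_nonneg (aux_poly hx.1 hx.2.le).2.le (sq_nonneg _))
  set a : ℝ := -1 + δ with hadef
  set b : ℝ := -1 + 2*δ with hbdef
  clear_value A D
  have ha1 : (-1:ℝ) < a := by rw [hadef]; linarith
  have hab : a < b := by rw [hadef, hbdef]; linarith
  have hb2 : b ≤ -1/2 := by rw [hbdef]; linarith
  have haI : a ∈ Ioo (-1:ℝ) 1 := ⟨ha1, by rw [hadef]; linarith⟩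
  have hbI : b ∈ Ioo (-1:ℝ) 1 := ⟨by linarith, by rw [hbdef]; linarith⟩
  clear_value a b
  have hu'ab : IntervalIntegrable u' volume a b := hu.deriv_intble a b haI hbI
  have hIccI : Icc a b ⊆ Ioo (-1:ℝ) 1 := fun z hz => ⟨by linarith [hz.1], by
    have := hz.2; simp only [hbdef] at this ⊢; linarith⟩
  have hcont : ContinuousOn u (Icc a b) := by
    have h1 : ContinuousOn (fun z => u a + ∫ t in a..z, u' t) (Icc a b) := by
      have h2 := intervalIntegral.continuousOn_primitive_interval' hu'ab
        (left_mem_uIcc (a := a) (b := b))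
      rw [uIcc_of_le hab.le] at h2
      exact continuousOn_const.add h2
    apply h1.congr
    intro z hz
    have h3 := hu.locAC a z haI (hIccI hz)
    show u z = u a + ∫ t in a..z, u' t
    linarith
  obtain ⟨y, hy, hymin'⟩ := IsCompact.exists_isMinOn isCompact_Icc
    (nonempty_Icc.2 hab.le) ((hcont.pow 2) : ContinuousOn (fun z => u z ^ 2) (Icc a b))
  have hymin : ∀ z ∈ Icc a b, u y ^ 2 ≤ u z ^ 2 := fun z hz => hymin' hz
  have hyI : y ∈ Ioo (-1:ℝ) 1 := hIccI hy
  have hsubab0 : Ioo a b ⊆ Ioo (-1:ℝ) 0 := fun z hz =>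
    ⟨by linarith [hz.1], by have := hz.2; simp only [hbdef] at this; linarith⟩
  have hyA : δ * u y ^ 2 ≤ A := by
    have e1 : ∫ (_ : ℝ) in Ioo a b, u y ^ 2 = δ * u y ^ 2 := by
      rw [setIntegral_const]
      rw [measureReal_def, Real.volume_Ioo]
      rw [show b - a = δ by rw [hadef, hbdef]; ring]
      rw [ENNReal.toReal_ofReal hδ0.le]
      simp [smul_eq_mul]
    have e2 : ∫ (_ : ℝ) in Ioo a b, u y ^ 2 ≤ ∫ z in Ioo a b, u z ^ 2 := by
      apply setIntegral_mono_on _ (hIu0.mono_set hsubab0) measurableSet_Ioo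
      · exact fun z hz => hymin z (Ioo_subset_Icc_self hz)
      · exact integrableOn_const (by rw [Real.volume_Ioo]; exact ENNReal.ofReal_ne_top)
    have e3 : ∫ z in Ioo a b, u z ^ 2 ≤ A := by
      rw [hAdef]
      exact setIntegral_mono_set hIu0 (Eventually.of_forall fun z => sq_nonneg _)
        hsubab0.eventuallyLE
    linarith
  have huy2 : u y ^ 2 ≤ A / δ := by
    rw [le_div_iff₀ hδ0]; linarith
  set K : ℝ := 2*D/β*(2*δ)^β with hKdef
  have hK0 : 0 ≤ K := by
    apply mul_nonneg (div_nonneg (by linarith) hβ.le) (Real.rpow_nonneg (by linarith) _)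
  clear_value K
  have key : ∀ x ∈ Ioo (-1:ℝ) (-1/2), u x ^ 2 / (1 - x ^ 2) ^ γ
      ≤ δ^(-γ) * u x ^ 2 + 2*(A/δ) * (x+1)^(-γ) + K * (x+1)^(-(γ+β)) := by
    intro x hx
    obtain ⟨hx1, hx2⟩ := hx
    have h1px : (0:ℝ) < x + 1 := by linarith
    have hxx : x + 1 ≤ 1 - x ^ 2 := (aux_poly hx1 (by linarith)).1
    have h1x2 : (0:ℝ) < 1 - x ^ 2 := (aux_poly hx1 (by linarith)).2
    have hpow : (x+1)^γ ≤ (1 - x^2)^γ := Real.rpow_le_rpow h1px.le hxx hγ0.le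
    have hP1 : (0:ℝ) < (x+1)^(-γ) := Real.rpow_pos_of_pos h1px _
    have hP2 : (0:ℝ) < (x+1)^(-(γ+β)) := Real.rpow_pos_of_pos h1px _
    rcases le_or_gt a x with hax | hxa
    · -- away from the endpoint: use the trivial bound
      have hδ1x : δ ≤ x + 1 := by rw [hadef] at hax; linarith
      have hd1 : δ^γ ≤ (1 - x^2)^γ :=
        le_trans (Real.rpow_le_rpow hδ0.le hδ1x hγ0.le) hpow
      have h5 : u x ^ 2 / (1 - x^2)^γ ≤ u x ^ 2 / δ^γ :=
        div_le_div_of_nonneg_left (sq_nonneg _) (Real.rpow_pos_of_pos hδ0 γ) hd1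
      have h6 : u x ^ 2 / δ^γ = δ^(-γ) * u x ^ 2 := by
        rw [Real.rpow_neg hδ0.le, div_eq_mul_inv, mul_comm]
      have h7 : 0 ≤ 2*(A/δ) * (x+1)^(-γ) :=
        mul_nonneg (mul_nonneg (by norm_num) (div_nonneg hA0 hδ0.le)) hP1.le
      have h8 : 0 ≤ K * (x+1)^(-(γ+β)) := mul_nonneg hK0 hP2.le
      rw [← h6]
      linarith
    · -- near the endpoint
      have hxI : x ∈ Ioo (-1:ℝ) 1 := ⟨hx1, by linarith⟩
      have hxy : x < y := lt_of_lt_of_le hxa hy.1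
      have hftc := hu.locAC x y hxI hyI
      set S : ℝ := ∫ t in x..y, u' t with hSdef
      have hux : u x = u y - S := by rw [hSdef]; linarith
      clear_value S
      have hsq : u x ^ 2 ≤ 2 * u y ^ 2 + 2 * S ^ 2 := by
        have h1 : u x ^ 2 = (u y - S)^2 := by rw [hux]
        rw [h1]; exact aux_sub _ _
      -- Cauchy-Schwarz on (x, y]
      have hsub0 : Ioc x y ⊆ Ioo (-1:ℝ) 0 := by
        intro t ht
        refine ⟨by linarith [ht.1], ?_⟩
        have h1 : t ≤ y := ht.2
        have h2 : y ≤ b := hy.2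
        rw [hbdef] at h2; linarith
      have hsubI : Ioc x y ⊆ Ioo (-1:ℝ) 1 := fun t ht => hsub10 (hsub0 ht)
      have hIccsub : Icc x y ⊆ Ioo (-1:ℝ) 0 := by
        intro t ht
        refine ⟨by linarith [ht.1], ?_⟩
        have h2 : y ≤ b := hy.2
        rw [hbdef] at h2; linarith [ht.2]
      have hpos' : ∀ t ∈ Icc x y, (0:ℝ) < 1 - t ^ 2 := by
        intro t ht
        have h := hIccsub ht
        exact (aux_poly h.1 h.2.le).2
      set f : ℝ → ℝ := fun t => Real.sqrt (1 - t^2) * u' t with hfdef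
      set gg : ℝ → ℝ := fun t => (Real.sqrt (1 - t^2))⁻¹ with hggdef
      have hfg : EqOn (fun t => f t * gg t) u' (Ioc x y) := by
        intro t ht
        have hs : 0 < Real.sqrt (1 - t^2) := Real.sqrt_pos.2 (hpos' t (Ioc_subset_Icc_self ht))
        show Real.sqrt (1 - t^2) * u' t * (Real.sqrt (1 - t^2))⁻¹ = u' t
        field_simp
      have hf2 : EqOn (fun t => f t ^ 2) (fun t => (1 - t^2) * u' t ^ 2) (Ioc x y) := by
        intro t ht
        show (Real.sqrt (1 - t^2) * u' t) ^ 2 = (1 - t^2) * u' t ^ 2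
        rw [mul_pow, Real.sq_sqrt (hpos' t (Ioc_subset_Icc_self ht)).le]
      have hg2 : EqOn (fun t => gg t ^ 2) (fun t => (1 - t^2)⁻¹) (Ioc x y) := by
        intro t ht
        show ((Real.sqrt (1 - t^2))⁻¹) ^ 2 = (1 - t^2)⁻¹
        rw [inv_pow, Real.sq_sqrt (hpos' t (Ioc_subset_Icc_self ht)).le]
      have hInt_f2 : IntegrableOn (fun t => f t ^ 2) (Ioc x y) :=
        (hu.wsq_int.mono_set hsubI).congr_fun (fun t ht => (hf2 ht).symm) measurableSet_Ioc
      have hcont_inv : ContinuousOn (fun t => (1 - t^2)⁻¹) (Icc x y) :=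
        ((continuous_const.sub (continuous_pow 2)).continuousOn).inv₀
          (fun t ht => (hpos' t ht).ne')
      have hInt_inv : IntegrableOn (fun t => (1 - t^2)⁻¹) (Ioc x y) :=
        (hcont_inv.integrableOn_Icc).mono_set Ioc_subset_Icc_self
      have hInt_g2 : IntegrableOn (fun t => gg t ^ 2) (Ioc x y) :=
        hInt_inv.congr_fun (fun t ht => (hg2 ht).symm) measurableSet_Ioc
      have hInt_fg : IntegrableOn (fun t => f t * gg t) (Ioc x y) :=
        ((intervalIntegrable_iff_integrableOn_Ioc_of_le hxy.le).1
          (hu.deriv_intble x y hxI hyI)).congr_fun (fun t ht => (hfg ht).symm) measurableSet_Ioc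
      have hCS := my_integral_cs (volume.restrict (Ioc x y)) f gg hInt_f2 hInt_g2 hInt_fg
      have hS_eq : S = ∫ t in Ioc x y, u' t := by
        rw [hSdef, intervalIntegral.integral_of_le hxy.le]
      have hS2 : S ^ 2 ≤ (∫ t in Ioc x y, (1 - t^2) * u' t ^ 2) * ∫ t in Ioc x y, (1 - t^2)⁻¹ := by
        rw [hS_eq, ← setIntegral_congr_fun measurableSet_Ioc hfg,
          ← setIntegral_congr_fun measurableSet_Ioc hf2,
          ← setIntegral_congr_fun measurableSet_Ioc hg2]
        exact hCS
      have hB1 : ∫ t in Ioc x y, (1 - t^2) * u' t ^ 2 ≤ D := by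
        rw [hDdef]
        apply setIntegral_mono_set hID0 _ hsub0.eventuallyLE
        apply (ae_restrict_iff' measurableSet_Ioo).2
        exact Eventually.of_forall fun t ht =>
          mul_nonneg (aux_poly ht.1 ht.2.le).2.le (sq_nonneg _)
      have hcont_inv1 : ContinuousOn (fun t : ℝ => (t+1)⁻¹) (Icc x y) := by
        apply ContinuousOn.inv₀ (by fun_prop)
        intro t ht
        have h := hIccsub ht
        have hpos : (0:ℝ) < t + 1 := by linarith [h.1]
        exact hpos.ne'
      have hB2a : ∫ t in Ioc x y, (1 - t^2)⁻¹ ≤ ∫ t in Ioc x y, (t+1)⁻¹ := by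
        apply setIntegral_mono_on hInt_inv
          ((hcont_inv1.integrableOn_Icc).mono_set Ioc_subset_Icc_self) measurableSet_Ioc
        intro t ht
        have ht' := hIccsub (Ioc_subset_Icc_self ht)
        have h1t : (0:ℝ) < t + 1 := by linarith [ht'.1]
        have h2t : t + 1 ≤ 1 - t^2 := (aux_poly ht'.1 ht'.2.le).1
        exact inv_anti₀ h1t h2t
      have hB2b : ∫ t in Ioc x y, (t+1)⁻¹ = Real.log (y+1) - Real.log (x+1) := by
        rw [← intervalIntegral.integral_of_le hxy.le]
        have hderiv : ∀ t ∈ uIcc x y, HasDerivAt (fun s => Real.log (s+1)) (t+1)⁻¹ t := by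
          intro t ht
          rw [uIcc_of_le hxy.le] at ht
          have h1t : t + 1 ≠ 0 := by have := hIccsub ht; intro h; linarith [this.1]
          have h := (Real.hasDerivAt_log h1t).comp t ((hasDerivAt_id t).add_const 1)
          simpa [Function.comp_def] using h
        have hii : IntervalIntegrable (fun t : ℝ => (t+1)⁻¹) volume x y := by
          rw [intervalIntegrable_iff_integrableOn_Ioc_of_le hxy.le]
          exact (hcont_inv1.integrableOn_Icc).mono_set Ioc_subset_Icc_self
        rw [intervalIntegral.integral_eq_sub_of_hasDerivAt hderiv hii]
      have hy2δ : y + 1 ≤ 2*δ := by have h2 : y ≤ b := hy.2; rw [hbdef] at h2; linarith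
      have hB2 : ∫ t in Ioc x y, (1 - t^2)⁻¹ ≤ Real.log (2*δ) - Real.log (x+1) := by
        have hlog1 : Real.log (y+1) ≤ Real.log (2*δ) := by
          apply Real.log_le_log (by linarith [hxy, h1px]) hy2δ
        rw [hB2b] at hB2a
        linarith
      have hB1nn : 0 ≤ ∫ t in Ioc x y, (1 - t^2) * u' t ^ 2 := by
        apply setIntegral_nonneg measurableSet_Ioc
        intro t ht
        have h := hsub0 ht
        exact mul_nonneg (aux_poly h.1 h.2.le).2.le (sq_nonneg _)
      have hB2nn : 0 ≤ ∫ t in Ioc x y, (1 - t^2)⁻¹ := by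
        apply setIntegral_nonneg measurableSet_Ioc
        intro t ht
        have := hpos' t (Ioc_subset_Icc_self ht)
        positivity
      set L : ℝ := Real.log (2*δ) - Real.log (x+1) with hLdef
      clear_value L
      have hL0 : 0 ≤ L := le_trans hB2nn hB2
      have hS2' : S ^ 2 ≤ D * L :=
        le_trans hS2 (mul_le_mul hB1 hB2 hB2nn hD0)
      -- log bound
      have hlogb : L ≤ (1/β) * ((2*δ)^β * (x+1)^(-β)) := by
        have h2δpos : (0:ℝ) < 2*δ := by linarith
        have hLr : L = Real.log ((2*δ)/(x+1)) := by
          rw [hLdef, Real.log_div h2δpos.ne' h1px.ne']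
        set r : ℝ := (2*δ)/(x+1) with hrdef
        have hr0 : 0 < r := div_pos h2δpos h1px
        have h1 : β * Real.log r = Real.log (r^β) := (Real.log_rpow hr0 β).symm
        have h2 : Real.log (r^β) ≤ r^β - 1 :=
          Real.log_le_sub_one_of_pos (Real.rpow_pos_of_pos hr0 _)
        have h3 : Real.log r ≤ r^β / β := by
          rw [le_div_iff₀ hβ]; linarith
        have h4 : r^β = (2*δ)^β * (x+1)^(-β) := by
          rw [hrdef, Real.div_rpow h2δpos.le h1px.le, Real.rpow_neg h1px.le, div_eq_mul_inv]
        rw [hLr]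
        calc Real.log r ≤ r^β / β := h3
        _ = (1/β) * ((2*δ)^β * (x+1)^(-β)) := by rw [h4]; ring
      -- assemble
      have hux2 : u x ^ 2 ≤ 2*(A/δ) + 2*(D*L) := by linarith only [hsq, huy2, hS2']
      have hfrac : u x ^ 2 / (1 - x^2)^γ ≤ u x ^ 2 * (x+1)^(-γ) := by
        have hγpos : (0:ℝ) < (x+1)^γ := Real.rpow_pos_of_pos h1px _
        rw [Real.rpow_neg h1px.le, ← div_eq_mul_inv]
        exact div_le_div_of_nonneg_left (sq_nonneg _) hγpos hpow
      have hDL : D * L ≤ D * ((1/β) * ((2*δ)^β * (x+1)^(-β))) :=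
        mul_le_mul_of_nonneg_left hlogb hD0
      have hP12 : (x+1)^(-(γ+β)) = (x+1)^(-β) * (x+1)^(-γ) := by
        rw [← Real.rpow_add h1px]; congr 1; ring
      have hmain : u x ^ 2 * (x+1)^(-γ)
          ≤ 2*(A/δ) * (x+1)^(-γ) + K * (x+1)^(-(γ+β)) := by
        have hstep : u x ^ 2 * (x+1)^(-γ)
            ≤ (2*(A/δ) + 2*(D*((1/β) * ((2*δ)^β * (x+1)^(-β))))) * (x+1)^(-γ) := by
          apply mul_le_mul_of_nonneg_right _ hP1.le
          linarith
        calc u x ^ 2 * (x+1)^(-γ)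
            ≤ (2*(A/δ) + 2*(D*((1/β) * ((2*δ)^β * (x+1)^(-β))))) * (x+1)^(-γ) := hstep
        _ = 2*(A/δ) * (x+1)^(-γ) + K * ((x+1)^(-β) * (x+1)^(-γ)) := by
            rw [hKdef]; ring
        _ = 2*(A/δ) * (x+1)^(-γ) + K * (x+1)^(-(γ+β)) := by rw [hP12]
      have hnn : 0 ≤ δ^(-γ) * u x ^ 2 := mul_nonneg hδγpos.le (sq_nonneg _)
      calc u x ^ 2 / (1 - x^2)^γ ≤ u x ^ 2 * (x+1)^(-γ) := hfrac
      _ ≤ 2*(A/δ) * (x+1)^(-γ) + K * (x+1)^(-(γ+β)) := hmain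
      _ ≤ δ^(-γ) * u x ^ 2 + 2*(A/δ) * (x+1)^(-γ) + K * (x+1)^(-(γ+β)) := by linarith
  -- integrability of the majorant on (-1, -1/2)
  have hsubhalf : Ioo (-1:ℝ) (-1/2) ⊆ Ioo (-1:ℝ) 0 := Ioo_subset_Ioo le_rfl (by norm_num)
  have hIuHalf : IntegrableOn (fun x => u x ^ 2) (Ioo (-1:ℝ) (-1/2)) := hIu0.mono_set hsubhalf
  have hIP : ∀ e : ℝ, -1 < e → IntegrableOn (fun x : ℝ => (x+1)^e) (Ioo (-1:ℝ) (-1/2)) := by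
    intro e he
    have h1 : IntervalIntegrable (fun s : ℝ => s^e) volume 0 (1/2) := intervalIntegral.intervalIntegrable_rpow' he
    have h2 := h1.comp_add_right 1
    rw [show (0:ℝ)-1 = -1 by norm_num, show (1:ℝ)/2-1 = -1/2 by norm_num] at h2
    have h3 := (intervalIntegrable_iff_integrableOn_Ioc_of_le
      (by norm_num : (-1:ℝ) ≤ -1/2)).1 h2
    exact h3.mono_set Ioo_subset_Ioc_self
  have hval : ∀ e : ℝ, -1 < e →
      (∫ x in Ioo (-1:ℝ) (-1/2), (x+1)^e) = (1/2:ℝ)^(e+1)/(e+1) := by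
    intro e he
    rw [← integral_Ioc_eq_integral_Ioo,
      ← intervalIntegral.integral_of_le (by norm_num : (-1:ℝ) ≤ -1/2)]
    have h2 : ∫ x in (-1:ℝ)..(-1/2), (x+1)^e = ∫ s in (0:ℝ)..(1/2), s^e := by
      have h := intervalIntegral.integral_comp_add_right (a := (-1:ℝ)) (b := -1/2)
        (fun s : ℝ => s^e) 1
      rw [show (-1:ℝ)+1 = 0 by norm_num, show (-1/2:ℝ)+1 = 1/2 by norm_num] at h
      exact h
    rw [h2, integral_rpow (Or.inl he), Real.zero_rpow (by linarith : e+1 ≠ 0)]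
    ring
  have hI1 : (∫ x in Ioo (-1:ℝ) (-1/2), (x+1)^(-γ)) ≤ 1/(1-γ) := by
    rw [hval (-γ) (by linarith)]
    have h1 : ((1:ℝ)/2)^(-γ+1) ≤ 1 := Real.rpow_le_one (by norm_num) (by norm_num) (by linarith)
    have h2 : (0:ℝ) < -γ+1 := by linarith
    rw [show -γ+1 = 1-γ by ring] at h1 h2 ⊢
    exact (div_le_div_iff_of_pos_right h2).2 h1
  have hI2 : (∫ x in Ioo (-1:ℝ) (-1/2), (x+1)^(-(γ+β))) ≤ 1/β := by
    rw [hval (-(γ+β)) (by linarith)]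
    have heβ : -(γ+β)+1 = β := by linarith only [h1γβ]
    rw [heβ]
    have h1 : ((1:ℝ)/2)^β ≤ 1 := Real.rpow_le_one (by norm_num) (by norm_num) hβ.le
    exact (div_le_div_iff_of_pos_right hβ).2 h1
  have hg_int : Integrable
      (fun x => δ^(-γ) * u x ^ 2 + 2*(A/δ) * (x+1)^(-γ) + K * (x+1)^(-(γ+β)))
      (volume.restrict (Ioo (-1:ℝ) (-1/2))) :=
    ((hIuHalf.const_mul _).add ((hIP (-γ) (by linarith)).const_mul _)).add
      ((hIP (-(γ+β)) (by linarith)).const_mul _)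
  have hmono : (∫ x in Ioo (-1:ℝ) (-1/2), u x ^ 2 / (1 - x ^ 2) ^ γ)
      ≤ ∫ x in Ioo (-1:ℝ) (-1/2),
        (δ^(-γ) * u x ^ 2 + 2*(A/δ) * (x+1)^(-γ) + K * (x+1)^(-(γ+β))) := by
    apply integral_mono_of_nonneg _ hg_int
    · exact (ae_restrict_iff' measurableSet_Ioo).2 (Eventually.of_forall key)
    · apply (ae_restrict_iff' measurableSet_Ioo).2
      apply Eventually.of_forall
      intro x hx
      have h1x2 : (0:ℝ) < 1 - x ^ 2 := (aux_poly hx.1 (by have := hx.2; linarith)).2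
      exact div_nonneg (sq_nonneg _) (Real.rpow_nonneg h1x2.le _)
  have hsplit : (∫ x in Ioo (-1:ℝ) (-1/2),
        (δ^(-γ) * u x ^ 2 + 2*(A/δ) * (x+1)^(-γ) + K * (x+1)^(-(γ+β))))
      = δ^(-γ) * (∫ x in Ioo (-1:ℝ) (-1/2), u x ^ 2)
        + 2*(A/δ) * (∫ x in Ioo (-1:ℝ) (-1/2), (x+1)^(-γ))
        + K * (∫ x in Ioo (-1:ℝ) (-1/2), (x+1)^(-(γ+β))) := by
    have h1 := integral_add (μ := volume.restrict (Ioo (-1:ℝ) (-1/2)))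
      ((hIuHalf.const_mul (δ^(-γ))).add ((hIP (-γ) (by linarith)).const_mul (2*(A/δ))))
      ((hIP (-(γ+β)) (by linarith)).const_mul K)
    have h2 := integral_add (μ := volume.restrict (Ioo (-1:ℝ) (-1/2)))
      (hIuHalf.const_mul (δ^(-γ))) ((hIP (-γ) (by linarith)).const_mul (2*(A/δ)))
    simp only [Pi.add_apply] at h1 h2
    rw [h1, h2, integral_const_mul, integral_const_mul, integral_const_mul]
  have hhalfA : (∫ x in Ioo (-1:ℝ) (-1/2), u x ^ 2) ≤ A := by
    rw [hAdef]
    exact setIntegral_mono_set hIu0 (Eventually.of_forall fun z => sq_nonneg _)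
      hsubhalf.eventuallyLE
  have hfin1 : (∫ x in Ioo (-1:ℝ) (-1/2), u x ^ 2 / (1 - x ^ 2) ^ γ)
      ≤ δ^(-γ) * A + 2*(A/δ) * (1/(1-γ)) + K * (1/β) := by
    rw [hsplit] at hmono
    have e1 : δ^(-γ) * (∫ x in Ioo (-1:ℝ) (-1/2), u x ^ 2) ≤ δ^(-γ) * A :=
      mul_le_mul_of_nonneg_left hhalfA hδγpos.le
    have e2 : 2*(A/δ) * (∫ x in Ioo (-1:ℝ) (-1/2), (x+1)^(-γ)) ≤ 2*(A/δ) * (1/(1-γ)) :=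
      mul_le_mul_of_nonneg_left hI1 (mul_nonneg (by norm_num) (div_nonneg hA0 hδ0.le))
    have e3 : K * (∫ x in Ioo (-1:ℝ) (-1/2), (x+1)^(-(γ+β))) ≤ K * (1/β) :=
      mul_le_mul_of_nonneg_left hI2 hK0
    linarith only [hmono, e1, e2, e3]
  have hfinal : n * (∫ x in Ioo (-1:ℝ) (-1/2), u x ^ 2 / (1 - x ^ 2) ^ γ)
      ≤ n * (δ^(-γ) * A + 2*(A/δ) * (1/(1-γ)) + K * (1/β)) :=
    mul_le_mul_of_nonneg_left hfin1 hn.le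
  have halg1 : n * (δ^(-γ) * A + 2*(A/δ) * (1/(1-γ)))
      = (n * (δ^(-γ) + 2/(δ*(1-γ)))) * A := by
    have hδne : δ ≠ 0 := hδ0.ne'
    have hγne : (1:ℝ) - γ ≠ 0 := by linarith
    field_simp
  have halg2 : n * (K * (1/β)) ≤ D := by
    have h2δ : (2*δ)^β = 2^β * δ^β := Real.mul_rpow (by norm_num) hδ0.le
    have heq : n * (K * (1/β)) = D * (2*n*(2^β * δ^β)/β^2) := by
      rw [hKdef, h2δ]
      field_simp
    rw [heq]
    exact mul_le_of_le_one_right hD0 hδkey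
  have hexpand : n * (δ^(-γ) * A + 2*(A/δ) * (1/(1-γ)) + K * (1/β))
      = n * (δ^(-γ) * A + 2*(A/δ) * (1/(1-γ))) + n * (K * (1/β)) := by ring
  rw [hexpand, halg1] at hfinal
  have hAterm : (n * (δ^(-γ) + 2/(δ*(1-γ)))) * A ≤ (n * (δ^(-γ) + 2/(δ*(1-γ))) + 1) * A := by
    nlinarith [hA0]
  linarith only [hfinal, halg2, hAterm]
end
end

section
/- (Hardy inequality with weight (1−x²)^{−2}) There exists a constant C>0 such that for every absolutely continuous function w:[−1,1]→ℝ with w(−1)=w(1)=0 whose a.e. derivative w′ belongs to L²(−1,1), one has ∫_{−1}^{1} w(x)²/(1−x²)² dx ≤ C·∫_{−1}^{1} w′(x)² dx. -/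
open MeasureTheory Set Filter
open scoped ENNReal NNReal

noncomputable section

/-- Cauchy–Schwarz inequality for integrals of nonnegative functions. -/
private lemma cs_integral {μ : Measure ℝ} {f g : ℝ → ℝ}
    (hf : 0 ≤ᵐ[μ] f) (hg : 0 ≤ᵐ[μ] g)
    (hf2 : Integrable (fun t => f t ^ 2) μ) (hg2 : Integrable (fun t => g t ^ 2) μ)
    (hfg : Integrable (fun t => f t * g t) μ) :
    (∫ t, f t * g t ∂μ) ^ 2 ≤ (∫ t, f t ^ 2 ∂μ) * ∫ t, g t ^ 2 ∂μ := by
  set A := ∫ t, f t ^ 2 ∂μ with hA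
  set B := ∫ t, g t ^ 2 ∂μ with hB
  have hA0 : 0 ≤ A := integral_nonneg fun t => sq_nonneg _
  have hB0 : 0 ≤ B := integral_nonneg fun t => sq_nonneg _
  have hfg0 : 0 ≤ ∫ t, f t * g t ∂μ := by
    refine integral_nonneg_of_ae ?_
    filter_upwards [hf, hg] with t h1 h2 using mul_nonneg h1 h2
  rcases eq_or_lt_of_le hA0 with hA' | hA'
  · have hsq0 : (fun t => f t ^ 2) =ᵐ[μ] 0 := by
      rw [← integral_eq_zero_iff_of_nonneg_ae (ae_of_all _ fun t => sq_nonneg (f t)) hf2]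
      exact hA'.symm
    have hzero : (fun t => f t * g t) =ᵐ[μ] 0 := by
      filter_upwards [hsq0] with t ht
      have : f t = 0 := by
        have := ht
        simp only [Pi.zero_apply] at this
        exact (pow_eq_zero_iff (by norm_num : (2:ℕ) ≠ 0)).mp this
      simp [this]
    rw [integral_congr_ae hzero]
    simp
    positivity
  rcases eq_or_lt_of_le hB0 with hB' | hB'
  · have hsq0 : (fun t => g t ^ 2) =ᵐ[μ] 0 := by
      rw [← integral_eq_zero_iff_of_nonneg_ae (ae_of_all _ fun t => sq_nonneg (g t)) hg2]
      exact hB'.symm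
    have hzero : (fun t => f t * g t) =ᵐ[μ] 0 := by
      filter_upwards [hsq0] with t ht
      have : g t = 0 := by
        simp only [Pi.zero_apply] at ht
        exact (pow_eq_zero_iff (by norm_num : (2:ℕ) ≠ 0)).mp ht
      simp [this]
    rw [integral_congr_ae hzero]
    simp
    positivity
  · set a := Real.sqrt A with ha
    set b := Real.sqrt B with hb
    have hapos : 0 < a := Real.sqrt_pos.mpr hA'
    have hbpos : 0 < b := Real.sqrt_pos.mpr hB'
    have ha2 : a ^ 2 = A := Real.sq_sqrt hA0
    have hb2 : b ^ 2 = B := Real.sq_sqrt hB0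
    set ε := b / a with hε
    have hεpos : 0 < ε := div_pos hbpos hapos
    have key : ∫ t, f t * g t ∂μ ≤ (ε * A + ε⁻¹ * B) / 2 := by
      have hint : Integrable (fun t => (ε * f t ^ 2 + ε⁻¹ * g t ^ 2) / 2) μ :=
        ((hf2.const_mul ε).add (hg2.const_mul ε⁻¹)).div_const 2
      have hle : (fun t => f t * g t) ≤ᵐ[μ] fun t => (ε * f t ^ 2 + ε⁻¹ * g t ^ 2) / 2 := by
        refine ae_of_all _ fun t => ?_
        have h1 := sq_nonneg (ε * f t - g t)
        have h2 : ε * ε⁻¹ = 1 := mul_inv_cancel₀ hεpos.ne'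
        nlinarith [hεpos, sq_nonneg (f t), sq_nonneg (g t)]
      calc ∫ t, f t * g t ∂μ ≤ ∫ t, (ε * f t ^ 2 + ε⁻¹ * g t ^ 2) / 2 ∂μ :=
            integral_mono_ae hfg hint hle
        _ = (ε * A + ε⁻¹ * B) / 2 := by
            rw [integral_div, integral_add (hf2.const_mul ε) (hg2.const_mul ε⁻¹),
              integral_const_mul, integral_const_mul]
    have hval : (ε * A + ε⁻¹ * B) / 2 = a * b := by
      rw [hε, ← ha2, ← hb2]
      field_simp
      ring
    have hfin : ∫ t, f t * g t ∂μ ≤ a * b := by rw [← hval]; exact key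
    calc (∫ t, f t * g t ∂μ) ^ 2 ≤ (a * b) ^ 2 := pow_le_pow_left₀ hfg0 hfin 2
      _ = A * B := by rw [mul_pow, ha2, hb2]

/-- Hardy inequality on the half interval `(0,1)` in `lintegral` form. -/
private lemma half_hardy (v v' : ℝ → ℝ)
    (hint : IntervalIntegrable v' volume 0 1)
    (hv : ∀ x ∈ Icc (0:ℝ) 1, v x = - ∫ t in x..(1:ℝ), v' t)
    (hsq : IntegrableOn (fun t => v' t ^ 2) (Ioo 0 1)) :
    ∫⁻ x in Ioo (0:ℝ) 1, ENNReal.ofReal (v x ^ 2 / (1 - x) ^ 2)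
      ≤ 4 * ∫⁻ t in Ioo (0:ℝ) 1, ENNReal.ofReal (v' t ^ 2) := by
  have hmk := hsq.aemeasurable
  set q : ℝ → ℝ := fun t => |hmk.mk (fun t => v' t ^ 2) t| with hqdef
  have hq : Measurable q := hmk.measurable_mk.abs
  have hqnn : ∀ t, 0 ≤ q t := fun t => abs_nonneg _
  have hqe : (fun t => v' t ^ 2) =ᵐ[volume.restrict (Ioo (0:ℝ) 1)] q := by
    filter_upwards [hmk.ae_eq_mk] with t ht
    rw [hqdef]
    simp only
    rw [← ht, abs_of_nonneg (sq_nonneg _)]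
  set F : ℝ → ℝ≥0∞ := fun t => ENNReal.ofReal (q t * Real.sqrt (1 - t)) with hFdef
  have hF : Measurable F := by
    apply Measurable.ennreal_ofReal
    fun_prop
  set c : ℝ → ℝ≥0∞ := fun x => ENNReal.ofReal (2 * (1 - x) ^ (-(3:ℝ)/2)) with hcdef
  have hc : Measurable c := by
    apply Measurable.ennreal_ofReal
    fun_prop
  -- Step A : pointwise bound
  have stepA : ∀ x ∈ Ioo (0:ℝ) 1,
      ENNReal.ofReal (v x ^ 2 / (1 - x) ^ 2) ≤ c x * ∫⁻ t in Ioo x 1, F t := by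
    intro x hx
    have h1x : (0:ℝ) < 1 - x := by linarith [hx.2]
    have hxsub : Ioo x 1 ⊆ Ioo (0:ℝ) 1 := Ioo_subset_Ioo hx.1.le le_rfl
    -- integrability facts on `Ioo x 1`
    have hIsq : IntegrableOn (fun t => v' t ^ 2) (Ioo x 1) := hsq.mono_set hxsub
    have hb2 : IntegrableOn (fun t => v' t ^ 2 * Real.sqrt (1 - t)) (Ioo x 1) := by
      have h := Integrable.bdd_mul (c := 1) (f := fun t : ℝ => Real.sqrt (1 - t)) hIsq
        (((continuous_const.sub continuous_id).sqrt).aestronglyMeasurable.restrict)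
        (by
          refine (ae_restrict_iff' measurableSet_Ioo).mpr (ae_of_all _ fun t ht => ?_)
          rw [Real.norm_eq_abs, abs_of_nonneg (Real.sqrt_nonneg _)]
          exact Real.sqrt_le_one.mpr (by linarith [ht.1, hx.1]))
      exact IntegrableOn.congr_fun h (fun t _ => mul_comm _ _) measurableSet_Ioo
    have ha2 : IntegrableOn (fun t => (1 - t) ^ (-(1:ℝ)/2)) (Ioo x 1) := by
      have base : IntervalIntegrable (fun s : ℝ => s ^ (-(1:ℝ)/2)) volume (1 - x) 0 :=
        intervalIntegral.intervalIntegrable_rpow' (by norm_num)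
      have h := base.comp_sub_left 1
      simp only [sub_sub_cancel, sub_zero] at h
      rwa [intervalIntegrable_iff_integrableOn_Ioo_of_le (by linarith [hx.2] : x ≤ 1)] at h
    have habs : IntegrableOn (fun t => |v' t|) (Ioo x 1) := by
      have h : IntervalIntegrable v' volume x 1 := by
        refine hint.mono_set ?_
        rw [uIcc_of_le hx.2.le, uIcc_of_le zero_le_one]
        exact Icc_subset_Icc hx.1.le le_rfl
      exact (intervalIntegrable_iff_integrableOn_Ioo_of_le hx.2.le).mp h.abs
    -- Cauchy–Schwarz with weights
    set f : ℝ → ℝ := fun t => (1 - t) ^ (-(1:ℝ)/4) with hfdef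
    set g : ℝ → ℝ := fun t => |v' t| * (1 - t) ^ ((1:ℝ)/4) with hgdef
    have hrpow_sq : ∀ y : ℝ, 0 < y → ∀ r : ℝ, (y ^ r) ^ 2 = y ^ (2 * r) := by
      intro y hy r
      rw [← Real.rpow_natCast (y ^ r) 2, ← Real.rpow_mul hy.le]
      norm_num
      rw [mul_comm]
    have hf2 : Integrable (fun t => f t ^ 2) (volume.restrict (Ioo x 1)) := by
      refine ha2.congr_fun (fun t ht => ?_) measurableSet_Ioo
      have h1t : (0:ℝ) < 1 - t := by linarith [ht.2]
      rw [hfdef]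
      simp only
      rw [hrpow_sq _ h1t]
      norm_num
    have hg2 : Integrable (fun t => g t ^ 2) (volume.restrict (Ioo x 1)) := by
      refine hb2.congr_fun (fun t ht => ?_) measurableSet_Ioo
      have h1t : (0:ℝ) < 1 - t := by linarith [ht.2]
      rw [hgdef]
      simp only
      rw [mul_pow, sq_abs, hrpow_sq _ h1t]
      norm_num
      rw [Real.sqrt_eq_rpow]
      norm_num
    have hfg : Integrable (fun t => f t * g t) (volume.restrict (Ioo x 1)) := by
      refine habs.congr_fun (fun t ht => ?_) measurableSet_Ioo
      have h1t : (0:ℝ) < 1 - t := by linarith [ht.2]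
      rw [hfdef, hgdef]
      simp only
      rw [show (1 - t) ^ (-(1:ℝ)/4) * (|v' t| * (1 - t) ^ ((1:ℝ)/4))
          = |v' t| * ((1 - t) ^ (-(1:ℝ)/4) * (1 - t) ^ ((1:ℝ)/4)) by ring,
        ← Real.rpow_add h1t]
      norm_num
    have hfnn : 0 ≤ᵐ[volume.restrict (Ioo x 1)] f := by
      refine (ae_restrict_iff' measurableSet_Ioo).mpr (ae_of_all _ fun t ht => ?_)
      exact Real.rpow_nonneg (by linarith [ht.2]) _
    have hgnn : 0 ≤ᵐ[volume.restrict (Ioo x 1)] g := by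
      refine (ae_restrict_iff' measurableSet_Ioo).mpr (ae_of_all _ fun t ht => ?_)
      exact mul_nonneg (abs_nonneg _) (Real.rpow_nonneg (by linarith [ht.2]) _)
    have CS := cs_integral hfnn hgnn hf2 hg2 hfg
    -- identify the three integrals
    set A := ∫ t in Ioo x 1, (1 - t) ^ (-(1:ℝ)/2) with hAdef
    set B := ∫ t in Ioo x 1, v' t ^ 2 * Real.sqrt (1 - t) with hBdef
    have hiA : ∫ t in Ioo x 1, f t ^ 2 = A := by
      refine setIntegral_congr_fun measurableSet_Ioo fun t ht => ?_
      have h1t : (0:ℝ) < 1 - t := by linarith [ht.2]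
      rw [hfdef]
      simp only
      rw [hrpow_sq _ h1t]
      norm_num
    have hiB : ∫ t in Ioo x 1, g t ^ 2 = B := by
      refine setIntegral_congr_fun measurableSet_Ioo fun t ht => ?_
      have h1t : (0:ℝ) < 1 - t := by linarith [ht.2]
      rw [hgdef]
      simp only
      rw [mul_pow, sq_abs, hrpow_sq _ h1t]
      norm_num
      rw [Real.sqrt_eq_rpow]
      norm_num
    have hiFG : ∫ t in Ioo x 1, f t * g t = ∫ t in Ioo x 1, |v' t| := by
      refine setIntegral_congr_fun measurableSet_Ioo fun t ht => ?_
      have h1t : (0:ℝ) < 1 - t := by linarith [ht.2]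
      rw [hfdef, hgdef]
      simp only
      rw [show (1 - t) ^ (-(1:ℝ)/4) * (|v' t| * (1 - t) ^ ((1:ℝ)/4))
          = |v' t| * ((1 - t) ^ (-(1:ℝ)/4) * (1 - t) ^ ((1:ℝ)/4)) by ring,
        ← Real.rpow_add h1t]
      norm_num
    rw [hiA, hiB, hiFG] at CS
    -- value of A
    have hAval : A = 2 * (1 - x) ^ ((1:ℝ)/2) := by
      have hAr := integral_rpow (a := (0:ℝ)) (b := 1 - x) (r := -(1:ℝ)/2) (Or.inl (by norm_num))
      rw [hAdef, ← integral_Ioc_eq_integral_Ioo, ← intervalIntegral.integral_of_le hx.2.le,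
        intervalIntegral.integral_comp_sub_left (fun s => s ^ (-(1:ℝ)/2)) 1]
      norm_num at hAr ⊢
      rw [hAr]
      ring
    -- bound on |v x|
    have hvx : v x = - ∫ t in x..(1:ℝ), v' t := hv x ⟨hx.1.le, hx.2.le⟩
    have habsle : |v x| ≤ ∫ t in Ioo x 1, |v' t| := by
      rw [hvx, abs_neg]
      calc |∫ t in x..(1:ℝ), v' t| ≤ ∫ t in x..(1:ℝ), |v' t| :=
            intervalIntegral.abs_integral_le_integral_abs hx.2.le
        _ = ∫ t in Ioo x 1, |v' t| := by
            rw [intervalIntegral.integral_of_le hx.2.le, integral_Ioc_eq_integral_Ioo]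
    have hvsq : v x ^ 2 ≤ 2 * (1 - x) ^ ((1:ℝ)/2) * B := by
      have h1 : v x ^ 2 ≤ (∫ t in Ioo x 1, |v' t|) ^ 2 := by
        rw [← sq_abs (v x)]
        exact pow_le_pow_left₀ (abs_nonneg _) habsle 2
      calc v x ^ 2 ≤ (∫ t in Ioo x 1, |v' t|) ^ 2 := h1
        _ ≤ A * B := CS
        _ = 2 * (1 - x) ^ ((1:ℝ)/2) * B := by rw [hAval]
    have hBnn : 0 ≤ B :=
      integral_nonneg fun t => mul_nonneg (sq_nonneg _) (Real.sqrt_nonneg _)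
    -- real inequality with the weight
    have hreal : v x ^ 2 / (1 - x) ^ 2 ≤ 2 * (1 - x) ^ (-(3:ℝ)/2) * B := by
      rw [div_le_iff₀ (by positivity : (0:ℝ) < (1 - x) ^ 2)]
      have e2 : (1 - x) ^ (-(3:ℝ)/2) * (1 - x) ^ ((2:ℕ) : ℝ) = (1 - x) ^ ((1:ℝ)/2) := by
        rw [← Real.rpow_add h1x]
        norm_num
      calc v x ^ 2 ≤ 2 * (1 - x) ^ ((1:ℝ)/2) * B := hvsq
        _ = 2 * ((1 - x) ^ (-(3:ℝ)/2) * (1 - x) ^ ((2:ℕ) : ℝ)) * B := by rw [e2]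
        _ = 2 * (1 - x) ^ (-(3:ℝ)/2) * B * (1 - x) ^ 2 := by
            rw [Real.rpow_natCast]
            ring
    -- the inner lintegral equals `ofReal B`
    have hFB : ∫⁻ t in Ioo x 1, F t = ENNReal.ofReal B := by
      have hcongr : ∫⁻ t in Ioo x 1, F t
          = ∫⁻ t in Ioo x 1, ENNReal.ofReal (v' t ^ 2 * Real.sqrt (1 - t)) := by
        refine lintegral_congr_ae ?_
        filter_upwards [ae_restrict_of_ae_restrict_of_subset hxsub hqe] with t ht
        rw [hFdef]
        simp only
        rw [← ht]
      rw [hcongr, ← ofReal_integral_eq_lintegral_ofReal hb2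
        (ae_of_all _ fun t => mul_nonneg (sq_nonneg _) (Real.sqrt_nonneg _))]
    calc ENNReal.ofReal (v x ^ 2 / (1 - x) ^ 2)
        ≤ ENNReal.ofReal (2 * (1 - x) ^ (-(3:ℝ)/2) * B) := ENNReal.ofReal_le_ofReal hreal
      _ = c x * ENNReal.ofReal B := by
          rw [ENNReal.ofReal_mul (mul_nonneg (by norm_num) (Real.rpow_nonneg h1x.le _))]
      _ = c x * ∫⁻ t in Ioo x 1, F t := by rw [hFB]
  -- Step B : integrate the pointwise bound
  have stepB : ∫⁻ x in Ioo (0:ℝ) 1, ENNReal.ofReal (v x ^ 2 / (1 - x) ^ 2)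
      ≤ ∫⁻ x in Ioo (0:ℝ) 1, c x * ∫⁻ t in Ioo x 1, F t := by
    refine lintegral_mono_ae ((ae_restrict_iff' measurableSet_Ioo).mpr
      (ae_of_all _ fun x hx => stepA x hx))
  -- Step C : Fubini
  set U : Set (ℝ × ℝ) := {p | 0 < p.1 ∧ p.1 < p.2 ∧ p.2 < 1} with hUdef
  have hU : MeasurableSet U :=
    (measurableSet_lt measurable_const measurable_fst).inter
      ((measurableSet_lt measurable_fst measurable_snd).inter
        (measurableSet_lt measurable_snd measurable_const))
  set K : ℝ × ℝ → ℝ≥0∞ := U.indicator (fun p => c p.1 * F p.2) with hKdef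
  have hK : Measurable K :=
    ((hc.comp measurable_fst).mul (hF.comp measurable_snd)).indicator hU
  have E1 : ∀ x : ℝ, ∫⁻ t, K (x, t)
      = (Ioo (0:ℝ) 1).indicator (fun x => c x * ∫⁻ t in Ioo x 1, F t) x := by
    intro x
    by_cases hx : x ∈ Ioo (0:ℝ) 1
    · have heq : (fun t => K (x, t)) = (Ioo x 1).indicator (fun t => c x * F t) := by
        funext t
        by_cases ht : t ∈ Ioo x 1
        · rw [Set.indicator_of_mem ht, hKdef,
            Set.indicator_of_mem (show (x, t) ∈ U from ⟨hx.1, ht.1, ht.2⟩)]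
        · rw [Set.indicator_of_notMem ht, hKdef,
            Set.indicator_of_notMem (fun h => ht ⟨h.2.1, h.2.2⟩)]
      rw [heq, lintegral_indicator measurableSet_Ioo,
        lintegral_const_mul' _ _ ENNReal.ofReal_ne_top, Set.indicator_of_mem hx]
    · have heq : (fun t => K (x, t)) = fun _ => 0 := by
        funext t
        refine Set.indicator_of_notMem (fun h => hx ⟨h.1, h.2.1.trans h.2.2⟩) _
      rw [heq, lintegral_zero, Set.indicator_of_notMem hx]
  have E2 : ∀ t : ℝ, ∫⁻ x, K (x, t)
      = (Ioo (0:ℝ) 1).indicator (fun t => (∫⁻ x in Ioo (0:ℝ) t, c x) * F t) t := by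
    intro t
    by_cases ht : t ∈ Ioo (0:ℝ) 1
    · have heq : (fun x => K (x, t)) = (Ioo (0:ℝ) t).indicator (fun x => c x * F t) := by
        funext x
        by_cases hx : x ∈ Ioo (0:ℝ) t
        · rw [Set.indicator_of_mem hx, hKdef,
            Set.indicator_of_mem (show (x, t) ∈ U from ⟨hx.1, hx.2, ht.2⟩)]
        · rw [Set.indicator_of_notMem hx, hKdef,
            Set.indicator_of_notMem (fun h => hx ⟨h.1, h.2.1⟩)]
      rw [heq, lintegral_indicator measurableSet_Ioo,
        lintegral_mul_const' _ _ ENNReal.ofReal_ne_top, Set.indicator_of_mem ht]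
    · have heq : (fun x => K (x, t)) = fun _ => 0 := by
        funext x
        refine Set.indicator_of_notMem (fun h => ht ⟨h.1.trans h.2.1, h.2.2⟩) _
      rw [heq, lintegral_zero, Set.indicator_of_notMem ht]
  have swap : ∫⁻ x, ∫⁻ t, K (x, t) = ∫⁻ t, ∫⁻ x, K (x, t) :=
    lintegral_lintegral_swap hK.aemeasurable
  have stepC : ∫⁻ x in Ioo (0:ℝ) 1, c x * ∫⁻ t in Ioo x 1, F t
      = ∫⁻ t in Ioo (0:ℝ) 1, (∫⁻ x in Ioo (0:ℝ) t, c x) * F t := by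
    rw [← lintegral_indicator measurableSet_Ioo, ← lintegral_indicator measurableSet_Ioo]
    calc ∫⁻ x, (Ioo (0:ℝ) 1).indicator (fun x => c x * ∫⁻ t in Ioo x 1, F t) x
        = ∫⁻ x, ∫⁻ t, K (x, t) := by
          refine lintegral_congr fun x => (E1 x).symm
      _ = ∫⁻ t, ∫⁻ x, K (x, t) := swap
      _ = ∫⁻ t, (Ioo (0:ℝ) 1).indicator (fun t => (∫⁻ x in Ioo (0:ℝ) t, c x) * F t) t := by
          refine lintegral_congr fun t => E2 t
  -- Step D : bound the inner integral of `c`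
  have stepD : ∀ t ∈ Ioo (0:ℝ) 1,
      (∫⁻ x in Ioo (0:ℝ) t, c x) * F t ≤ ENNReal.ofReal (4 * q t) := by
    intro t ht
    have h1t : (0:ℝ) < 1 - t := by linarith [ht.2]
    have hci : IntegrableOn (fun x => 2 * (1 - x) ^ (-(3:ℝ)/2)) (Ioo 0 t) := by
      have base : IntervalIntegrable (fun s : ℝ => s ^ (-(3:ℝ)/2)) volume 1 (1 - t) := by
        apply intervalIntegral.intervalIntegrable_rpow
        right
        intro h
        rw [uIcc_of_ge (by linarith [ht.1] : 1 - t ≤ 1)] at h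
        exact absurd h.1 (by linarith [ht.2])
      have h := base.comp_sub_left 1
      simp only [sub_self, sub_sub_cancel] at h
      have h2 := h.const_mul 2
      rwa [intervalIntegrable_iff_integrableOn_Ioo_of_le ht.1.le] at h2
    have hcval : ∫⁻ x in Ioo (0:ℝ) t, c x
        = ENNReal.ofReal (∫ x in Ioo (0:ℝ) t, 2 * (1 - x) ^ (-(3:ℝ)/2)) := by
      rw [← ofReal_integral_eq_lintegral_ofReal hci ?_]
      · refine (ae_restrict_iff' measurableSet_Ioo).mpr (ae_of_all _ fun x hx => ?_)
        exact mul_nonneg (by norm_num) (Real.rpow_nonneg (by linarith [hx.2, ht.2]) _)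
    have hval : ∫ x in Ioo (0:ℝ) t, 2 * (1 - x) ^ (-(3:ℝ)/2)
        = 4 * ((1 - t) ^ (-(1:ℝ)/2) - 1) := by
      have hAr := integral_rpow (a := 1 - t) (b := (1:ℝ)) (r := -(3:ℝ)/2) (Or.inr ⟨by norm_num, by
        intro h
        rw [uIcc_of_le (by linarith [ht.1] : 1 - t ≤ 1)] at h
        exact absurd h.1 (by linarith [ht.2])⟩)
      rw [← integral_Ioc_eq_integral_Ioo, ← intervalIntegral.integral_of_le ht.1.le,
        intervalIntegral.integral_const_mul,
        intervalIntegral.integral_comp_sub_left (fun s => s ^ (-(3:ℝ)/2)) 1]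
      norm_num at hAr ⊢
      rw [hAr]
      ring
    have hcle : ∫⁻ x in Ioo (0:ℝ) t, c x ≤ ENNReal.ofReal (4 * (1 - t) ^ (-(1:ℝ)/2)) := by
      rw [hcval, hval]
      refine ENNReal.ofReal_le_ofReal ?_
      nlinarith [Real.rpow_nonneg h1t.le (-(1:ℝ)/2)]
    calc (∫⁻ x in Ioo (0:ℝ) t, c x) * F t
        ≤ ENNReal.ofReal (4 * (1 - t) ^ (-(1:ℝ)/2)) * F t :=
          mul_le_mul_left hcle _
      _ = ENNReal.ofReal (4 * q t) := by
          rw [hFdef]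
          simp only
          rw [← ENNReal.ofReal_mul (by positivity)]
          congr 1
          rw [Real.sqrt_eq_rpow]
          have e1 : (1 - t) ^ (-(1:ℝ)/2) * (1 - t) ^ ((1:ℝ)/2) = 1 := by
            rw [← Real.rpow_add h1t]
            norm_num
          calc 4 * (1 - t) ^ (-(1:ℝ)/2) * (q t * (1 - t) ^ (1/(2:ℝ)))
              = 4 * q t * ((1 - t) ^ (-(1:ℝ)/2) * (1 - t) ^ ((1:ℝ)/2)) := by
                norm_num
                ring
            _ = 4 * q t := by rw [e1, mul_one]
  -- put everything together
  calc ∫⁻ x in Ioo (0:ℝ) 1, ENNReal.ofReal (v x ^ 2 / (1 - x) ^ 2)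
      ≤ ∫⁻ x in Ioo (0:ℝ) 1, c x * ∫⁻ t in Ioo x 1, F t := stepB
    _ = ∫⁻ t in Ioo (0:ℝ) 1, (∫⁻ x in Ioo (0:ℝ) t, c x) * F t := stepC
    _ ≤ ∫⁻ t in Ioo (0:ℝ) 1, ENNReal.ofReal (4 * q t) :=
        lintegral_mono_ae ((ae_restrict_iff' measurableSet_Ioo).mpr
          (ae_of_all _ fun t ht => stepD t ht))
    _ = 4 * ∫⁻ t in Ioo (0:ℝ) 1, ENNReal.ofReal (q t) := by
        have : ∀ t : ℝ, ENNReal.ofReal (4 * q t) = 4 * ENNReal.ofReal (q t) := by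
          intro t
          rw [ENNReal.ofReal_mul (by norm_num)]
          norm_num
        simp_rw [this]
        rw [lintegral_const_mul' _ _ (by norm_num)]
    _ = 4 * ∫⁻ t in Ioo (0:ℝ) 1, ENNReal.ofReal (v' t ^ 2) := by
        congr 1
        refine lintegral_congr_ae ?_
        filter_upwards [hqe] with t ht
        rw [ht]

/-- Hardy inequality with weight `(1-x²)⁻²`: there is a constant `C > 0` such that every
absolutely continuous `w : [-1,1] → ℝ` with `w(±1) = 0` and a.e. derivative `w' ∈ L²(-1,1)`
satisfies `∫ w²/(1-x²)² ≤ C ∫ w'²`. -/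
theorem hardy_weight_inverse_square :
    ∃ C : ℝ, 0 < C ∧ ∀ w w' : ℝ → ℝ,
      (∀ x ∈ Icc (-1:ℝ) 1, w x = ∫ t in (-1:ℝ)..x, w' t) →
      IntervalIntegrable w' volume (-1) 1 →
      w (-1) = 0 → w 1 = 0 →
      IntegrableOn (fun x => w' x ^ 2) (Ioo (-1:ℝ) 1) →
      ∫ x in Ioo (-1:ℝ) 1, w x ^ 2 / (1 - x ^ 2) ^ 2
        ≤ C * ∫ x in Ioo (-1:ℝ) 1, w' x ^ 2 := by
  refine ⟨4, by norm_num, ?_⟩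
  intro w w' hv hint hm1 h1 hsq
  have hW : ∀ x ∈ Icc (-1:ℝ) 1, w x = - ∫ t in x..(1:ℝ), w' t := by
    intro x hx
    have h2 : IntervalIntegrable w' volume (-1) x := by
      refine hint.mono_set ?_
      rw [uIcc_of_le hx.1, uIcc_of_le (by norm_num : (-1:ℝ) ≤ 1)]
      exact Icc_subset_Icc le_rfl hx.2
    have h3 : IntervalIntegrable w' volume x 1 := by
      refine hint.mono_set ?_
      rw [uIcc_of_le hx.2, uIcc_of_le (by norm_num : (-1:ℝ) ≤ 1)]
      exact Icc_subset_Icc hx.1 le_rfl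
    have hadd := intervalIntegral.integral_add_adjacent_intervals h2 h3
    have hw1 : (∫ t in (-1:ℝ)..(1:ℝ), w' t) = 0 := by
      rw [← hv 1 ⟨by norm_num, le_rfl⟩]
      exact h1
    rw [hv x hx]
    rw [hw1] at hadd
    linarith
  -- right half
  have hR := half_hardy w w'
    (hint.mono_set (by
      rw [uIcc_of_le zero_le_one, uIcc_of_le (by norm_num : (-1:ℝ) ≤ 1)]
      exact Icc_subset_Icc (by norm_num) le_rfl))
    (fun x hx => hW x ⟨by linarith [hx.1], hx.2⟩)
    (hsq.mono_set (Ioo_subset_Ioo (by norm_num) le_rfl))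
  -- left half, via reflection
  set v : ℝ → ℝ := fun x => -w (-x) with hvdef
  set v'' : ℝ → ℝ := fun t => w' (-t) with hv''def
  have hemb : MeasurableEmbedding (fun x : ℝ => -x) :=
    (Homeomorph.neg ℝ).measurableEmbedding
  have hMP : MeasurePreserving (fun x : ℝ => -x) volume volume :=
    Measure.measurePreserving_neg _
  have hpre : (fun x : ℝ => -x) ⁻¹' (Ioo (-1:ℝ) 0) = Ioo (0:ℝ) 1 := by
    ext y
    simp only [mem_preimage, mem_Ioo]
    constructor
    · rintro ⟨a, b⟩; constructor <;> linarith
    · rintro ⟨a, b⟩; constructor <;> linarith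
  have hint2 : IntervalIntegrable v'' volume 0 1 := by
    have h : IntervalIntegrable w' volume (-1) 0 := by
      refine hint.mono_set ?_
      rw [uIcc_of_le (by norm_num : (-1:ℝ) ≤ 0), uIcc_of_le (by norm_num : (-1:ℝ) ≤ 1)]
      exact Icc_subset_Icc le_rfl (by norm_num)
    have h2 := (IntervalIntegrable.iff_comp_neg (f := w')).mp h
    norm_num at h2
    exact h2.symm
  have hv2 : ∀ x ∈ Icc (0:ℝ) 1, v x = - ∫ t in x..(1:ℝ), v'' t := by
    intro x hx
    have hcomp : (∫ t in x..(1:ℝ), v'' t) = ∫ t in (-1:ℝ)..(-x), w' t := by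
      exact intervalIntegral.integral_comp_neg (a := x) (b := 1) (f := w')
    rw [hcomp, ← hv (-x) ⟨by linarith [hx.2], by linarith [hx.1]⟩]
  have hsq2 : IntegrableOn (fun t => v'' t ^ 2) (Ioo (0:ℝ) 1) := by
    have h := (hMP.integrableOn_comp_preimage hemb
      (f := fun t => w' t ^ 2) (s := Ioo (-1:ℝ) 0)).mpr
      (hsq.mono_set (Ioo_subset_Ioo le_rfl (by norm_num)))
    rwa [hpre] at h
  have hL0 := half_hardy v v'' hint2 hv2 hsq2
  -- change of variables for the left piece
  have hchg : ∀ f : ℝ → ℝ≥0∞,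
      ∫⁻ y in Ioo (-1:ℝ) 0, f y = ∫⁻ x in Ioo (0:ℝ) 1, f (-x) := by
    intro f
    have h := hMP.setLIntegral_comp_preimage_emb hemb f (Ioo (-1:ℝ) 0)
    rw [hpre] at h
    exact h.symm
  set G : ℝ → ℝ≥0∞ := fun x => ENNReal.ofReal (w x ^ 2 / (1 - x ^ 2) ^ 2) with hGdef
  have hLeft : ∫⁻ x in Ioo (-1:ℝ) 0, G x
      ≤ 4 * ∫⁻ t in Ioo (-1:ℝ) 0, ENNReal.ofReal (w' t ^ 2) := by
    have h1 : ∫⁻ x in Ioo (-1:ℝ) 0, G x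
        ≤ ∫⁻ x in Ioo (-1:ℝ) 0, ENNReal.ofReal (w x ^ 2 / (1 + x) ^ 2) := by
      refine lintegral_mono_ae ((ae_restrict_iff' measurableSet_Ioo).mpr
        (ae_of_all _ fun x hx => ?_))
      refine ENNReal.ofReal_le_ofReal ?_
      have hpos : (0:ℝ) < (1 + x) ^ 2 := by nlinarith [hx.1]
      have hle : (1 + x) ^ 2 ≤ (1 - x ^ 2) ^ 2 := by nlinarith [hx.1, hx.2]
      exact div_le_div_of_nonneg_left (sq_nonneg _) hpos hle
    have h2 : ∫⁻ x in Ioo (-1:ℝ) 0, ENNReal.ofReal (w x ^ 2 / (1 + x) ^ 2)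
        = ∫⁻ x in Ioo (0:ℝ) 1, ENNReal.ofReal (v x ^ 2 / (1 - x) ^ 2) := by
      rw [hchg]
      refine lintegral_congr fun x => ?_
      rw [hvdef]
      simp only
      rw [neg_sq (w (-x)), show (1 + -x : ℝ) = 1 - x from by ring]
    have h4 : ∫⁻ t in Ioo (0:ℝ) 1, ENNReal.ofReal (v'' t ^ 2)
        = ∫⁻ t in Ioo (-1:ℝ) 0, ENNReal.ofReal (w' t ^ 2) :=
      (hchg (fun t => ENNReal.ofReal (w' t ^ 2))).symm
    calc ∫⁻ x in Ioo (-1:ℝ) 0, G x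
        ≤ ∫⁻ x in Ioo (-1:ℝ) 0, ENNReal.ofReal (w x ^ 2 / (1 + x) ^ 2) := h1
      _ = ∫⁻ x in Ioo (0:ℝ) 1, ENNReal.ofReal (v x ^ 2 / (1 - x) ^ 2) := h2
      _ ≤ 4 * ∫⁻ t in Ioo (0:ℝ) 1, ENNReal.ofReal (v'' t ^ 2) := hL0
      _ = 4 * ∫⁻ t in Ioo (-1:ℝ) 0, ENNReal.ofReal (w' t ^ 2) := by rw [h4]
  have hRight : ∫⁻ x in Ioo (0:ℝ) 1, G x
      ≤ 4 * ∫⁻ t in Ioo (0:ℝ) 1, ENNReal.ofReal (w' t ^ 2) := by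
    have h1 : ∫⁻ x in Ioo (0:ℝ) 1, G x
        ≤ ∫⁻ x in Ioo (0:ℝ) 1, ENNReal.ofReal (w x ^ 2 / (1 - x) ^ 2) := by
      refine lintegral_mono_ae ((ae_restrict_iff' measurableSet_Ioo).mpr
        (ae_of_all _ fun x hx => ?_))
      refine ENNReal.ofReal_le_ofReal ?_
      have hpos : (0:ℝ) < (1 - x) ^ 2 := by nlinarith [hx.2]
      have hle : (1 - x) ^ 2 ≤ (1 - x ^ 2) ^ 2 := by nlinarith [hx.1, hx.2]
      exact div_le_div_of_nonneg_left (sq_nonneg _) hpos hle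
    exact h1.trans hR
  -- combine the two halves
  have hTotal : ∫⁻ x in Ioo (-1:ℝ) 1, G x
      ≤ 4 * ∫⁻ t in Ioo (-1:ℝ) 1, ENNReal.ofReal (w' t ^ 2) := by
    have hu : Ioo (-1:ℝ) 1 = Ioo (-1:ℝ) 0 ∪ Ico (0:ℝ) 1 :=
      (Ioo_union_Ico_eq_Ioo (by norm_num) (by norm_num)).symm
    have hdisj : Disjoint (Ioo (-1:ℝ) 0) (Ico (0:ℝ) 1) :=
      Set.disjoint_left.mpr fun x hx h2 => absurd h2.1 (not_le.mpr hx.2)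
    have hsplit : ∀ f : ℝ → ℝ≥0∞, ∫⁻ x in Ioo (-1:ℝ) 1, f x
        = (∫⁻ x in Ioo (-1:ℝ) 0, f x) + ∫⁻ x in Ioo (0:ℝ) 1, f x := by
      intro f
      rw [hu, lintegral_union measurableSet_Ico hdisj,
        setLIntegral_congr ((Ioo_ae_eq_Ico (μ := volume) (a := (0:ℝ)) (b := 1)).symm)]
    rw [hsplit G, hsplit (fun t => ENNReal.ofReal (w' t ^ 2)), mul_add]
    exact add_le_add hLeft hRight
  -- convert back to real integrals
  have hrhs : ∫⁻ t in Ioo (-1:ℝ) 1, ENNReal.ofReal (w' t ^ 2)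
      = ENNReal.ofReal (∫ t in Ioo (-1:ℝ) 1, w' t ^ 2) :=
    (ofReal_integral_eq_lintegral_ofReal hsq (ae_of_all _ fun t => sq_nonneg _)).symm
  rw [hrhs] at hTotal
  by_cases hInt : IntegrableOn (fun x => w x ^ 2 / (1 - x ^ 2) ^ 2) (Ioo (-1:ℝ) 1)
  · have hnn : 0 ≤ᵐ[volume.restrict (Ioo (-1:ℝ) 1)]
        fun x => w x ^ 2 / (1 - x ^ 2) ^ 2 :=
      ae_of_all _ fun x => div_nonneg (sq_nonneg _) (sq_nonneg _)
    rw [integral_eq_lintegral_of_nonneg_ae hnn hInt.aestronglyMeasurable]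
    have hfin : (4 : ℝ≥0∞) * ENNReal.ofReal (∫ t in Ioo (-1:ℝ) 1, w' t ^ 2) ≠ ⊤ :=
      ENNReal.mul_ne_top (by norm_num) ENNReal.ofReal_ne_top
    have hmono := ENNReal.toReal_mono hfin hTotal
    rw [ENNReal.toReal_mul, ENNReal.toReal_ofReal
      (integral_nonneg fun t => sq_nonneg _)] at hmono
    simpa using hmono
  · rw [integral_undef hInt]
    have : 0 ≤ ∫ x in Ioo (-1:ℝ) 1, w' x ^ 2 := integral_nonneg fun t => sq_nonneg _
    linarith
end
end

section
/- (Weighted gradient bound for functions in D(A)) There exists a constant C>0 such that for every γ∈(0,1) and every u∈D(A) one has ∫_{−1}^{1} (1−x²)^γ·u′(x)² dx ≤ C·∫_{−1}^{1} (Au)(x)² dx, where Au=((1−x²)u′)′. -/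
open MeasureTheory Set Filter
open scoped ENNReal NNReal

noncomputable section

lemma lint_Ioo_eq_Ioc (f : ℝ → ENNReal) (a b : ℝ) :
    ∫⁻ s in Ioo a b, f s = ∫⁻ s in Ioc a b, f s :=
  setLIntegral_congr Ioo_ae_eq_Ioc

lemma compA {t : ℝ} (ht : 0 < t) :
    ∫⁻ s in Ioo (0:ℝ) t, ENNReal.ofReal (s ^ (-(1/2) : ℝ))
      = ENNReal.ofReal (2 * t ^ ((1/2) : ℝ)) := by
  rw [lint_Ioo_eq_Ioc]
  have hint : IntegrableOn (fun s : ℝ => s ^ (-(1/2) : ℝ)) (Ioc 0 t) := by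
    rw [← intervalIntegrable_iff_integrableOn_Ioc_of_le ht.le]
    exact intervalIntegral.intervalIntegrable_rpow' (by norm_num)
  have hnn : 0 ≤ᵐ[volume.restrict (Ioc (0:ℝ) t)] fun s : ℝ => s ^ (-(1/2) : ℝ) := by
    filter_upwards [ae_restrict_mem measurableSet_Ioc] with s hs
    exact Real.rpow_nonneg hs.1.le _
  rw [← ofReal_integral_eq_lintegral_ofReal hint hnn]
  congr 1
  have h2 := integral_rpow (a := 0) (b := t) (r := (-(1/2) : ℝ)) (Or.inl (by norm_num))
  rw [intervalIntegral.integral_of_le ht.le] at h2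
  rw [h2, Real.zero_rpow (by norm_num)]
  rw [show (-(1/2) : ℝ) + 1 = (1/2 : ℝ) by norm_num]
  ring

lemma compB {s : ℝ} (hs : 0 < s) (hs1 : s < 1) :
    ∫⁻ t in Ioo s 1, ENNReal.ofReal (2 * t ^ (-(3/2) : ℝ))
      ≤ ENNReal.ofReal 4 * ENNReal.ofReal (s ^ (-(1/2) : ℝ)) := by
  rw [lint_Ioo_eq_Ioc]
  have h0 : (0:ℝ) ∉ uIcc s 1 := by
    rw [Set.mem_uIcc]; push_neg; constructor <;> intro h <;> linarith
  have hint : IntegrableOn (fun t : ℝ => 2 * t ^ (-(3/2) : ℝ)) (Ioc s 1) := by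
    rw [← intervalIntegrable_iff_integrableOn_Ioc_of_le hs1.le]
    exact (intervalIntegral.intervalIntegrable_rpow (Or.inr h0)).const_mul 2
  have hnn : 0 ≤ᵐ[volume.restrict (Ioc s 1)] fun t : ℝ => 2 * t ^ (-(3/2) : ℝ) := by
    filter_upwards [ae_restrict_mem measurableSet_Ioc] with t htm
    have h5 := Real.rpow_nonneg (le_trans hs.le htm.1.le) (-(3/2) : ℝ)
    simp only [Pi.zero_apply]
    linarith
  rw [← ofReal_integral_eq_lintegral_ofReal hint hnn, ← ENNReal.ofReal_mul (by norm_num)]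
  apply ENNReal.ofReal_le_ofReal
  have h2 := integral_rpow (a := s) (b := 1) (r := (-(3/2) : ℝ)) (Or.inr ⟨by norm_num, h0⟩)
  rw [intervalIntegral.integral_of_le hs1.le] at h2
  have h3 : ∫ t in Ioc s 1, 2 * t ^ (-(3/2) : ℝ) = 2 * ∫ t in Ioc s 1, t ^ (-(3/2) : ℝ) :=
    integral_const_mul 2 _
  rw [h3, h2, show (-(3/2) : ℝ) + 1 = (-(1/2) : ℝ) by norm_num, Real.one_rpow]
  have h4 : 0 ≤ s ^ (-(1/2) : ℝ) := Real.rpow_nonneg hs.le _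
  linarith

lemma enn_half_sq (x : ℝ≥0∞) : (x ^ ((1:ℝ)/2)) ^ (2:ℕ) = x := by
  rw [← ENNReal.rpow_natCast, ← ENNReal.rpow_mul]; norm_num

lemma hardyCS (f : ℝ → ℝ≥0∞) (hf : Measurable f) {t : ℝ} (ht : t ∈ Ioo (0:ℝ) 1) :
    (∫⁻ s in Ioo (0:ℝ) t, f s) ^ (2:ℕ)
      ≤ ENNReal.ofReal (2 * t ^ ((1/2):ℝ)) *
        ∫⁻ s in Ioo (0:ℝ) t, ENNReal.ofReal (s ^ ((1/2):ℝ)) * f s ^ (2:ℕ) := by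
  set μ := volume.restrict (Ioo (0:ℝ) t) with hμ
  have hpq : Real.HolderConjugate 2 2 := Real.HolderConjugate.two_two
  have hgm : Measurable fun s : ℝ => ENNReal.ofReal (s ^ (-(1/4):ℝ)) :=
    (measurable_id.pow_const _).ennreal_ofReal
  have hhm : Measurable fun s : ℝ => ENNReal.ofReal (s ^ ((1/4):ℝ)) * f s :=
    ((measurable_id.pow_const _).ennreal_ofReal).mul hf
  have key := ENNReal.lintegral_mul_le_Lp_mul_Lq μ hpq hgm.aemeasurable hhm.aemeasurable
  have hmem := ae_restrict_mem (μ := volume) (measurableSet_Ioo (a := (0:ℝ)) (b := t))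
  have hae : ∫⁻ s, (fun s : ℝ => ENNReal.ofReal (s ^ (-(1/4):ℝ))) s *
      (ENNReal.ofReal (s ^ ((1/4):ℝ)) * f s) ∂μ = ∫⁻ s in Ioo (0:ℝ) t, f s := by
    refine lintegral_congr_ae ?_
    filter_upwards [hmem] with s hs
    rw [← mul_assoc, ← ENNReal.ofReal_mul (Real.rpow_nonneg (le_of_lt hs.1) _),
      ← Real.rpow_add hs.1]
    norm_num
  have hg2 : ∫⁻ s, (fun s : ℝ => ENNReal.ofReal (s ^ (-(1/4):ℝ))) s ^ (2:ℝ) ∂μ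
      = ENNReal.ofReal (2 * t ^ ((1/2):ℝ)) := by
    rw [← compA ht.1]
    refine lintegral_congr_ae ?_
    filter_upwards [hmem] with s hs
    rw [ENNReal.ofReal_rpow_of_nonneg (Real.rpow_nonneg (le_of_lt hs.1) _) (by norm_num),
      ← Real.rpow_mul (le_of_lt hs.1)]
    norm_num
  have hh2 : ∫⁻ s, (fun s : ℝ => ENNReal.ofReal (s ^ ((1/4):ℝ)) * f s) s ^ (2:ℝ) ∂μ
      = ∫⁻ s in Ioo (0:ℝ) t, ENNReal.ofReal (s ^ ((1/2):ℝ)) * f s ^ (2:ℕ) := by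
    refine lintegral_congr_ae ?_
    filter_upwards [hmem] with s hs
    rw [ENNReal.mul_rpow_of_nonneg _ _ (by norm_num : (0:ℝ) ≤ 2),
      ENNReal.ofReal_rpow_of_nonneg (Real.rpow_nonneg (le_of_lt hs.1) _) (by norm_num),
      ← Real.rpow_mul (le_of_lt hs.1),
      show ((2:ℝ)) = ((2:ℕ):ℝ) by norm_num, ENNReal.rpow_natCast]
    norm_num
  rw [show ∀ a b : ℝ → ℝ≥0∞, (∫⁻ x, (a * b) x ∂μ) = ∫⁻ x, a x * b x ∂μ by
    intro a b; rfl] at key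
  rw [hae, hg2, hh2] at key
  calc (∫⁻ s in Ioo (0:ℝ) t, f s) ^ (2:ℕ)
      ≤ ((ENNReal.ofReal (2 * t ^ ((1/2):ℝ))) ^ ((1:ℝ)/2) *
        (∫⁻ s in Ioo (0:ℝ) t, ENNReal.ofReal (s ^ ((1/2):ℝ)) * f s ^ (2:ℕ)) ^ ((1:ℝ)/2)) ^ (2:ℕ) := by
        apply pow_le_pow_left' (by simpa using key)
    _ = _ := by rw [mul_pow, enn_half_sq, enn_half_sq]

lemma hardy (f : ℝ → ℝ≥0∞) (hf : Measurable f) :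
    ∫⁻ t in Ioo (0:ℝ) 1, ENNReal.ofReal (t ^ (-2:ℝ)) * (∫⁻ s in Ioo (0:ℝ) t, f s) ^ (2:ℕ)
      ≤ 4 * ∫⁻ s in Ioo (0:ℝ) 1, f s ^ (2:ℕ) := by
  set T : Set ℝ := Ioo 0 1 with hT
  set k : ℝ → ℝ≥0∞ := fun s => ENNReal.ofReal (s ^ ((1/2):ℝ)) * f s ^ (2:ℕ) with hk
  set c : ℝ → ℝ≥0∞ := fun t => ENNReal.ofReal (2 * t ^ (-(3/2):ℝ)) with hc
  have hkm : Measurable k := ((measurable_id.pow_const _).ennreal_ofReal).mul (hf.pow_const 2)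
  have hcm : Measurable c :=
    ((measurable_const.mul (measurable_id.pow_const _))).ennreal_ofReal
  have hTmem := ae_restrict_mem (μ := volume) (measurableSet_Ioo (a := (0:ℝ)) (b := 1))
  -- step 1: CS bound, and rewrite inner integral with indicator
  have step1 : ∫⁻ t in T, ENNReal.ofReal (t ^ (-2:ℝ)) * (∫⁻ s in Ioo (0:ℝ) t, f s) ^ (2:ℕ)
      ≤ ∫⁻ t in T, ∫⁻ s in T, c t * (Iio t).indicator k s := by
    refine lintegral_mono_ae ?_
    filter_upwards [hTmem] with t ht
    have h1 : (∫⁻ s in Ioo (0:ℝ) t, f s) ^ (2:ℕ)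
        ≤ ENNReal.ofReal (2 * t ^ ((1/2):ℝ)) * ∫⁻ s in Ioo (0:ℝ) t, k s := hardyCS f hf ht
    have h2 : ENNReal.ofReal (t ^ (-2:ℝ)) * (ENNReal.ofReal (2 * t ^ ((1/2):ℝ))) = c t := by
      rw [← ENNReal.ofReal_mul (Real.rpow_nonneg (le_of_lt ht.1) _), hc]
      congr 1
      rw [← mul_assoc, mul_comm (t ^ (-2:ℝ)) 2, mul_assoc, ← Real.rpow_add ht.1]
      norm_num
    have h3 : ∫⁻ s in Ioo (0:ℝ) t, k s = ∫⁻ s in T, (Iio t).indicator k s := by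
      have hset : Iio t ∩ Ioo (0:ℝ) 1 = Ioo (0:ℝ) t := by
        ext s
        simp only [Set.mem_inter_iff, Set.mem_Iio, Set.mem_Ioo]
        constructor
        · rintro ⟨hs1, hs2, _⟩; exact ⟨hs2, hs1⟩
        · rintro ⟨hs1, hs2⟩; exact ⟨hs2, hs1, lt_trans hs2 ht.2⟩
      rw [lintegral_indicator measurableSet_Iio _, Measure.restrict_restrict measurableSet_Iio,
        hT, hset]
    calc ENNReal.ofReal (t ^ (-2:ℝ)) * (∫⁻ s in Ioo (0:ℝ) t, f s) ^ (2:ℕ)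
        ≤ ENNReal.ofReal (t ^ (-2:ℝ)) *
          (ENNReal.ofReal (2 * t ^ ((1/2):ℝ)) * ∫⁻ s in Ioo (0:ℝ) t, k s) :=
          mul_le_mul_right h1 _
      _ = c t * ∫⁻ s in Ioo (0:ℝ) t, k s := by rw [← mul_assoc, h2]
      _ = c t * ∫⁻ s in T, (Iio t).indicator k s := by rw [h3]
      _ = ∫⁻ s in T, c t * (Iio t).indicator k s :=
          (lintegral_const_mul' _ _ ENNReal.ofReal_ne_top).symm
  -- step 2: Tonelli swap
  have hFm : AEMeasurable (Function.uncurry fun t s => c t * (Iio t).indicator k s)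
      ((volume.restrict T).prod (volume.restrict T)) := by
    have : (Function.uncurry fun t s => c t * (Iio t).indicator k s)
        = fun p : ℝ × ℝ => (c p.1 * k p.2) * {q : ℝ × ℝ | q.2 < q.1}.indicator 1 p := by
      funext p
      by_cases hp : p.2 < p.1
      · simp [Function.uncurry, Set.indicator_of_mem, hp, Set.indicator_of_mem (Set.mem_Iio.2 hp)]
      · simp [Function.uncurry, Set.indicator_of_notMem, hp, mul_assoc,
          Set.indicator_of_notMem (fun h => hp (Set.mem_Iio.1 h))]
    rw [this]
    exact (((hcm.comp measurable_fst).mul (hkm.comp measurable_snd)).mul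
      ((measurable_one).indicator (measurableSet_lt measurable_snd measurable_fst))).aemeasurable
  have step2 : ∫⁻ t in T, ∫⁻ s in T, c t * (Iio t).indicator k s
      = ∫⁻ s in T, ∫⁻ t in T, c t * (Iio t).indicator k s :=
    lintegral_lintegral_swap hFm
  -- step 3: compute inner integral after swap
  have step3 : ∫⁻ s in T, ∫⁻ t in T, c t * (Iio t).indicator k s
      ≤ ∫⁻ s in T, 4 * f s ^ (2:ℕ) := by
    refine lintegral_mono_ae ?_
    filter_upwards [hTmem] with s hs
    have h4 : (fun t => c t * (Iio t).indicator k s) = fun t => (Ioi s).indicator c t * k s := by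
      funext t
      by_cases hst : s < t
      · rw [Set.indicator_of_mem (Set.mem_Iio.2 hst), Set.indicator_of_mem (Set.mem_Ioi.2 hst),
          mul_comm]
      · rw [Set.indicator_of_notMem (fun h => hst (Set.mem_Iio.1 h)),
          Set.indicator_of_notMem (fun h => hst (Set.mem_Ioi.1 h)), mul_zero, zero_mul]
    have h5 : ∫⁻ t in T, (Ioi s).indicator c t * k s = (∫⁻ t in Ioo s 1, c t) * k s := by
      have hset : Ioi s ∩ Ioo (0:ℝ) 1 = Ioo s 1 := by
        ext t
        simp only [Set.mem_inter_iff, Set.mem_Ioi, Set.mem_Ioo]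
        constructor
        · rintro ⟨h1', h2'⟩; exact ⟨h1', h2'.2⟩
        · rintro ⟨h1', h2'⟩; exact ⟨h1', lt_trans hs.1 h1', h2'⟩
      rw [lintegral_mul_const _ (hcm.indicator measurableSet_Ioi),
        lintegral_indicator measurableSet_Ioi _, Measure.restrict_restrict measurableSet_Ioi,
        hT, hset]
    have h6 : (∫⁻ t in Ioo s 1, c t) * k s
        ≤ (ENNReal.ofReal 4 * ENNReal.ofReal (s ^ (-(1/2):ℝ))) * k s :=
      mul_le_mul_left (compB hs.1 hs.2) _
    have h7 : (ENNReal.ofReal 4 * ENNReal.ofReal (s ^ (-(1/2):ℝ))) * k s = 4 * f s ^ (2:ℕ) := by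
      simp only [hk]
      have hrw : ENNReal.ofReal 4 * ENNReal.ofReal (s ^ (-(1/2):ℝ)) *
          (ENNReal.ofReal (s ^ ((1/2):ℝ)) * f s ^ (2:ℕ))
          = (ENNReal.ofReal 4 * (ENNReal.ofReal (s ^ (-(1/2):ℝ)) *
            ENNReal.ofReal (s ^ ((1/2):ℝ)))) * f s ^ (2:ℕ) := by ring
      rw [hrw, ← ENNReal.ofReal_mul (Real.rpow_nonneg (le_of_lt hs.1) _), ← Real.rpow_add hs.1]
      norm_num [Real.rpow_zero, ENNReal.ofReal_one, ENNReal.ofReal_ofNat]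
    rw [h4, h5]
    rw [← h7]
    exact h6
  have step4 : ∫⁻ s in T, 4 * f s ^ (2:ℕ) = 4 * ∫⁻ s in T, f s ^ (2:ℕ) :=
    lintegral_const_mul 4 (hf.pow_const 2)
  exact le_trans step1 (le_trans (le_of_eq step2) (le_trans step3 (le_of_eq step4)))

lemma hardyL (f : ℝ → ℝ≥0∞) (hf : Measurable f) :
    ∫⁻ x in Ioo (-1:ℝ) 0, ENNReal.ofReal ((1+x) ^ (-2:ℝ)) * (∫⁻ s in Ioo (-1:ℝ) x, f s) ^ (2:ℕ)
      ≤ 4 * ∫⁻ s in Ioo (-1:ℝ) 0, f s ^ (2:ℕ) := by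
  have mp : MeasurePreserving (fun t : ℝ => t + (-1)) volume volume :=
    measurePreserving_add_right volume (-1)
  have emb : MeasurableEmbedding (fun t : ℝ => t + (-1)) :=
    (MeasurableEquiv.addRight (-1 : ℝ)).measurableEmbedding
  have pre : ∀ a b : ℝ, (fun t : ℝ => t + (-1)) ⁻¹' (Ioo a b) = Ioo (a+1) (b+1) := by
    intro a b
    ext t
    simp only [Set.mem_preimage, Set.mem_Ioo]
    constructor <;> rintro ⟨h1, h2⟩ <;> constructor <;> linarith
  have inner : ∀ t : ℝ, ∫⁻ s in Ioo (0:ℝ) t, f (s + (-1)) = ∫⁻ s in Ioo (-1:ℝ) (t + (-1)), f s := by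
    intro t
    have h := mp.setLIntegral_comp_preimage_emb emb f (Ioo (-1:ℝ) (t + (-1)))
    rw [pre] at h
    rw [← h]
    norm_num
  have lhs_eq := mp.setLIntegral_comp_preimage_emb emb
    (fun x => ENNReal.ofReal ((1+x) ^ (-2:ℝ)) * (∫⁻ s in Ioo (-1:ℝ) x, f s) ^ (2:ℕ))
    (Ioo (-1:ℝ) 0)
  rw [pre] at lhs_eq
  norm_num [-Real.rpow_neg_ofNat] at lhs_eq
  have rhs_eq := mp.setLIntegral_comp_preimage_emb emb (fun x => f x ^ (2:ℕ)) (Ioo (-1:ℝ) 0)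
  rw [pre] at rhs_eq
  norm_num at rhs_eq
  rw [← lhs_eq, ← rhs_eq]
  have key := hardy (fun s => f (s + (-1))) (hf.comp (measurable_add_const _))
  refine le_trans (le_of_eq ?_) key
  refine lintegral_congr fun t => ?_
  rw [← inner t]

lemma hardyR (f : ℝ → ℝ≥0∞) (hf : Measurable f) :
    ∫⁻ x in Ioo (0:ℝ) 1, ENNReal.ofReal ((1-x) ^ (-2:ℝ)) * (∫⁻ s in Ioo x 1, f s) ^ (2:ℕ)
      ≤ 4 * ∫⁻ s in Ioo (0:ℝ) 1, f s ^ (2:ℕ) := by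
  have mp : MeasurePreserving (fun t : ℝ => -t + 1) volume volume :=
    (measurePreserving_add_right volume 1).comp (Measure.measurePreserving_neg volume)
  have emb : MeasurableEmbedding (fun t : ℝ => -t + 1) :=
    ((MeasurableEquiv.neg ℝ).trans (MeasurableEquiv.addRight (1 : ℝ))).measurableEmbedding
  have pre : ∀ a b : ℝ, (fun t : ℝ => -t + 1) ⁻¹' (Ioo a b) = Ioo (1-b) (1-a) := by
    intro a b
    ext t
    simp only [Set.mem_preimage, Set.mem_Ioo]
    constructor <;> rintro ⟨h1, h2⟩ <;> constructor <;> linarith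
  have inner : ∀ t : ℝ, ∫⁻ s in Ioo (0:ℝ) t, f (-s + 1) = ∫⁻ s in Ioo (1-t) 1, f s := by
    intro t
    have h := mp.setLIntegral_comp_preimage_emb emb f (Ioo (1-t) 1)
    rw [pre] at h
    rw [← h]
    norm_num
  have lhs_eq := mp.setLIntegral_comp_preimage_emb emb
    (fun x => ENNReal.ofReal ((1-x) ^ (-2:ℝ)) * (∫⁻ s in Ioo x 1, f s) ^ (2:ℕ))
    (Ioo (0:ℝ) 1)
  rw [pre] at lhs_eq
  norm_num [-Real.rpow_neg_ofNat] at lhs_eq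
  have rhs_eq := mp.setLIntegral_comp_preimage_emb emb (fun x => f x ^ (2:ℕ)) (Ioo (0:ℝ) 1)
  rw [pre] at rhs_eq
  norm_num at rhs_eq
  rw [← lhs_eq, ← rhs_eq]
  have key := hardy (fun s => f (-s + 1)) (hf.comp (measurable_neg.add_const _))
  refine le_trans (le_of_eq ?_) key
  refine lintegral_congr fun t => ?_
  rw [show (-t + 1) = 1 - t by ring, ← inner t]

/-- `u` belongs to the domain `D(A)` of the degenerate operator `A u = ((1-x²)u')'` on
`I = (-1,1)`: `u ∈ L²(I)` is locally absolutely continuous on `I` with a.e. derivative `u'`,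
and `x ↦ (1-x²)u'(x)` extends to an absolutely continuous function on `[-1,1]` vanishing at
`x = ±1`, whose a.e. derivative `Au` belongs to `L²(I)`. -/
structure MemDA (u u' Au : ℝ → ℝ) : Prop where
  sq_int : IntegrableOn (fun x => u x ^ 2) (Ioo (-1:ℝ) 1)
  locAC : ∀ a b : ℝ, a ∈ Ioo (-1:ℝ) 1 → b ∈ Ioo (-1:ℝ) 1 →
      u b - u a = ∫ t in a..b, u' t
  deriv_intble : ∀ a b : ℝ, a ∈ Ioo (-1:ℝ) 1 → b ∈ Ioo (-1:ℝ) 1 →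
      IntervalIntegrable u' volume a b
  Au_intble : IntervalIntegrable Au volume (-1) 1
  Au_sq_int : IntegrableOn (fun x => Au x ^ 2) (Ioo (-1:ℝ) 1)
  flux : ∀ x ∈ Ioo (-1:ℝ) 1, (1 - x ^ 2) * u' x = ∫ t in (-1:ℝ)..x, Au t
  flux_one : (∫ t in (-1:ℝ)..(1:ℝ), Au t) = 0

/-- Weighted gradient bound for functions in `D(A)`, uniform in `γ ∈ (0,1)`. -/
theorem weighted_gradient_bound :
    ∃ C : ℝ, 0 < C ∧ ∀ γ ∈ Ioo (0:ℝ) 1, ∀ u u' Au : ℝ → ℝ, MemDA u u' Au →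
      ∫ x in Ioo (-1:ℝ) 1, (1 - x ^ 2) ^ γ * u' x ^ 2
        ≤ C * ∫ x in Ioo (-1:ℝ) 1, Au x ^ 2 := by
  refine ⟨8, by norm_num, fun γ hγ u u' Au h => ?_⟩
  set M : ℝ := ∫ x in Ioo (-1:ℝ) 1, Au x ^ 2 with hM
  have hMnn : 0 ≤ M := setIntegral_nonneg measurableSet_Ioo fun x _ => sq_nonneg _
  -- measurable version of Au
  have hAu_int : IntegrableOn Au (Ioc (-1:ℝ) 1) := h.Au_intble.1
  have hAESM := hAu_int.aestronglyMeasurable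
  set g : ℝ → ℝ := hAESM.mk Au with hgdef
  have hgm : StronglyMeasurable g := hAESM.stronglyMeasurable_mk
  have hae : Au =ᵐ[volume.restrict (Ioc (-1:ℝ) 1)] g := hAESM.ae_eq_mk
  set fE : ℝ → ℝ≥0∞ := fun s => ENNReal.ofReal |g s| with hfEdef
  have hfE : Measurable fE := hgm.measurable.abs.ennreal_ofReal
  -- F and G
  set F : ℝ → ℝ := fun x => ∫ t in (-1:ℝ)..x, Au t with hFdef
  set G : ℝ → ℝ := fun x => ∫ t in x..(1:ℝ), Au t with hGdef
  -- bound on |F|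
  have hFbound : ∀ x ∈ Ioo (-1:ℝ) 1, ENNReal.ofReal |F x| ≤ ∫⁻ s in Ioo (-1:ℝ) x, fE s := by
    intro x hx
    have hsub : Ioc (-1:ℝ) x ⊆ Ioc (-1:ℝ) 1 := Ioc_subset_Ioc_right hx.2.le
    have hint : IntegrableOn Au (Ioc (-1:ℝ) x) := hAu_int.mono_set hsub
    have h1 : |F x| ≤ ∫ t in Ioc (-1:ℝ) x, |Au t| := by
      have h0 := intervalIntegral.abs_integral_le_integral_abs (f := Au) (μ := volume)
        (a := (-1:ℝ)) (b := x) hx.1.le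
      rw [intervalIntegral.integral_of_le hx.1.le, intervalIntegral.integral_of_le hx.1.le] at h0
      show |∫ t in (-1:ℝ)..x, Au t| ≤ _
      rw [intervalIntegral.integral_of_le hx.1.le]
      exact h0
    have h2 : ENNReal.ofReal (∫ t in Ioc (-1:ℝ) x, |Au t|)
        = ∫⁻ t in Ioc (-1:ℝ) x, ENNReal.ofReal |Au t| :=
      ofReal_integral_eq_lintegral_ofReal hint.abs (ae_of_all _ fun t => abs_nonneg _)
    have h3 : ∫⁻ t in Ioc (-1:ℝ) x, ENNReal.ofReal |Au t| = ∫⁻ t in Ioc (-1:ℝ) x, fE t := by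
      refine lintegral_congr_ae ?_
      filter_upwards [ae_restrict_of_ae_restrict_of_subset hsub hae] with t ht
      rw [hfEdef, ht]
    calc ENNReal.ofReal |F x| ≤ ENNReal.ofReal (∫ t in Ioc (-1:ℝ) x, |Au t|) :=
          ENNReal.ofReal_le_ofReal h1
      _ = ∫⁻ t in Ioc (-1:ℝ) x, fE t := by rw [h2, h3]
      _ = ∫⁻ s in Ioo (-1:ℝ) x, fE s := (lint_Ioo_eq_Ioc fE _ _).symm
  -- bound on |G|
  have hGbound : ∀ x ∈ Ioo (-1:ℝ) 1, ENNReal.ofReal |G x| ≤ ∫⁻ s in Ioo x 1, fE s := by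
    intro x hx
    have hsub : Ioc x (1:ℝ) ⊆ Ioc (-1:ℝ) 1 := Ioc_subset_Ioc_left hx.1.le
    have hint : IntegrableOn Au (Ioc x (1:ℝ)) := hAu_int.mono_set hsub
    have h1 : |G x| ≤ ∫ t in Ioc x (1:ℝ), |Au t| := by
      have h0 := intervalIntegral.abs_integral_le_integral_abs (f := Au) (μ := volume)
        (a := x) (b := (1:ℝ)) hx.2.le
      rw [intervalIntegral.integral_of_le hx.2.le, intervalIntegral.integral_of_le hx.2.le] at h0
      show |∫ t in x..(1:ℝ), Au t| ≤ _
      rw [intervalIntegral.integral_of_le hx.2.le]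
      exact h0
    have h2 : ENNReal.ofReal (∫ t in Ioc x (1:ℝ), |Au t|)
        = ∫⁻ t in Ioc x (1:ℝ), ENNReal.ofReal |Au t| :=
      ofReal_integral_eq_lintegral_ofReal hint.abs (ae_of_all _ fun t => abs_nonneg _)
    have h3 : ∫⁻ t in Ioc x (1:ℝ), ENNReal.ofReal |Au t| = ∫⁻ t in Ioc x (1:ℝ), fE t := by
      refine lintegral_congr_ae ?_
      filter_upwards [ae_restrict_of_ae_restrict_of_subset hsub hae] with t ht
      rw [hfEdef, ht]
    calc ENNReal.ofReal |G x| ≤ ENNReal.ofReal (∫ t in Ioc x (1:ℝ), |Au t|) :=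
          ENNReal.ofReal_le_ofReal h1
      _ = ∫⁻ t in Ioc x (1:ℝ), fE t := by rw [h2, h3]
      _ = ∫⁻ s in Ioo x 1, fE s := (lint_Ioo_eq_Ioc fE _ _).symm
  -- F x = - G x
  have hFG : ∀ x ∈ Ioo (-1:ℝ) 1, F x = - G x := by
    intro x hx
    have hi1 : IntervalIntegrable Au volume (-1) x :=
      h.Au_intble.mono_set (by
        apply uIcc_subset_uIcc <;> rw [Set.mem_uIcc] <;>
          [left; left] <;> constructor <;> linarith [hx.1, hx.2])
    have hi2 : IntervalIntegrable Au volume x 1 :=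
      h.Au_intble.mono_set (by
        apply uIcc_subset_uIcc <;> rw [Set.mem_uIcc] <;>
          [left; left] <;> constructor <;> linarith [hx.1, hx.2])
    have := intervalIntegral.integral_add_adjacent_intervals hi1 hi2
    rw [h.flux_one] at this
    rw [hFdef, hGdef]
    linarith [this]
  -- the ENNReal weight function
  set W : ℝ → ℝ≥0∞ := fun x => ENNReal.ofReal ((1 - x^2)^γ * u' x^2) with hWdef
  -- pointwise real bound, left part
  have hu' : ∀ x ∈ Ioo (-1:ℝ) 1, u' x = F x / (1 - x^2) := by
    intro x hx
    have hpos : 0 < 1 - x^2 := by nlinarith [hx.1, hx.2]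
    field_simp
    rw [mul_comm]
    exact (h.flux x hx)
  have hrpow_le_one : ∀ x ∈ Ioo (-1:ℝ) 1, (1 - x^2)^γ ≤ 1 := fun x hx =>
    Real.rpow_le_one (by nlinarith [hx.1, hx.2]) (by nlinarith [hx.1, hx.2]) hγ.1.le
  have boundL : ∫⁻ x in Ioo (-1:ℝ) 0, W x ≤ 4 * ∫⁻ s in Ioo (-1:ℝ) 0, fE s ^ (2:ℕ) := by
    refine le_trans (lintegral_mono_ae ?_) (hardyL fE hfE)
    filter_upwards [ae_restrict_mem measurableSet_Ioo] with x hx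
    have hxI : x ∈ Ioo (-1:ℝ) 1 := ⟨hx.1, lt_trans hx.2 one_pos⟩
    have hp : (0:ℝ) < 1 + x := by linarith [hx.1]
    have hpos : (0:ℝ) < 1 - x^2 := by nlinarith [hx.1, hx.2]
    have hq : (1:ℝ) ≤ 1 - x := by linarith [hx.2]
    have hreal : (1 - x^2)^γ * u' x^2 ≤ (1+x)^(-2:ℝ) * F x^2 := by
      have hr2 : (1+x)^(-2:ℝ) = ((1+x)^(2:ℕ))⁻¹ := by
        rw [show (-2:ℝ) = -((2:ℕ):ℝ) by norm_num, Real.rpow_neg hp.le, Real.rpow_natCast]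
      have h1 : (1-x^2)^γ * (1/(1-x^2)^2) ≤ 1 * (1/(1+x)^2) :=
        mul_le_mul (hrpow_le_one x hxI)
          (one_div_le_one_div_of_le (by positivity) (by nlinarith [hp, hq]))
          (by positivity) (by norm_num)
      rw [hu' x hxI]
      calc (1 - x^2)^γ * (F x / (1-x^2))^2
          = ((1-x^2)^γ * (1/(1-x^2)^2)) * F x^2 := by rw [div_pow]; ring
        _ ≤ (1 * (1/(1+x)^2)) * F x^2 := mul_le_mul_of_nonneg_right h1 (sq_nonneg _)
        _ = (1+x)^(-2:ℝ) * F x^2 := by rw [hr2, inv_eq_one_div, one_mul]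
    calc W x ≤ ENNReal.ofReal ((1+x)^(-2:ℝ) * F x^2) := ENNReal.ofReal_le_ofReal hreal
      _ = ENNReal.ofReal ((1+x)^(-2:ℝ)) * ENNReal.ofReal (F x^2) :=
          ENNReal.ofReal_mul (Real.rpow_nonneg hp.le _)
      _ ≤ ENNReal.ofReal ((1+x)^(-2:ℝ)) * (∫⁻ s in Ioo (-1:ℝ) x, fE s) ^ (2:ℕ) := by
          refine mul_le_mul_right ?_ _
          rw [show F x ^ 2 = |F x| ^ 2 by rw [sq_abs], ENNReal.ofReal_pow (abs_nonneg _)]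
          exact pow_le_pow_left' (hFbound x hxI) 2
  have boundR : ∫⁻ x in Ico (0:ℝ) 1, W x ≤ 4 * ∫⁻ s in Ioo (0:ℝ) 1, fE s ^ (2:ℕ) := by
    rw [setLIntegral_congr (Ioo_ae_eq_Ico (μ := volume) (a := (0:ℝ)) (b := 1)).symm]
    refine le_trans (lintegral_mono_ae ?_) (hardyR fE hfE)
    filter_upwards [ae_restrict_mem measurableSet_Ioo] with x hx
    have hxI : x ∈ Ioo (-1:ℝ) 1 := ⟨by linarith [hx.1], hx.2⟩
    have hp : (0:ℝ) < 1 - x := by linarith [hx.2]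
    have hpos : (0:ℝ) < 1 - x^2 := by nlinarith [hx.1, hx.2]
    have hq : (1:ℝ) ≤ 1 + x := by linarith [hx.1]
    have hreal : (1 - x^2)^γ * u' x^2 ≤ (1-x)^(-2:ℝ) * G x^2 := by
      have hFx : F x ^ 2 = G x ^ 2 := by rw [hFG x hxI]; ring
      have hr2 : (1-x)^(-2:ℝ) = ((1-x)^(2:ℕ))⁻¹ := by
        rw [show (-2:ℝ) = -((2:ℕ):ℝ) by norm_num, Real.rpow_neg hp.le, Real.rpow_natCast]
      have h1 : (1-x^2)^γ * (1/(1-x^2)^2) ≤ 1 * (1/(1-x)^2) :=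
        mul_le_mul (hrpow_le_one x hxI)
          (one_div_le_one_div_of_le (by positivity) (by nlinarith [hp, hq]))
          (by positivity) (by norm_num)
      rw [hu' x hxI]
      calc (1 - x^2)^γ * (F x / (1-x^2))^2
          = ((1-x^2)^γ * (1/(1-x^2)^2)) * F x^2 := by rw [div_pow]; ring
        _ = ((1-x^2)^γ * (1/(1-x^2)^2)) * G x^2 := by rw [hFx]
        _ ≤ (1 * (1/(1-x)^2)) * G x^2 := mul_le_mul_of_nonneg_right h1 (sq_nonneg _)
        _ = (1-x)^(-2:ℝ) * G x^2 := by rw [hr2, inv_eq_one_div, one_mul]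
    calc W x ≤ ENNReal.ofReal ((1-x)^(-2:ℝ) * G x^2) := ENNReal.ofReal_le_ofReal hreal
      _ = ENNReal.ofReal ((1-x)^(-2:ℝ)) * ENNReal.ofReal (G x^2) :=
          ENNReal.ofReal_mul (Real.rpow_nonneg hp.le _)
      _ ≤ ENNReal.ofReal ((1-x)^(-2:ℝ)) * (∫⁻ s in Ioo x 1, fE s) ^ (2:ℕ) := by
          refine mul_le_mul_right ?_ _
          rw [show G x ^ 2 = |G x| ^ 2 by rw [sq_abs], ENNReal.ofReal_pow (abs_nonneg _)]
          exact pow_le_pow_left' (hGbound x hxI) 2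
  -- tail bound
  have hMl : ENNReal.ofReal M = ∫⁻ x in Ioo (-1:ℝ) 1, ENNReal.ofReal (Au x ^ 2) :=
    ofReal_integral_eq_lintegral_ofReal h.Au_sq_int (ae_of_all _ fun x => sq_nonneg _)
  have tail : ∀ a b : ℝ, Ioo a b ⊆ Ioo (-1:ℝ) 1 →
      ∫⁻ s in Ioo a b, fE s ^ (2:ℕ) ≤ ENNReal.ofReal M := by
    intro a b hsub'
    have hsub : Ioo a b ⊆ Ioc (-1:ℝ) 1 := fun s hs => ⟨(hsub' hs).1, (hsub' hs).2.le⟩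
    have h1 : ∫⁻ s in Ioo a b, fE s ^ (2:ℕ) = ∫⁻ s in Ioo a b, ENNReal.ofReal (Au s ^ 2) := by
      refine lintegral_congr_ae ?_
      filter_upwards [ae_restrict_of_ae_restrict_of_subset hsub hae] with s hs
      rw [hfEdef]
      rw [← ENNReal.ofReal_pow (abs_nonneg _), sq_abs, hs]
    rw [h1, hMl]
    exact lintegral_mono_set hsub'
  -- split and combine
  have hsplit : Ioo (-1:ℝ) 1 = Ioo (-1:ℝ) 0 ∪ Ico (0:ℝ) 1 :=
    (Ioo_union_Ico_eq_Ioo (by norm_num) (by norm_num)).symm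
  have hdisj : Disjoint (Ioo (-1:ℝ) 0) (Ico (0:ℝ) 1) := by
    rw [Set.disjoint_left]
    intro x hx hx'
    exact absurd hx.2 (not_lt.2 hx'.1)
  have total : ∫⁻ x in Ioo (-1:ℝ) 1, W x ≤ 8 * ENNReal.ofReal M := by
    rw [hsplit, lintegral_union measurableSet_Ico hdisj]
    calc (∫⁻ x in Ioo (-1:ℝ) 0, W x) + ∫⁻ x in Ico (0:ℝ) 1, W x
        ≤ 4 * (∫⁻ s in Ioo (-1:ℝ) 0, fE s ^ (2:ℕ)) + 4 * ∫⁻ s in Ioo (0:ℝ) 1, fE s ^ (2:ℕ) :=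
          add_le_add boundL boundR
      _ ≤ 4 * ENNReal.ofReal M + 4 * ENNReal.ofReal M := by
          refine add_le_add (mul_le_mul_right ?_ _) (mul_le_mul_right ?_ _)
          · exact tail _ _ (fun s hs => ⟨hs.1, by linarith [hs.2]⟩)
          · exact tail _ _ (fun s hs => ⟨by linarith [hs.1], hs.2⟩)
      _ = 8 * ENNReal.ofReal M := by ring
  -- conclude
  by_cases hInt : Integrable (fun x => (1 - x^2)^γ * u' x^2) (volume.restrict (Ioo (-1:ℝ) 1))
  · have hnn : 0 ≤ᵐ[volume.restrict (Ioo (-1:ℝ) 1)] fun x => (1 - x^2)^γ * u' x^2 := by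
      filter_upwards [ae_restrict_mem measurableSet_Ioo] with x hx
      have : (0:ℝ) < 1 - x^2 := by nlinarith [hx.1, hx.2]
      positivity
    rw [integral_eq_lintegral_of_nonneg_ae hnn hInt.aestronglyMeasurable]
    have h8 : (8 : ℝ≥0∞) * ENNReal.ofReal M ≠ ⊤ := by
      exact ENNReal.mul_ne_top (by norm_num) ENNReal.ofReal_ne_top
    calc (∫⁻ x in Ioo (-1:ℝ) 1, ENNReal.ofReal ((1 - x^2)^γ * u' x^2)).toReal
        ≤ ((8 : ℝ≥0∞) * ENNReal.ofReal M).toReal := ENNReal.toReal_mono h8 total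
      _ = 8 * M := by
          rw [ENNReal.toReal_mul, ENNReal.toReal_ofNat, ENNReal.toReal_ofReal hMnn]
  · rw [integral_undef hInt]
    exact mul_nonneg (by norm_num) hMnn
end
end

section
/- (W^{1,1}-bound on the square of a function in D(A)) There exists a constant C>0 such that for every u∈D(A) the function x↦u(x)·u′(x) is integrable on (−1,1) and ∫_{−1}^{1} 2|u(x)·u′(x)| dx ≤ C·(∫_{−1}^{1} u(x)² dx + ∫_{−1}^{1} (Au)(x)² dx); in particular the derivative (u²)′=2uu′ of u² is integrable, i.e. u²∈W^{1,1}(−1,1). -/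
open MeasureTheory Set Filter

noncomputable section

lemma abs_intLE (f : ℝ → ℝ) (a b M : ℝ) (hab : a ≤ b)
    (hf : IntervalIntegrable f volume a b)
    (hf2 : IntervalIntegrable (fun t => f t ^ 2) volume a b)
    (hM0 : 0 ≤ M) (hM : (∫ t in a..b, f t ^ 2) ≤ M) :
    |∫ t in a..b, f t| ≤ Real.sqrt M * Real.sqrt (b - a) := by
  have key : ∀ c : ℝ, 0 < c → |∫ t in a..b, f t| ≤ M / (2 * c) + c * (b - a) / 2 := by
    intro c hc
    have h1 : |∫ t in a..b, f t| ≤ ∫ t in a..b, |f t| := by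
      simpa using intervalIntegral.abs_integral_le_integral_abs hab
    have h2 : (∫ t in a..b, |f t|) ≤ ∫ t in a..b, (f t ^ 2 / (2 * c) + c / 2) := by
      apply intervalIntegral.integral_mono_on hab hf.abs
      · exact (hf2.div_const _).add intervalIntegrable_const
      · intro t _
        have h3 : 0 ≤ (|f t| - c) ^ 2 := sq_nonneg _
        have h4 : |f t| ^ 2 = f t ^ 2 := sq_abs _
        have hexp : f t ^ 2 / (2 * c) + c / 2 = (f t ^ 2 + c ^ 2) / (2 * c) := by
          field_simp
        rw [hexp, le_div_iff₀ (by positivity)]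
        nlinarith
    have h4 : (∫ t in a..b, (f t ^ 2 / (2 * c) + c / 2))
        = (∫ t in a..b, f t ^ 2) / (2 * c) + c * (b - a) / 2 := by
      rw [intervalIntegral.integral_add (hf2.div_const _) intervalIntegrable_const,
        intervalIntegral.integral_div, intervalIntegral.integral_const]
      simp only [smul_eq_mul]
      ring
    have h5 : (∫ t in a..b, f t ^ 2) / (2 * c) ≤ M / (2 * c) := by gcongr
    linarith
  rcases eq_or_lt_of_le hab with rfl | hlt
  · simp [Real.sqrt_nonneg, mul_nonneg]
  rcases eq_or_lt_of_le hM0 with rfl | hMpos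
  · -- M = 0 : f = 0 a.e.
    have hnn : 0 ≤ ∫ t in a..b, f t ^ 2 :=
      intervalIntegral.integral_nonneg hab fun t _ => sq_nonneg _
    have hz : (∫ t in a..b, f t ^ 2) = 0 := le_antisymm hM hnn
    rw [intervalIntegral.integral_of_le hab] at hz
    have hint2 : IntegrableOn (fun t => f t ^ 2) (Ioc a b) volume :=
      (intervalIntegrable_iff_integrableOn_Ioc_of_le hab).1 hf2
    have hae : (fun t => f t ^ 2) =ᵐ[volume.restrict (Ioc a b)] 0 :=
      (integral_eq_zero_iff_of_nonneg_ae (ae_of_all _ fun t => sq_nonneg _) hint2).1 hz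
    have hae' : f =ᵐ[volume.restrict (Ioc a b)] 0 := by
      filter_upwards [hae] with t ht
      simpa [pow_eq_zero_iff] using ht
    have : (∫ t in a..b, f t) = 0 := by
      rw [intervalIntegral.integral_of_le hab]
      rw [integral_congr_ae hae']
      simp
    simp [this, mul_nonneg (Real.sqrt_nonneg _) (Real.sqrt_nonneg _)]
  · have hba : (0:ℝ) < b - a := by linarith
    set c := Real.sqrt M / Real.sqrt (b - a) with hc
    have hsM : (0:ℝ) < Real.sqrt M := Real.sqrt_pos.2 hMpos
    have hsb : (0:ℝ) < Real.sqrt (b - a) := Real.sqrt_pos.2 hba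
    have hcpos : 0 < c := div_pos hsM hsb
    have hMM : Real.sqrt M * Real.sqrt M = M := Real.mul_self_sqrt hM0
    have hbb : Real.sqrt (b - a) * Real.sqrt (b - a) = b - a := Real.mul_self_sqrt hba.le
    have := key c hcpos
    have heq : M / (2 * c) + c * (b - a) / 2 = Real.sqrt M * Real.sqrt (b - a) := by
      rw [hc]
      field_simp
      nlinarith
    linarith [heq ▸ this]


def gw : ℝ → ℝ := fun x => 1 / Real.sqrt (1 - |x|)

lemma gw_nonneg (x : ℝ) : 0 ≤ gw x := by unfold gw; positivity

lemma gw_integrable : IntegrableOn gw (Ioo (-1:ℝ) 1) volume := by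
  have h1 : IntervalIntegrable (fun x : ℝ => x ^ (-(1/2) : ℝ)) volume 0 1 :=
    intervalIntegral.intervalIntegrable_rpow' (by norm_num)
  have hrw : ∀ y : ℝ, 0 ≤ y → y ^ (-(1/2) : ℝ) = 1 / Real.sqrt y := by
    intro y hy
    rw [Real.rpow_neg hy, ← Real.sqrt_eq_rpow, one_div]
  -- on (0,1]
  have h2 : IntervalIntegrable (fun x : ℝ => (1 - x) ^ (-(1/2) : ℝ)) volume 0 1 := by
    have := h1.comp_sub_left 1
    simpa using this.symm
  have h2' : IntegrableOn (fun x : ℝ => (1 - x) ^ (-(1/2) : ℝ)) (Ioc 0 1) volume :=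
    (intervalIntegrable_iff_integrableOn_Ioc_of_le (by norm_num)).1 h2
  have hgB : IntegrableOn gw (Ioc (0:ℝ) 1) volume := by
    apply h2'.congr_fun ?_ measurableSet_Ioc
    intro x hx
    have hx0 : 0 ≤ x := le_of_lt hx.1
    have : |x| = x := abs_of_nonneg hx0
    simp only [gw, this]
    exact (hrw (1 - x) (by linarith [hx.2])).symm ▸ rfl
  -- on (-1,0]
  have h3 : IntervalIntegrable (fun x : ℝ => (1 + x) ^ (-(1/2) : ℝ)) volume (-1) 0 := by
    have := h1.comp_add_left 1
    simpa using this
  have h3' : IntegrableOn (fun x : ℝ => (1 + x) ^ (-(1/2) : ℝ)) (Ioc (-1:ℝ) 0) volume :=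
    (intervalIntegrable_iff_integrableOn_Ioc_of_le (by norm_num)).1 h3
  have hgA : IntegrableOn gw (Ioc (-1:ℝ) 0) volume := by
    apply h3'.congr_fun ?_ measurableSet_Ioc
    intro x hx
    have hx0 : x ≤ 0 := hx.2
    have habs : |x| = -x := abs_of_nonpos hx0
    simp only [gw, habs]
    rw [hrw (1 + x) (by linarith [hx.1])]
    ring_nf
  have hunion : IntegrableOn gw (Ioc (-1:ℝ) 0 ∪ Ioc 0 1) volume := hgA.union hgB
  apply hunion.mono_set
  intro x hx
  rcases le_or_gt x 0 with h | h
  · exact Or.inl ⟨hx.1, h⟩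
  · exact Or.inr ⟨h, le_of_lt hx.2⟩

set_option maxHeartbeats 1000000 in
/-- `W^{1,1}`-bound on the square of a function in `D(A)`: `x ↦ u(x)u'(x)` is integrable,
`∫ 2|u u'| ≤ C (∫ u² + ∫ (Au)²)`, and `u²` is (locally) absolutely continuous with
derivative `2 u u'`, i.e. `u² ∈ W^{1,1}(-1,1)`. -/
theorem square_W11_bound :
    ∃ C : ℝ, 0 < C ∧ ∀ u u' Au : ℝ → ℝ, MemDA u u' Au →
      IntegrableOn (fun x => u x * u' x) (Ioo (-1:ℝ) 1) ∧
      (∫ x in Ioo (-1:ℝ) 1, 2 * |u x * u' x|)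
        ≤ C * ((∫ x in Ioo (-1:ℝ) 1, u x ^ 2) + ∫ x in Ioo (-1:ℝ) 1, Au x ^ 2) ∧
      ∀ a b : ℝ, a ∈ Ioo (-1:ℝ) 1 → b ∈ Ioo (-1:ℝ) 1 →
        u b ^ 2 - u a ^ 2 = ∫ t in a..b, 2 * (u t * u' t) := by
  set G : ℝ := ∫ x in Ioo (-1:ℝ) 1, gw x with hG
  have hG0 : 0 ≤ G := setIntegral_nonneg measurableSet_Ioo fun x _ => gw_nonneg x
  refine ⟨G + 2 * G ^ 2 + 1, by positivity, ?_⟩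
  intro u u' Au hu
  set S : ℝ := ∫ x in Ioo (-1:ℝ) 1, u x ^ 2 with hSdef
  set M : ℝ := ∫ x in Ioo (-1:ℝ) 1, Au x ^ 2 with hMdef
  have hS0 : 0 ≤ S := setIntegral_nonneg measurableSet_Ioo fun x _ => sq_nonneg _
  have hM0 : 0 ≤ M := setIntegral_nonneg measurableSet_Ioo fun x _ => sq_nonneg _
  set F : ℝ → ℝ := fun x => ∫ t in (-1:ℝ)..x, Au t with hFdef
  have hFcont : ContinuousOn F (uIcc (-1:ℝ) 1) :=
    intervalIntegral.continuousOn_primitive_interval' hu.Au_intble left_mem_uIcc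
  have hIoosub : Ioo (-1:ℝ) 1 ⊆ uIcc (-1:ℝ) 1 := by
    rw [uIcc_of_le (by norm_num)]; exact Ioo_subset_Icc_self
  -- Step A : |F x| ≤ √M √(1-|x|)
  have hFbound : ∀ x ∈ Ioo (-1:ℝ) 1, |F x| ≤ Real.sqrt M * Real.sqrt (1 - |x|) := by
    rintro x ⟨hx1, hx2⟩
    rcases le_total x 0 with hxneg | hxpos
    · have habs : 1 - |x| = x - (-1) := by rw [abs_of_nonpos hxneg]; ring
      rw [habs]
      apply abs_intLE Au (-1) x M hx1.le
      · apply hu.Au_intble.mono_set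
        rw [uIcc_of_le hx1.le, uIcc_of_le (by norm_num : (-1:ℝ) ≤ 1)]
        exact Icc_subset_Icc le_rfl hx2.le
      · refine (intervalIntegrable_iff_integrableOn_Ioc_of_le hx1.le).2 ?_
        exact hu.Au_sq_int.mono_set fun y hy => ⟨hy.1, lt_of_le_of_lt hy.2 hx2⟩
      · exact hM0
      · rw [intervalIntegral.integral_of_le hx1.le]
        apply setIntegral_mono_set hu.Au_sq_int (ae_of_all _ fun t => sq_nonneg _)
        exact (HasSubset.Subset.eventuallyLE fun y hy => ⟨hy.1, lt_of_le_of_lt hy.2 hx2⟩)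
    · have hsub1 : uIcc (-1:ℝ) x ⊆ uIcc (-1:ℝ) 1 := by
        rw [uIcc_of_le hx1.le, uIcc_of_le (by norm_num : (-1:ℝ) ≤ 1)]
        exact Icc_subset_Icc le_rfl hx2.le
      have hsub2 : uIcc x (1:ℝ) ⊆ uIcc (-1:ℝ) 1 := by
        rw [uIcc_of_le hx2.le, uIcc_of_le (by norm_num : (-1:ℝ) ≤ 1)]
        exact Icc_subset_Icc hx1.le le_rfl
      have hFx : F x = -∫ t in x..(1:ℝ), Au t := by
        have hadd := intervalIntegral.integral_add_adjacent_intervals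
          (hu.Au_intble.mono_set hsub1) (hu.Au_intble.mono_set hsub2)
        have hone := hu.flux_one
        simp only [hFdef]
        linarith [hadd, hone]
      have habs : 1 - |x| = 1 - x := by rw [abs_of_nonneg hxpos]
      rw [hFx, abs_neg, habs]
      apply abs_intLE Au x 1 M hx2.le
      · exact hu.Au_intble.mono_set hsub2
      · refine (intervalIntegrable_iff_integrableOn_Ioc_of_le hx2.le).2 ?_
        exact (hu.Au_sq_int.mono_set fun y (hy : y ∈ Ioo x 1) =>
          (⟨lt_trans hx1 hy.1, hy.2⟩ : y ∈ Ioo (-1:ℝ) 1)).congr_set_ae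
          Ioo_ae_eq_Ioc.symm
      · exact hM0
      · rw [intervalIntegral.integral_of_le hx2.le]
        apply setIntegral_mono_set hu.Au_sq_int (ae_of_all _ fun t => sq_nonneg _)
        have h1 : ({(1:ℝ)}ᶜ : Set ℝ) ∈ ae volume := compl_mem_ae_iff.2 (measure_singleton 1)
        filter_upwards [h1] with y hy hmem
        exact ⟨lt_trans hx1 hmem.1, lt_of_le_of_ne hmem.2 hy⟩
  -- Step B : |u' x| ≤ √M * gw x
  have hu'bound : ∀ x ∈ Ioo (-1:ℝ) 1, |u' x| ≤ Real.sqrt M * gw x := by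
    rintro x hx
    obtain ⟨hx1, hx2⟩ := hx
    have hax : |x| < 1 := abs_lt.2 ⟨hx1, hx2⟩
    have h1x : (0:ℝ) < 1 - x ^ 2 := by nlinarith [sq_abs x, abs_nonneg x]
    have hax' : (0:ℝ) < 1 - |x| := by linarith
    have hsq : (0:ℝ) < Real.sqrt (1 - |x|) := Real.sqrt_pos.2 hax'
    have habs : |u' x| = |F x| / (1 - x ^ 2) := by
      rw [eq_div_iff h1x.ne']
      have := hu.flux x ⟨hx1, hx2⟩
      calc |u' x| * (1 - x ^ 2) = |(1 - x ^ 2) * u' x| := by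
            rw [abs_mul, abs_of_pos h1x]; ring
        _ = |F x| := by rw [this]
    rw [habs]
    calc |F x| / (1 - x ^ 2) ≤ (Real.sqrt M * Real.sqrt (1 - |x|)) / (1 - x ^ 2) := by
          gcongr; exact hFbound x ⟨hx1, hx2⟩
      _ ≤ Real.sqrt M * gw x := by
          unfold gw
          rw [mul_one_div, div_le_div_iff₀ h1x hsq, mul_assoc, Real.mul_self_sqrt hax'.le]
          have hle : 1 - |x| ≤ 1 - x ^ 2 := by nlinarith [sq_abs x, abs_nonneg x]
          exact mul_le_mul_of_nonneg_left hle (Real.sqrt_nonneg _)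
  -- Step C : continuity of u' on Ioo
  have h1xpos : ∀ x ∈ Ioo (-1:ℝ) 1, (0:ℝ) < 1 - x ^ 2 := by
    rintro x ⟨hx1, hx2⟩; nlinarith
  have hu'eq : ∀ x ∈ Ioo (-1:ℝ) 1, u' x = F x / (1 - x ^ 2) := by
    intro x hx
    rw [eq_div_iff (h1xpos x hx).ne', mul_comm]
    exact hu.flux x hx
  have hu'cont : ContinuousOn u' (Ioo (-1:ℝ) 1) := by
    apply ContinuousOn.congr (f := fun x => F x / (1 - x ^ 2)) ?_ fun x hx => hu'eq x hx
    exact (hFcont.mono hIoosub).div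
      (Continuous.continuousOn (by continuity)) fun x hx => (h1xpos x hx).ne'
  -- Step D : integrability of u' and L¹ bound
  have hdom : Integrable (fun x => Real.sqrt M * gw x) (volume.restrict (Ioo (-1:ℝ) 1)) :=
    gw_integrable.const_mul _
  have hu'int : IntegrableOn u' (Ioo (-1:ℝ) 1) volume := by
    apply Integrable.mono hdom (hu'cont.aestronglyMeasurable measurableSet_Ioo)
    rw [ae_restrict_iff' measurableSet_Ioo]
    filter_upwards with x hx
    rw [Real.norm_eq_abs, Real.norm_eq_abs]
    exact (hu'bound x hx).trans (le_abs_self _)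
  have hu'L1 : (∫ x in Ioo (-1:ℝ) 1, |u' x|) ≤ Real.sqrt M * G := by
    calc (∫ x in Ioo (-1:ℝ) 1, |u' x|)
        ≤ ∫ x in Ioo (-1:ℝ) 1, Real.sqrt M * gw x :=
          setIntegral_mono_on hu'int.abs hdom measurableSet_Ioo fun x hx => hu'bound x hx
      _ = Real.sqrt M * G := by rw [hG, integral_const_mul]
  -- Step E : FTC, derivative of u
  have h0mem : (0:ℝ) ∈ Ioo (-1:ℝ) 1 := by norm_num
  have hu'deriv : ∀ x ∈ Ioo (-1:ℝ) 1, HasDerivAt u (u' x) x := by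
    intro x hx
    have hfi : IntervalIntegrable u' volume 0 x := hu.deriv_intble 0 x h0mem hx
    have hmeas : StronglyMeasurableAtFilter u' (nhds x) volume :=
      AEStronglyMeasurable.stronglyMeasurableAtFilter_of_mem
        (hu'cont.aestronglyMeasurable measurableSet_Ioo) (isOpen_Ioo.mem_nhds hx)
    have hca : ContinuousAt u' x := hu'cont.continuousAt (isOpen_Ioo.mem_nhds hx)
    have hD := (intervalIntegral.integral_hasDerivAt_right hfi hmeas hca).const_add (u 0)
    apply hD.congr_of_eventuallyEq
    filter_upwards [isOpen_Ioo.mem_nhds hx] with y hy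
    have := hu.locAC 0 y h0mem hy
    linarith
  have hucont : ContinuousOn u (Ioo (-1:ℝ) 1) :=
    fun x hx => (hu'deriv x hx).continuousAt.continuousWithinAt
  -- Step F : sup bound
  have hx₀ : ∃ x₀ ∈ Ioo (-1:ℝ) 1, u x₀ ^ 2 ≤ S := by
    by_contra h
    push_neg at h
    have hconst : IntegrableOn (fun _ : ℝ => S) (Ioo (-1:ℝ) 1) volume := by
      apply integrableOn_const ?_ (by simp)
      rw [Real.volume_Ioo]; exact ENNReal.ofReal_ne_top
    have hmono := setIntegral_mono_on hconst hu.sq_int measurableSet_Ioo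
      fun x hx => (h x hx).le
    rw [setIntegral_const] at hmono
    have hvol : ((volume (Ioo (-1:ℝ) 1)).toReal : ℝ) = 2 := by
      rw [Real.volume_Ioo]; norm_num
    rw [measureReal_def, hvol] at hmono
    have hSz : S = 0 := by
      rw [smul_eq_mul] at hmono
      linarith
    have hz : (∫ x in Ioo (-1:ℝ) 1, u x ^ 2) = 0 := by rw [← hSdef]; exact hSz
    have hae := (integral_eq_zero_iff_of_nonneg_ae
      (ae_of_all _ fun x => sq_nonneg (u x)) hu.sq_int).1 hz
    rw [Filter.EventuallyEq, ae_restrict_iff' measurableSet_Ioo] at hae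
    have hnm : ∀ᵐ x : ℝ, x ∉ Ioo (-1:ℝ) 1 := by
      filter_upwards [hae] with x hx hmem
      have h1 := h x hmem
      have h2 := hx hmem
      simp only [Pi.zero_apply] at h2
      rw [h2] at h1
      rw [hSz] at h1
      exact lt_irrefl 0 h1
    have := measure_eq_zero_iff_ae_notMem.2 hnm
    rw [Real.volume_Ioo] at this
    simp at this
    norm_num at this
  obtain ⟨x₀, hx₀mem, hx₀le⟩ := hx₀
  have hKsup : ∀ x ∈ Ioo (-1:ℝ) 1, |u x| ≤ Real.sqrt S + Real.sqrt M * G := by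
    intro x hx
    have hloc := hu.locAC x₀ x hx₀mem hx
    have h1 : |u x₀| ≤ Real.sqrt S := by
      rw [← Real.sqrt_sq_eq_abs]
      exact Real.sqrt_le_sqrt hx₀le
    have h2 : |∫ t in x₀..x, u' t| ≤ ∫ t in Ioo (-1:ℝ) 1, |u' t| := by
      have key : ∀ c d : ℝ, c ∈ Ioo (-1:ℝ) 1 → d ∈ Ioo (-1:ℝ) 1 → c ≤ d →
          |∫ t in c..d, u' t| ≤ ∫ t in Ioo (-1:ℝ) 1, |u' t| := by
        intro c d hc hd hcd
        calc |∫ t in c..d, u' t| ≤ ∫ t in c..d, |u' t| := by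
              simpa using intervalIntegral.abs_integral_le_integral_abs hcd
          _ = ∫ t in Ioc c d, |u' t| := intervalIntegral.integral_of_le hcd
          _ ≤ ∫ t in Ioo (-1:ℝ) 1, |u' t| := by
              apply setIntegral_mono_set hu'int.abs (ae_of_all _ fun t => abs_nonneg _)
              exact HasSubset.Subset.eventuallyLE
                fun y hy => ⟨lt_of_lt_of_le hc.1 hy.1.le, lt_of_le_of_lt hy.2 hd.2⟩
      rcases le_total x₀ x with hle | hle
      · exact key x₀ x hx₀mem hx hle
      · rw [intervalIntegral.integral_symm, abs_neg]
        exact key x x₀ hx hx₀mem hle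
    have h3 := h2.trans hu'L1
    have hux : u x = u x₀ + ∫ t in x₀..x, u' t := by linarith
    rw [hux]
    exact (abs_add_le _ _).trans (add_le_add h1 h3)
  -- Step G : integrability of u * u' and the main bound
  set K : ℝ := Real.sqrt S + Real.sqrt M * G with hKdef
  have hK0 : 0 ≤ K :=
    add_nonneg (Real.sqrt_nonneg _) (mul_nonneg (Real.sqrt_nonneg _) hG0)
  have hprod_bound : ∀ x ∈ Ioo (-1:ℝ) 1, |u x * u' x| ≤ K * (Real.sqrt M * gw x) := by
    intro x hx
    rw [abs_mul]
    exact mul_le_mul (hKsup x hx) (hu'bound x hx) (abs_nonneg _) hK0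
  have hprodint : IntegrableOn (fun x => u x * u' x) (Ioo (-1:ℝ) 1) volume := by
    apply Integrable.mono (hdom.const_mul K)
      ((hucont.mul hu'cont).aestronglyMeasurable measurableSet_Ioo)
    rw [ae_restrict_iff' measurableSet_Ioo]
    filter_upwards with x hx
    rw [Real.norm_eq_abs, Real.norm_eq_abs]
    exact (hprod_bound x hx).trans (le_abs_self _)
  refine ⟨hprodint, ?_, ?_⟩
  · have step1 : (∫ x in Ioo (-1:ℝ) 1, 2 * |u x * u' x|)
        ≤ ∫ x in Ioo (-1:ℝ) 1, 2 * (K * (Real.sqrt M * gw x)) := by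
      apply setIntegral_mono_on (hprodint.abs.const_mul 2)
        ((hdom.const_mul K).const_mul 2) measurableSet_Ioo
      intro x hx
      have := hprod_bound x hx
      linarith
    have step2 : (∫ x in Ioo (-1:ℝ) 1, 2 * (K * (Real.sqrt M * gw x)))
        = 2 * (K * (Real.sqrt M * G)) := by
      rw [hG, integral_const_mul, integral_const_mul, integral_const_mul]
    have hsS : Real.sqrt S ^ 2 = S := Real.sq_sqrt hS0
    have hsM : Real.sqrt M ^ 2 = M := Real.sq_sqrt hM0
    have h2ab : 2 * Real.sqrt S * Real.sqrt M ≤ S + M := by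
      nlinarith [sq_nonneg (Real.sqrt S - Real.sqrt M)]
    have step3 : 2 * (K * (Real.sqrt M * G)) ≤ (G + 2 * G ^ 2 + 1) * (S + M) := by
      rw [hKdef]
      have hGSM : 0 ≤ G * (S + M - 2 * Real.sqrt S * Real.sqrt M) :=
        mul_nonneg hG0 (by linarith)
      nlinarith [mul_nonneg (mul_nonneg hG0 hG0) hM0, mul_nonneg hG0 hS0,
        mul_nonneg (mul_nonneg hG0 hG0) hS0, Real.sqrt_nonneg M, Real.sqrt_nonneg S,
        mul_nonneg hS0 hM0]
    exact le_trans (step1.trans (le_of_eq step2)) step3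
  · intro a b ha hb
    have hsub : uIcc a b ⊆ Ioo (-1:ℝ) 1 := by
      rcases le_total a b with h | h
      · rw [uIcc_of_le h]
        exact fun x hx => ⟨lt_of_lt_of_le ha.1 hx.1, lt_of_le_of_lt hx.2 hb.2⟩
      · rw [uIcc_of_ge h]
        exact fun x hx => ⟨lt_of_lt_of_le hb.1 hx.1, lt_of_le_of_lt hx.2 ha.2⟩
    have hderivs : ∀ x ∈ uIcc a b, HasDerivAt (fun y => u y ^ 2) (2 * (u x * u' x)) x := by
      intro x hx
      have h := (hu'deriv x (hsub hx)).fun_pow 2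
      refine h.congr_deriv ?_
      push_cast
      ring
    have hint : IntervalIntegrable (fun t => 2 * (u t * u' t)) volume a b := by
      apply ContinuousOn.intervalIntegrable
      exact continuousOn_const.mul ((hucont.mono hsub).mul (hu'cont.mono hsub))
    exact (intervalIntegral.integral_eq_sub_of_hasDerivAt hderivs hint).symm
end
end

section
/- (Continuous embedding of D(A) into C([−1,1])) There exists a constant C>0 such that every u∈D(A) is bounded on (−1,1), admits finite limits as x→(−1)⁺ and as x→1⁻ (hence extends to a continuous function on [−1,1]), and satisfies sup_{x∈(−1,1)} |u(x)| ≤ C·(∫_{−1}^{1} u(x)² dx + ∫_{−1}^{1} (Au)(x)² dx)^{1/2}. -/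
open MeasureTheory Set Filter

noncomputable section

lemma cs_aux {f : ℝ → ℝ} {s : Set ℝ} (hfin : volume s ≠ ⊤)
    (hmeas : AEStronglyMeasurable f (volume.restrict s))
    (h2 : IntegrableOn (fun x => f x ^ 2) s) :
    |∫ x in s, f x| ≤ Real.sqrt (volume s).toReal * Real.sqrt (∫ x in s, f x ^ 2) := by
  haveI : IsFiniteMeasure (volume.restrict s) :=
    ⟨by rwa [Measure.restrict_apply_univ, lt_top_iff_ne_top]⟩
  have habs : AEStronglyMeasurable (fun x => |f x|) (volume.restrict s) := by
    simpa [Real.norm_eq_abs] using hmeas.norm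
  have h2' : IntegrableOn (fun x => |f x| ^ 2) s := by
    simpa only [sq_abs] using h2
  have hmem : MemLp (fun x => |f x|) 2 (volume.restrict s) :=
    (memLp_two_iff_integrable_sq habs).2 h2'
  have hmem1 : MemLp (fun _ : ℝ => (1:ℝ)) 2 (volume.restrict s) := memLp_const 1
  have hpq : Real.HolderConjugate 2 2 := Real.HolderConjugate.two_two
  have key := integral_mul_le_Lp_mul_Lq_of_nonneg (μ := volume.restrict s) hpq
    (f := fun x => |f x|) (g := fun _ => (1:ℝ))
    (Filter.Eventually.of_forall fun x => abs_nonneg _)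
    (Filter.Eventually.of_forall fun x => zero_le_one)
    (by simpa using hmem) (by simpa using hmem1)
  simp only [mul_one, Real.one_rpow, one_pow] at key
  have e1 : (∫ x in s, |f x| ^ (2:ℝ)) = ∫ x in s, f x ^ 2 := by
    apply integral_congr_ae; filter_upwards with x
    rw [show ((2:ℝ)) = ((2:ℕ):ℝ) by norm_num, Real.rpow_natCast, sq_abs]
  have e2 : (∫ _x in s, (1:ℝ)) = (volume s).toReal := by
    simp [setIntegral_const, measureReal_def]
  rw [e1, e2] at key
  have h3 : |∫ x in s, f x| ≤ ∫ x in s, |f x| := by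
    simpa using norm_integral_le_integral_norm (f := f) (μ := volume.restrict s)
  refine h3.trans (key.trans ?_)
  rw [Real.sqrt_eq_rpow, Real.sqrt_eq_rpow, mul_comm]

lemma sqrt_le_three_halves {y : ℝ} (hy : y ≤ 2.25) : Real.sqrt y ≤ 1.5 := by
  rw [show (1.5:ℝ) = Real.sqrt (1.5^2) from (Real.sqrt_sq (by norm_num)).symm]
  exact Real.sqrt_le_sqrt (by nlinarith)

set_option maxHeartbeats 2000000 in
/-- Continuous embedding of `D(A)` into `C([-1,1])`: every `u ∈ D(A)` is bounded on `(-1,1)`,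
admits finite limits at `x = ±1` (hence extends continuously to `[-1,1]`), and
`sup |u| ≤ C ‖u‖_{D(A)}`. -/
theorem DA_embeds_continuous :
    ∃ C : ℝ, 0 < C ∧ ∀ u u' Au : ℝ → ℝ, MemDA u u' Au →
      (∃ L : ℝ, Tendsto u (nhdsWithin 1 (Iio (1:ℝ))) (nhds L)) ∧
      (∃ L : ℝ, Tendsto u (nhdsWithin (-1) (Ioi (-1:ℝ))) (nhds L)) ∧
      (∃ v : ℝ → ℝ, ContinuousOn v (Icc (-1:ℝ) 1) ∧ ∀ x ∈ Ioo (-1:ℝ) 1, v x = u x) ∧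
      ∀ x ∈ Ioo (-1:ℝ) 1,
        |u x| ≤ C * Real.sqrt ((∫ y in Ioo (-1:ℝ) 1, u y ^ 2)
            + ∫ y in Ioo (-1:ℝ) 1, Au y ^ 2) := by
  refine ⟨7, by norm_num, ?_⟩
  intro u u' Au h
  set E := ∫ y in Ioo (-1:ℝ) 1, Au y ^ 2 with hEdef
  set U := ∫ y in Ioo (-1:ℝ) 1, u y ^ 2 with hUdef
  set N := Real.sqrt E with hNdef
  have hE0 : 0 ≤ E := setIntegral_nonneg measurableSet_Ioo fun y _ => sq_nonneg _
  have hU0 : 0 ≤ U := setIntegral_nonneg measurableSet_Ioo fun y _ => sq_nonneg _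
  have hN0 : 0 ≤ N := Real.sqrt_nonneg _
  have hAu_int : IntegrableOn Au (Ioc (-1:ℝ) 1) := h.Au_intble.1
  have hrestr : volume.restrict (Ioc (-1:ℝ) 1) = volume.restrict (Ioo (-1:ℝ) 1) :=
    (Measure.restrict_congr_set Ioo_ae_eq_Ioc).symm
  have hAu_sq_Ioc : IntegrableOn (fun y => Au y ^ 2) (Ioc (-1:ℝ) 1) := by
    rw [IntegrableOn, hrestr]; exact h.Au_sq_int
  -- Cauchy-Schwarz bound for the flux integrals
  have hCS : ∀ a b : ℝ, -1 ≤ a → a ≤ b → b ≤ 1 →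
      |∫ t in a..b, Au t| ≤ Real.sqrt (b - a) * N := by
    intro a b ha hab hb
    rw [intervalIntegral.integral_of_le hab]
    have hsub : Ioc a b ⊆ Ioc (-1:ℝ) 1 := Ioc_subset_Ioc ha hb
    have h1 : IntegrableOn (fun y => Au y ^ 2) (Ioc a b) := hAu_sq_Ioc.mono_set hsub
    have h2 := cs_aux (f := Au) (s := Ioc a b)
      (by rw [Real.volume_Ioc]; exact ENNReal.ofReal_ne_top)
      (hAu_int.mono_set hsub).aestronglyMeasurable h1
    rw [Real.volume_Ioc, ENNReal.toReal_ofReal (by linarith)] at h2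
    refine h2.trans ?_
    have hmono : (∫ y in Ioc a b, Au y ^ 2) ≤ ∫ y in Ioc (-1:ℝ) 1, Au y ^ 2 :=
      setIntegral_mono_set hAu_sq_Ioc
        (Filter.Eventually.of_forall fun y => sq_nonneg _)
        (HasSubset.Subset.eventuallyLE hsub)
    have heq : (∫ y in Ioc (-1:ℝ) 1, Au y ^ 2) = E := by
      rw [hEdef]; exact integral_Ioc_eq_integral_Ioo
    gcongr
    rw [hNdef]
    exact Real.sqrt_le_sqrt (by linarith)
  -- pointwise bound on the derivative
  have hd : ∀ x ∈ Ioo (-1:ℝ) 1,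
      |u' x| ≤ N / Real.sqrt (1 - x) + N / Real.sqrt (1 + x) := by
    intro x hx
    obtain ⟨hx1, hx2⟩ := hx
    have hp1 : (0:ℝ) < 1 + x := by linarith
    have hp2 : (0:ℝ) < 1 - x := by linarith
    have hsq1 : 0 < Real.sqrt (1 + x) := Real.sqrt_pos.2 hp1
    have hsq2 : 0 < Real.sqrt (1 - x) := Real.sqrt_pos.2 hp2
    have hflux := h.flux x ⟨hx1, hx2⟩
    have hfx : (1 - x) * ((1 + x) * |u' x|) = |(1 - x ^ 2) * u' x| := by
      rw [abs_mul, abs_of_pos (by nlinarith : (0:ℝ) < 1 - x ^ 2)]; ring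
    rcases le_total 0 x with hx0 | hx0
    · -- use the bound through sqrt (1 - x)
      have hb2 : |∫ t in x..(1:ℝ), Au t| ≤ Real.sqrt (1 - x) * N :=
        hCS x 1 (by linarith) (by linarith) le_rfl
      have hs1' : uIcc (-1:ℝ) x ⊆ uIcc (-1:ℝ) 1 := by
        rw [uIcc_of_le (by linarith : (-1:ℝ) ≤ x), uIcc_of_le (by norm_num : (-1:ℝ) ≤ 1)]
        exact Icc_subset_Icc le_rfl (by linarith)
      have hs2' : uIcc x (1:ℝ) ⊆ uIcc (-1:ℝ) 1 := by
        rw [uIcc_of_le (by linarith : x ≤ (1:ℝ)), uIcc_of_le (by norm_num : (-1:ℝ) ≤ 1)]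
        exact Icc_subset_Icc (by linarith) le_rfl
      have hi1 : IntervalIntegrable Au volume (-1) x := h.Au_intble.mono_set hs1'
      have hi2 : IntervalIntegrable Au volume x 1 := h.Au_intble.mono_set hs2'
      have hadd := intervalIntegral.integral_add_adjacent_intervals hi1 hi2
      rw [h.flux_one] at hadd
      have hFx : |(1 - x ^ 2) * u' x| ≤ Real.sqrt (1 - x) * N := by
        rw [hflux, show (∫ t in (-1:ℝ)..x, Au t) = -∫ t in x..(1:ℝ), Au t by linarith]
        rw [abs_neg]; exact hb2
      rw [← hfx] at hFx
      have step1 : Real.sqrt (1 - x) * ((1 + x) * |u' x|) ≤ N := by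
        have hmul : Real.sqrt (1 - x) * (Real.sqrt (1 - x) * ((1 + x) * |u' x|))
            ≤ Real.sqrt (1 - x) * N := by
          calc Real.sqrt (1 - x) * (Real.sqrt (1 - x) * ((1 + x) * |u' x|))
              = (1 - x) * ((1 + x) * |u' x|) := by
                rw [← mul_assoc, Real.mul_self_sqrt hp2.le]
            _ ≤ Real.sqrt (1 - x) * N := hFx
        exact le_of_mul_le_mul_left hmul hsq2
      have step2 : Real.sqrt (1 - x) * |u' x| ≤ N := by
        refine le_trans ?_ step1
        nlinarith [mul_nonneg (mul_nonneg hsq2.le (abs_nonneg (u' x))) hx0]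
      have step3 : |u' x| ≤ N / Real.sqrt (1 - x) :=
        (le_div_iff₀ hsq2).2 (by linarith [step2])
      have : 0 ≤ N / Real.sqrt (1 + x) := div_nonneg hN0 hsq1.le
      linarith
    · -- use the bound through sqrt (1 + x)
      have hb1 : |∫ t in (-1:ℝ)..x, Au t| ≤ Real.sqrt (1 + x) * N := by
        have := hCS (-1) x le_rfl (by linarith) (by linarith)
        rwa [show x - (-1:ℝ) = 1 + x by ring] at this
      have hFx : |(1 - x ^ 2) * u' x| ≤ Real.sqrt (1 + x) * N := by rw [hflux]; exact hb1
      rw [← hfx] at hFx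
      have hfx' : Real.sqrt (1 + x) * (Real.sqrt (1 + x) * ((1 - x) * |u' x|))
          ≤ Real.sqrt (1 + x) * N := by
        calc Real.sqrt (1 + x) * (Real.sqrt (1 + x) * ((1 - x) * |u' x|))
            = (1 - x) * ((1 + x) * |u' x|) := by
              rw [← mul_assoc, Real.mul_self_sqrt hp1.le]; ring
          _ ≤ Real.sqrt (1 + x) * N := hFx
      have step1 : Real.sqrt (1 + x) * ((1 - x) * |u' x|) ≤ N :=
        le_of_mul_le_mul_left hfx' hsq1
      have step2 : Real.sqrt (1 + x) * |u' x| ≤ N := by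
        refine le_trans ?_ step1
        nlinarith [mul_nonneg (mul_nonneg hsq1.le (abs_nonneg (u' x))) (neg_nonneg.2 hx0)]
      have step3 : |u' x| ≤ N / Real.sqrt (1 + x) :=
        (le_div_iff₀ hsq1).2 (by linarith [step2])
      have : 0 ≤ N / Real.sqrt (1 - x) := div_nonneg hN0 hsq2.le
      linarith
  -- the primitive of the dominating function
  set H : ℝ → ℝ := fun x => N * (2 * Real.sqrt (1 + x) - 2 * Real.sqrt (1 - x)) with hHdef
  have hHcont : Continuous H := by
    apply continuous_const.mul
    exact (continuous_const.mul
        (Real.continuous_sqrt.comp (continuous_const.add continuous_id))).sub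
      (continuous_const.mul
        (Real.continuous_sqrt.comp (continuous_const.sub continuous_id)))
  have hH : ∀ x ∈ Ioo (-1:ℝ) 1,
      HasDerivAt H (N / Real.sqrt (1 - x) + N / Real.sqrt (1 + x)) x := by
    intro x hx
    obtain ⟨hx1, hx2⟩ := hx
    have hp1 : (0:ℝ) < 1 + x := by linarith
    have hp2 : (0:ℝ) < 1 - x := by linarith
    have hsq1 : 0 < Real.sqrt (1 + x) := Real.sqrt_pos.2 hp1
    have hsq2 : 0 < Real.sqrt (1 - x) := Real.sqrt_pos.2 hp2
    have hd1 : HasDerivAt (fun y : ℝ => 1 + y) 1 x := by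
      simpa using (hasDerivAt_id x).const_add (1:ℝ)
    have hd2 : HasDerivAt (fun y : ℝ => 1 - y) (-1) x := by
      simpa using (hasDerivAt_id x).const_sub (1:ℝ)
    have hs1 : HasDerivAt (fun y : ℝ => Real.sqrt (1 + y)) (1 / (2 * Real.sqrt (1 + x))) x :=
      hd1.sqrt hp1.ne'
    have hs2 : HasDerivAt (fun y : ℝ => Real.sqrt (1 - y)) (-1 / (2 * Real.sqrt (1 - x))) x :=
      hd2.sqrt hp2.ne'
    have := (((hs1.const_mul (2:ℝ)).sub (hs2.const_mul (2:ℝ))).const_mul N)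
    refine this.congr_deriv ?_
    field_simp
    ring
  -- the key increment bound
  have hkey : ∀ a b : ℝ, a ∈ Ioo (-1:ℝ) 1 → b ∈ Ioo (-1:ℝ) 1 → a ≤ b →
      |u b - u a| ≤ H b - H a := by
    intro a b ha hb hab
    have hIcc : Icc a b ⊆ Ioo (-1:ℝ) 1 := fun t ht =>
      ⟨lt_of_lt_of_le ha.1 ht.1, lt_of_le_of_lt ht.2 hb.2⟩
    have hco : ContinuousOn (fun x => N / Real.sqrt (1 - x) + N / Real.sqrt (1 + x))
        (uIcc a b) := by
      rw [uIcc_of_le hab]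
      refine ContinuousOn.add
        (ContinuousOn.div continuousOn_const
          ((Real.continuous_sqrt.comp (continuous_const.sub continuous_id)).continuousOn)
          fun x hx => ?_)
        (ContinuousOn.div continuousOn_const
          ((Real.continuous_sqrt.comp (continuous_const.add continuous_id)).continuousOn)
          fun x hx => ?_)
      · have := hIcc hx
        exact (Real.sqrt_pos.2 (by linarith [this.2] : (0:ℝ) < 1 - x)).ne'
      · have := hIcc hx
        exact (Real.sqrt_pos.2 (by linarith [this.1] : (0:ℝ) < 1 + x)).ne'
    have hgint : IntervalIntegrable
        (fun x => N / Real.sqrt (1 - x) + N / Real.sqrt (1 + x)) volume a b :=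
      hco.intervalIntegrable
    have heq : (∫ t in a..b, (N / Real.sqrt (1 - t) + N / Real.sqrt (1 + t)))
        = H b - H a :=
      intervalIntegral.integral_eq_sub_of_hasDerivAt
        (fun x hx => hH x (hIcc (by rwa [uIcc_of_le hab] at hx))) hgint
    have hgnn : ∀ t : ℝ, 0 ≤ N / Real.sqrt (1 - t) + N / Real.sqrt (1 + t) := fun t =>
      add_nonneg (div_nonneg hN0 (Real.sqrt_nonneg _)) (div_nonneg hN0 (Real.sqrt_nonneg _))
    have hb1 : ‖∫ t in a..b, u' t‖
        ≤ |∫ t in a..b, (N / Real.sqrt (1 - t) + N / Real.sqrt (1 + t))| := by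
      refine intervalIntegral.norm_integral_le_abs_of_norm_le ?_ hgint
      filter_upwards [ae_restrict_mem measurableSet_uIoc] with t ht
      rw [Set.uIoc_of_le hab] at ht
      rw [Real.norm_eq_abs]
      exact hd t (hIcc (Ioc_subset_Icc_self ht))
    have hint_nn : 0 ≤ ∫ t in a..b, (N / Real.sqrt (1 - t) + N / Real.sqrt (1 + t)) :=
      intervalIntegral.integral_nonneg hab fun t _ => hgnn t
    calc |u b - u a| = ‖∫ t in a..b, u' t‖ := by
          rw [h.locAC a b ha hb, Real.norm_eq_abs]
      _ ≤ |∫ t in a..b, (N / Real.sqrt (1 - t) + N / Real.sqrt (1 + t))| := hb1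
      _ = H b - H a := by rw [abs_of_nonneg hint_nn, heq]
  -- H increments are bounded by 6 N
  have hH6 : ∀ a b : ℝ, a ∈ Ioo (-1:ℝ) 1 → b ∈ Ioo (-1:ℝ) 1 → H b - H a ≤ 6 * N := by
    intro a b ha hb
    have e1 : Real.sqrt (1 + b) ≤ 1.5 := sqrt_le_three_halves (by linarith [hb.2])
    have e2 : Real.sqrt (1 - a) ≤ 1.5 := sqrt_le_three_halves (by linarith [ha.1])
    have e3 : 0 ≤ Real.sqrt (1 - b) := Real.sqrt_nonneg _
    have e4 : 0 ≤ Real.sqrt (1 + a) := Real.sqrt_nonneg _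
    have hinner : (2 * Real.sqrt (1 + b) - 2 * Real.sqrt (1 - b))
        - (2 * Real.sqrt (1 + a) - 2 * Real.sqrt (1 - a)) ≤ 6 := by linarith
    calc H b - H a = N * ((2 * Real.sqrt (1 + b) - 2 * Real.sqrt (1 - b))
          - (2 * Real.sqrt (1 + a) - 2 * Real.sqrt (1 - a))) := by rw [hHdef]; ring
      _ ≤ N * 6 := mul_le_mul_of_nonneg_left hinner hN0
      _ = 6 * N := by ring
  have hu6 : ∀ a b : ℝ, a ∈ Ioo (-1:ℝ) 1 → b ∈ Ioo (-1:ℝ) 1 → |u b - u a| ≤ 6 * N := by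
    intro a b ha hb
    rcases le_total a b with hab | hab
    · exact (hkey a b ha hb hab).trans (hH6 a b ha hb)
    · rw [abs_sub_comm]; exact (hkey b a hb ha hab).trans (hH6 b a hb ha)
  have h0mem : (0:ℝ) ∈ Ioo (-1:ℝ) 1 := by norm_num
  -- monotone auxiliary function
  have hmono : MonotoneOn (fun x => u x + H x) (Ioo (-1:ℝ) 1) := by
    intro a ha b hb hab
    have h1 := (abs_le.1 (hkey a b ha hb hab)).1
    show u a + H a ≤ u b + H b
    linarith
  have hbddA : BddAbove ((fun x => u x + H x) '' Ioo (-1:ℝ) 1) := by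
    refine ⟨u 0 + H 0 + 12 * N, ?_⟩
    rintro y ⟨x, hx, rfl⟩
    have h1 := (abs_le.1 (hu6 0 x h0mem hx)).2
    have h2 := hH6 0 x h0mem hx
    show u x + H x ≤ u 0 + H 0 + 12 * N
    linarith
  have hbddB : BddBelow ((fun x => u x + H x) '' Ioo (-1:ℝ) 1) := by
    refine ⟨u 0 + H 0 - 12 * N, ?_⟩
    rintro y ⟨x, hx, rfl⟩
    have h1 := (abs_le.1 (hu6 x 0 hx h0mem)).2
    have h2 := hH6 x 0 hx h0mem
    show u 0 + H 0 - 12 * N ≤ u x + H x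
    linarith
  have hne : (Ioo (-1:ℝ) 1).Nonempty := ⟨0, h0mem⟩
  have hlimw1 : Tendsto (fun x => u x + H x) (nhdsWithin 1 (Iio (1:ℝ)))
      (nhds (sSup ((fun x => u x + H x) '' Ioo (-1:ℝ) 1))) :=
    MonotoneOn.tendsto_nhdsWithin_Ioo_left hne hmono hbddA
  have hlimw2 : Tendsto (fun x => u x + H x) (nhdsWithin (-1) (Ioi (-1:ℝ)))
      (nhds (sInf ((fun x => u x + H x) '' Ioo (-1:ℝ) 1))) :=
    MonotoneOn.tendsto_nhdsWithin_Ioo_right hne hmono hbddB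
  have hlimH1 : Tendsto H (nhdsWithin 1 (Iio (1:ℝ))) (nhds (H 1)) :=
    (hHcont.tendsto 1).mono_left nhdsWithin_le_nhds
  have hlimH2 : Tendsto H (nhdsWithin (-1) (Ioi (-1:ℝ))) (nhds (H (-1))) :=
    (hHcont.tendsto (-1)).mono_left nhdsWithin_le_nhds
  have hL1 : Tendsto u (nhdsWithin 1 (Iio (1:ℝ)))
      (nhds (sSup ((fun x => u x + H x) '' Ioo (-1:ℝ) 1) - H 1)) := by
    have := hlimw1.sub hlimH1
    refine this.congr fun x => by ring
  have hL2 : Tendsto u (nhdsWithin (-1) (Ioi (-1:ℝ)))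
      (nhds (sInf ((fun x => u x + H x) '' Ioo (-1:ℝ) 1) - H (-1))) := by
    have := hlimw2.sub hlimH2
    refine this.congr fun x => by ring
  set L1 := sSup ((fun x => u x + H x) '' Ioo (-1:ℝ) 1) - H 1 with hL1def
  set L2 := sInf ((fun x => u x + H x) '' Ioo (-1:ℝ) 1) - H (-1) with hL2def
  -- continuity of u on the open interval
  have huca : ∀ x ∈ Ioo (-1:ℝ) 1, ContinuousAt u x := by
    intro x hx
    have hx' : Ioo (-1:ℝ) 1 ∈ nhds x := isOpen_Ioo.mem_nhds hx
    have hb : ∀ᶠ y in nhds x, |u y - u x| ≤ |H y - H x| := by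
      filter_upwards [hx'] with y hy
      rcases le_total x y with hxy | hxy
      · exact (hkey x y hx hy hxy).trans (le_abs_self _)
      · rw [abs_sub_comm]
        exact (hkey y x hy hx hxy).trans ((le_abs_self _).trans (abs_sub_comm _ _).le)
    have hH0 : Tendsto (fun y => |H y - H x|) (nhds x) (nhds 0) := by
      have : Tendsto (fun y => H y - H x) (nhds x) (nhds (H x - H x)) :=
        (hHcont.tendsto x).sub tendsto_const_nhds
      simpa using this.abs
    have hsq : Tendsto (fun y => |u y - u x|) (nhds x) (nhds 0) :=
      squeeze_zero' (Filter.Eventually.of_forall fun y => abs_nonneg _) hb hH0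
    rw [ContinuousAt, tendsto_iff_dist_tendsto_zero]
    simpa [Real.dist_eq] using hsq
  -- the continuous extension
  set v : ℝ → ℝ := fun x => if x ≤ -1 then L2 else if x < 1 then u x else L1 with hvdef
  have hveq : ∀ x ∈ Ioo (-1:ℝ) 1, v x = u x := by
    intro x hx
    simp only [hvdef, if_neg (not_le.2 hx.1), if_pos hx.2]
  have hv1 : v 1 = L1 := by norm_num [hvdef]
  have hv2 : v (-1) = L2 := by norm_num [hvdef]
  have hvcont : ContinuousOn v (Icc (-1:ℝ) 1) := by
    intro x hx
    rcases eq_or_lt_of_le hx.1 with h1 | h1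
    · -- x = -1
      subst h1
      refine ContinuousWithinAt.mono ?_ Icc_subset_Ici_self
      rw [← Set.Ioi_insert, continuousWithinAt_insert_self]
      show Tendsto v (nhdsWithin (-1) (Ioi (-1:ℝ))) (nhds (v (-1)))
      rw [hv2]
      refine hL2.congr' ?_
      have hmem : Iio (1:ℝ) ∈ nhdsWithin (-1:ℝ) (Ioi (-1:ℝ)) :=
        nhdsWithin_le_nhds (Iio_mem_nhds (by norm_num))
      filter_upwards [self_mem_nhdsWithin, hmem] with y hy1 hy2
      exact (hveq y ⟨hy1, hy2⟩).symm
    · rcases eq_or_lt_of_le hx.2 with h2 | h2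
      · -- x = 1
        subst h2
        refine ContinuousWithinAt.mono ?_ Icc_subset_Iic_self
        rw [← Set.Iio_insert, continuousWithinAt_insert_self]
        show Tendsto v (nhdsWithin 1 (Iio (1:ℝ))) (nhds (v 1))
        rw [hv1]
        refine hL1.congr' ?_
        have hmem : Ioi (-1:ℝ) ∈ nhdsWithin (1:ℝ) (Iio (1:ℝ)) :=
          nhdsWithin_le_nhds (Ioi_mem_nhds (by norm_num))
        filter_upwards [self_mem_nhdsWithin, hmem] with y hy1 hy2
        exact (hveq y ⟨hy2, hy1⟩).symm
      · -- interior point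
        have hxI : x ∈ Ioo (-1:ℝ) 1 := ⟨h1, h2⟩
        have : ContinuousAt v x := by
          refine (huca x hxI).congr ?_
          filter_upwards [isOpen_Ioo.mem_nhds hxI] with y hy
          exact (hveq y hy).symm
        exact this.continuousWithinAt
  refine ⟨⟨L1, hL1⟩, ⟨L2, hL2⟩, ⟨v, hvcont, hveq⟩, ?_⟩
  -- the quantitative bound
  intro x hx
  haveI : IsFiniteMeasure (volume.restrict (Ioo (-1:ℝ) 1)) := by
    constructor
    rw [Measure.restrict_apply_univ, Real.volume_Ioo]
    exact ENNReal.ofReal_lt_top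
  have hucont : ContinuousOn u (Ioo (-1:ℝ) 1) := fun y hy => (huca y hy).continuousWithinAt
  have hmeasu : AEStronglyMeasurable u (volume.restrict (Ioo (-1:ℝ) 1)) :=
    hucont.aestronglyMeasurable measurableSet_Ioo
  have hmeasabs : AEStronglyMeasurable (fun y => |u y|) (volume.restrict (Ioo (-1:ℝ) 1)) := by
    simpa [Real.norm_eq_abs] using hmeasu.norm
  have hc1 : Integrable (fun _ : ℝ => (1:ℝ)) (volume.restrict (Ioo (-1:ℝ) 1)) :=
    integrable_const 1
  have hg1 : Integrable (fun y : ℝ => (1 + u y ^ 2) / 2) (volume.restrict (Ioo (-1:ℝ) 1)) :=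
    (hc1.add h.sq_int).div_const 2
  have hIntAbs : IntegrableOn (fun y => |u y|) (Ioo (-1:ℝ) 1) := by
    refine Integrable.mono' hg1 hmeasabs ?_
    filter_upwards with y
    rw [Real.norm_eq_abs, abs_abs]
    nlinarith [sq_nonneg (|u y| - 1), sq_abs (u y)]
  have hvol : (volume (Ioo (-1:ℝ) 1)).toReal = 2 := by
    rw [Real.volume_Ioo]
    rw [ENNReal.toReal_ofReal (by norm_num)]
    norm_num
  have havg : (2:ℝ) * |u x| ≤ (∫ y in Ioo (-1:ℝ) 1, |u y|) + 12 * N := by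
    have h1 : ∀ y ∈ Ioo (-1:ℝ) 1, |u x| ≤ |u y| + 6 * N := by
      intro y hy
      have h2 := hu6 y x hy hx
      have h3 := abs_sub_abs_le_abs_sub (u x) (u y)
      linarith
    have h2 : (∫ _y in Ioo (-1:ℝ) 1, |u x|)
        ≤ ∫ y in Ioo (-1:ℝ) 1, (|u y| + 6 * N) :=
      setIntegral_mono_on (integrable_const _) (hIntAbs.add (integrable_const _))
        measurableSet_Ioo h1
    rw [setIntegral_const, measureReal_def, hvol, smul_eq_mul,
      integral_add hIntAbs (integrable_const _), setIntegral_const, measureReal_def, hvol, smul_eq_mul] at h2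
    linarith
  have hcs_u : (∫ y in Ioo (-1:ℝ) 1, |u y|) ≤ Real.sqrt 2 * Real.sqrt U := by
    have hcs := cs_aux (f := fun y => |u y|) (s := Ioo (-1:ℝ) 1)
      (by rw [Real.volume_Ioo]; exact ENNReal.ofReal_ne_top) hmeasabs
      (by simpa only [sq_abs] using h.sq_int)
    rw [hvol] at hcs
    have heqU : (∫ y in Ioo (-1:ℝ) 1, |u y| ^ 2) = U := by
      rw [hUdef]; exact integral_congr_ae (Filter.Eventually.of_forall fun y => sq_abs _)
    rw [heqU] at hcs
    exact (le_abs_self _).trans hcs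
  have hsqrt2 : Real.sqrt 2 ≤ 1.5 := sqrt_le_three_halves (by norm_num)
  have hUsum : Real.sqrt U ≤ Real.sqrt (U + E) := Real.sqrt_le_sqrt (by linarith)
  have hEsum : N ≤ Real.sqrt (U + E) := Real.sqrt_le_sqrt (by linarith)
  have hsU : 0 ≤ Real.sqrt U := Real.sqrt_nonneg _
  have hsUE : 0 ≤ Real.sqrt (U + E) := Real.sqrt_nonneg _
  have hmul : Real.sqrt 2 * Real.sqrt U ≤ 1.5 * Real.sqrt (U + E) :=
    mul_le_mul hsqrt2 hUsum hsU (by norm_num)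
  linarith
end
end

section
/- (Continuous embedding of V into L^p) For every p∈[1,∞) there exists a constant C_p>0 such that every u∈V belongs to L^p(−1,1) and (∫_{−1}^{1} |u(x)|^p dx)^{1/p} ≤ C_p·(∫_{−1}^{1} u(x)² dx + ∫_{−1}^{1} (1−x²)·u′(x)² dx)^{1/2}. -/
open MeasureTheory Set Filter

set_option maxHeartbeats 1000000

noncomputable section

/-- `u` is continuous on `(-1,1)`. -/
lemma MemV.contOn {u u' : ℝ → ℝ} (h : MemV u u') : ContinuousOn u (Ioo (-1:ℝ) 1) := by
  intro x₀ hx₀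
  apply ContinuousAt.continuousWithinAt
  obtain ⟨hx₀1, hx₀2⟩ := hx₀
  set a : ℝ := (x₀ - 1) / 2 with ha
  set b : ℝ := (x₀ + 1) / 2 with hb
  have hax : a < x₀ := by rw [ha]; linarith
  have hxb : x₀ < b := by rw [hb]; linarith
  have haI : a ∈ Ioo (-1:ℝ) 1 := by constructor <;> (rw [ha]; nlinarith)
  have hbI : b ∈ Ioo (-1:ℝ) 1 := by constructor <;> (rw [hb]; nlinarith)
  have hint : IntervalIntegrable u' volume a b := h.deriv_intble a b haI hbI
  have hcont : ContinuousOn (fun t => u a + ∫ s in a..t, u' s) (uIcc a b) := by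
    apply ContinuousOn.add continuousOn_const
    exact intervalIntegral.continuousOn_primitive_interval' hint left_mem_uIcc
  have heq : ∀ t ∈ Ioo a b, u t = u a + ∫ s in a..t, u' s := by
    intro t ht
    have htI : t ∈ Ioo (-1:ℝ) 1 := by
      constructor
      · linarith [ht.1, haI.1]
      · linarith [ht.2, hbI.2]
    have := h.locAC a t haI htI
    linarith [this]
  have hca : ContinuousAt (fun t => u a + ∫ s in a..t, u' s) x₀ := by
    apply hcont.continuousAt (s := uIcc a b)
    rw [uIcc_of_le (by linarith : a ≤ b)]
    exact Icc_mem_nhds hax hxb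
  have : u =ᶠ[nhds x₀] (fun t => u a + ∫ s in a..t, u' s) := by
    filter_upwards [Ioo_mem_nhds hax hxb] with t ht
    exact heq t ht
  exact ContinuousAt.congr hca this.symm

/-- Cauchy–Schwarz for integrals. -/
lemma cs_sq {μ : Measure ℝ} {f g : ℝ → ℝ}
    (hf : AEStronglyMeasurable f μ) (hg : AEStronglyMeasurable g μ)
    (hf0 : 0 ≤ᵐ[μ] f) (hg0 : 0 ≤ᵐ[μ] g)
    (hf2 : Integrable (fun t => f t ^ 2) μ) (hg2 : Integrable (fun t => g t ^ 2) μ) :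
    ∫ t, f t * g t ∂μ ≤ Real.sqrt (∫ t, f t ^ 2 ∂μ) * Real.sqrt (∫ t, g t ^ 2 ∂μ) := by
  have hpq : Real.HolderConjugate 2 2 := Real.HolderConjugate.two_two
  have hmf : MemLp f 2 μ := (memLp_two_iff_integrable_sq hf).2 hf2
  have hmg : MemLp g 2 μ := (memLp_two_iff_integrable_sq hg).2 hg2
  have h2 : ENNReal.ofReal (2:ℝ) = 2 := by norm_num
  have := integral_mul_le_Lp_mul_Lq_of_nonneg hpq hf0 hg0 (h2 ▸ hmf) (h2 ▸ hmg)
  have hrw : ∀ h : ℝ → ℝ, (∫ t, h t ^ (2:ℝ) ∂μ) = ∫ t, h t ^ 2 ∂μ := by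
    intro h
    congr 1
    funext t
    rw [show (2:ℝ) = ((2:ℕ):ℝ) by norm_num, Real.rpow_natCast]
  rw [hrw f, hrw g] at this
  calc ∫ t, f t * g t ∂μ
      ≤ (∫ t, f t ^ 2 ∂μ) ^ (1/(2:ℝ)) * (∫ t, g t ^ 2 ∂μ) ^ (1/(2:ℝ)) := this
    _ = Real.sqrt (∫ t, f t ^ 2 ∂μ) * Real.sqrt (∫ t, g t ^ 2 ∂μ) := by
        rw [Real.sqrt_eq_rpow, Real.sqrt_eq_rpow]

/-- Weighted Cauchy–Schwarz: `(∫ |v|)² ≤ (∫ w⁻¹) · (∫ w v²)`. -/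
lemma cs_weighted {s : Set ℝ} (hs : MeasurableSet s) {w v : ℝ → ℝ}
    (hw0 : ∀ t ∈ s, 0 < w t)
    (hwm : AEStronglyMeasurable w (volume.restrict s))
    (hv : AEStronglyMeasurable v (volume.restrict s))
    (hwinv : IntegrableOn (fun t => (w t)⁻¹) s)
    (hwv : IntegrableOn (fun t => w t * v t ^ 2) s) :
    (∫ t in s, |v t|) ^ 2 ≤ (∫ t in s, (w t)⁻¹) * ∫ t in s, w t * v t ^ 2 := by
  set f : ℝ → ℝ := fun t => Real.sqrt (w t)⁻¹ with hf
  set g : ℝ → ℝ := fun t => Real.sqrt (w t) * |v t| with hg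
  have haef : ∀ᵐ t ∂(volume.restrict s), 0 < w t :=
    (ae_restrict_iff' hs).2 (Eventually.of_forall hw0)
  have hfm : AEStronglyMeasurable f (volume.restrict s) :=
    Real.continuous_sqrt.comp_aestronglyMeasurable hwm.aemeasurable.inv.aestronglyMeasurable
  have hgm : AEStronglyMeasurable g (volume.restrict s) :=
    (Real.continuous_sqrt.comp_aestronglyMeasurable hwm).mul
      (continuous_abs.comp_aestronglyMeasurable hv)
  have hf2 : Integrable (fun t => f t ^ 2) (volume.restrict s) := by
    apply hwinv.congr
    filter_upwards [haef] with t ht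
    rw [hf]
    simp only
    rw [Real.sq_sqrt (by positivity)]
  have hg2 : Integrable (fun t => g t ^ 2) (volume.restrict s) := by
    apply hwv.congr
    filter_upwards [haef] with t ht
    rw [hg]
    simp only
    rw [mul_pow, Real.sq_sqrt ht.le, sq_abs]
  have hfg : ∀ᵐ t ∂(volume.restrict s), f t * g t = |v t| := by
    filter_upwards [haef] with t ht
    rw [hf, hg]
    simp only
    rw [← mul_assoc, Real.sqrt_inv, inv_mul_cancel₀ (by positivity), one_mul]
  have hcs := cs_sq hfm hgm (Eventually.of_forall fun t => Real.sqrt_nonneg _)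
    (Eventually.of_forall fun t => by positivity) hf2 hg2
  rw [integral_congr_ae hfg] at hcs
  have hA : 0 ≤ ∫ t in s, f t ^ 2 := integral_nonneg fun t => sq_nonneg _
  have hB : 0 ≤ ∫ t in s, g t ^ 2 := integral_nonneg fun t => sq_nonneg _
  have hAeq : ∫ t in s, f t ^ 2 = ∫ t in s, (w t)⁻¹ := by
    apply integral_congr_ae
    filter_upwards [haef] with t ht
    rw [hf]; simp only; rw [Real.sq_sqrt (by positivity)]
  have hBeq : ∫ t in s, g t ^ 2 = ∫ t in s, w t * v t ^ 2 := by
    apply integral_congr_ae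
    filter_upwards [haef] with t ht
    rw [hg]; simp only; rw [mul_pow, Real.sq_sqrt ht.le, sq_abs]
  calc (∫ t in s, |v t|) ^ 2
      ≤ (Real.sqrt (∫ t in s, f t ^ 2) * Real.sqrt (∫ t in s, g t ^ 2)) ^ 2 := by
        apply sq_le_sq'
        · nlinarith [integral_nonneg (μ := volume.restrict s) (f := fun t => |v t|)
            (fun t => abs_nonneg _), Real.sqrt_nonneg (∫ t in s, f t ^ 2),
            Real.sqrt_nonneg (∫ t in s, g t ^ 2)]
        · exact hcs
    _ = (∫ t in s, f t ^ 2) * (∫ t in s, g t ^ 2) := by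
        rw [mul_pow, Real.sq_sqrt hA, Real.sq_sqrt hB]
    _ = (∫ t in s, (w t)⁻¹) * ∫ t in s, w t * v t ^ 2 := by rw [hAeq, hBeq]

/-- The square of the derivative is integrable on compact subintervals of `(-1,1)`
(as is the weighted version); here packaged: `(1-t)^(1+δ) * u' t ^ 2` integrable. -/
lemma MemV.w_deriv_int {u u' : ℝ → ℝ} (h : MemV u u') {a b : ℝ}
    (ha0 : (0:ℝ) ≤ a) (hab : a ≤ b) (hb : b < 1) {δ : ℝ} (hδ0 : 0 < δ) :
    IntegrableOn (fun t => (1 - t) ^ (1 + δ) * u' t ^ 2) (Ioc a b) := by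
  have ha : (-1:ℝ) < a := by linarith
  have haI : a ∈ Ioo (-1:ℝ) 1 := ⟨ha, lt_of_le_of_lt hab hb⟩
  have hbI : b ∈ Ioo (-1:ℝ) 1 := ⟨lt_of_lt_of_le ha hab, hb⟩
  have hsub : Ioc a b ⊆ Ioo (-1:ℝ) 1 := fun t ht => ⟨lt_of_lt_of_le ha ht.1.le, lt_of_le_of_lt ht.2 hb⟩
  have hmaj : IntegrableOn (fun t => (1 - t ^ 2) * u' t ^ 2) (Ioc a b) :=
    h.wsq_int.mono_set hsub
  have hu'm : AEStronglyMeasurable u' (volume.restrict (Ioc a b)) := by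
    exact ((h.deriv_intble a b haI hbI).1).aestronglyMeasurable
  have hwm : Continuous (fun t : ℝ => (1 - t) ^ (1 + δ)) := by
    apply Continuous.rpow_const (continuous_const.sub continuous_id)
    intro t; right; positivity
  have hsq : AEStronglyMeasurable (fun t => u' t ^ 2) (volume.restrict (Ioc a b)) := by
    exact hu'm.pow 2
  apply Integrable.mono' hmaj
  · exact (hwm.aestronglyMeasurable.restrict).mul hsq
  · apply (ae_restrict_iff' measurableSet_Ioc).2
    apply Eventually.of_forall
    intro t ht
    have ht1 : 0 < 1 - t := by linarith [ht.2, hb]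
    have h1 : (1 - t) ^ (1 + δ) ≤ (1 - t) ^ (1:ℝ) := by
      apply Real.rpow_le_rpow_of_exponent_ge ht1
      · linarith [ht.1]
      · linarith
    rw [Real.rpow_one] at h1
    have h2 : (1 - t) ≤ 1 - t ^ 2 := by nlinarith [ht.1, (hsub ht).2]
    have h3 : (0:ℝ) ≤ u' t ^ 2 := sq_nonneg _
    have h4 : (0:ℝ) ≤ (1 - t) ^ (1 + δ) := Real.rpow_nonneg ht1.le _
    rw [Real.norm_of_nonneg (by positivity)]
    nlinarith

/-- FTC evaluation of `∫ (1-t)^(-(1+δ))`. -/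
lemma ftc_weight {a b δ : ℝ} (hab : a ≤ b) (hb : b < 1) (hδ0 : 0 < δ) :
    ∫ t in a..b, (1 - t) ^ (-(1 + δ)) = ((1 - b) ^ (-δ) - (1 - a) ^ (-δ)) / δ := by
  have key : ∀ t ∈ uIcc a b, HasDerivAt (fun y => (1 - y) ^ (-δ) / δ)
      ((1 - t) ^ (-(1 + δ))) t := by
    intro t ht
    rw [uIcc_of_le hab] at ht
    have ht1 : 0 < 1 - t := by linarith [ht.2]
    have h1 : HasDerivAt (fun y : ℝ => 1 - y) (-1) t := by
      simpa using (hasDerivAt_id t).const_sub 1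
    have h2 : HasDerivAt (fun y : ℝ => y ^ (-δ)) (-δ * (1 - t) ^ (-δ - 1)) (1 - t) :=
      Real.hasDerivAt_rpow_const (Or.inl ht1.ne')
    have h3 : HasDerivAt (fun y => (1 - y) ^ (-δ) / δ) (-δ * (1 - t) ^ (-δ - 1) * -1 / δ) t :=
      (h2.comp t h1).div_const δ
    convert h3 using 1
    rw [show -δ - 1 = -(1 + δ) by ring]
    field_simp
  have hcont : ContinuousOn (fun t => (1 - t) ^ (-(1 + δ))) (uIcc a b) := by
    apply ContinuousOn.rpow_const
    · exact (continuous_const.sub continuous_id).continuousOn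
    · intro t ht
      rw [uIcc_of_le hab] at ht
      left
      have : 0 < 1 - t := by linarith [ht.2]
      exact this.ne'
  have := intervalIntegral.integral_eq_sub_of_hasDerivAt key hcont.intervalIntegrable
  rw [this]
  ring

/-- Reflection-invariance of the integral over `(-1,1)`. -/
lemma reflect_integral (f : ℝ → ℝ) :
    ∫ x in Ioo (-1:ℝ) 1, f (-x) = ∫ x in Ioo (-1:ℝ) 1, f x := by
  rw [← integral_Ioc_eq_integral_Ioo, ← integral_Ioc_eq_integral_Ioo,
    ← intervalIntegral.integral_of_le (by norm_num : (-1:ℝ) ≤ 1),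
    ← intervalIntegral.integral_of_le (by norm_num : (-1:ℝ) ≤ 1),
    intervalIntegral.integral_comp_neg]
  norm_num

/-- `MemV` is stable under reflection. -/
lemma MemV.reflect {u u' : ℝ → ℝ} (h : MemV u u') :
    MemV (fun x => u (-x)) (fun x => -u' (-x)) := by
  have hmemneg : ∀ x : ℝ, x ∈ Ioo (-1:ℝ) 1 → -x ∈ Ioo (-1:ℝ) 1 := by
    intro x hx; constructor <;> [linarith [hx.2]; linarith [hx.1]]
  have hIoo : ∀ f : ℝ → ℝ, IntegrableOn f (Ioo (-1:ℝ) 1) →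
      IntegrableOn (fun x => f (-x)) (Ioo (-1:ℝ) 1) := by
    intro f hf
    have h1 : IntervalIntegrable f volume (-1) 1 := by
      rw [intervalIntegrable_iff_integrableOn_Ioo_of_le (by norm_num)]
      exact hf
    have h2 : IntervalIntegrable (fun x => f (-x)) volume 1 (-1) := by
      simpa using (IntervalIntegrable.iff_comp_neg).1 h1
    rw [← intervalIntegrable_iff_integrableOn_Ioo_of_le (by norm_num : (-1:ℝ) ≤ 1)]
    exact h2.symm
  constructor
  · exact hIoo _ h.sq_int
  · intro a b ha hb
    have := h.locAC (-a) (-b) (hmemneg a ha) (hmemneg b hb)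
    rw [intervalIntegral.integral_neg, intervalIntegral.integral_comp_neg,
      ← intervalIntegral.integral_symm]
    simpa using this
  · intro a b ha hb
    have h1 : IntervalIntegrable u' volume (-a) (-b) :=
      h.deriv_intble _ _ (hmemneg a ha) (hmemneg b hb)
    have h2 : IntervalIntegrable (fun x => u' (-x)) volume a b := by
      have := (IntervalIntegrable.iff_comp_neg).1 h1
      simpa using this
    exact h2.neg
  · have := hIoo _ h.wsq_int
    apply this.congr_fun _ measurableSet_Ioo
    intro x _
    simp only [neg_neg, neg_sq]

/-- Key one-sided pointwise bound. -/
lemma oneSide (p : ℝ) (hp : 1 ≤ p) (u u' : ℝ → ℝ) (h : MemV u u')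
    (x : ℝ) (hx0 : 0 ≤ x) (hx1 : x < 1) :
    u x ^ 2 ≤ 4 * p * ((∫ t in Ioo (-1:ℝ) 1, u t ^ 2)
      + ∫ t in Ioo (-1:ℝ) 1, (1 - t ^ 2) * u' t ^ 2) * (1 - x) ^ (-(1/p)) := by
  set A := ∫ t in Ioo (-1:ℝ) 1, u t ^ 2 with hAdef
  set B := ∫ t in Ioo (-1:ℝ) 1, (1 - t ^ 2) * u' t ^ 2 with hBdef
  have hp0 : 0 < p := by linarith
  set δ : ℝ := 1/p with hδdef
  have hδ0 : 0 < δ := by positivity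
  have hδ1 : δ ≤ 1 := by rw [hδdef, div_le_one hp0]; linarith
  have hA0 : 0 ≤ A := setIntegral_nonneg measurableSet_Ioo (fun t _ => sq_nonneg _)
  have hB0 : 0 ≤ B := setIntegral_nonneg measurableSet_Ioo
    (fun t ht => mul_nonneg (by nlinarith [ht.1, ht.2] : (0:ℝ) ≤ 1 - t ^ 2) (sq_nonneg _))
  -- choose y₀ ∈ [0, 1/2] where u² is minimal
  have hIccsub : Icc (0:ℝ) 2⁻¹ ⊆ Ioo (-1:ℝ) 1 :=
    fun t ht => ⟨by linarith [ht.1], by linarith [ht.2]⟩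
  have hcont2 : ContinuousOn (fun t => u t ^ 2) (Icc (0:ℝ) 2⁻¹) :=
    (h.contOn.mono hIccsub).pow 2
  obtain ⟨y₀, hy₀mem, hy₀min⟩ :=
    (isCompact_Icc (a := (0:ℝ)) (b := 2⁻¹)).exists_isMinOn ⟨0, by norm_num⟩ hcont2
  have hy₀I : y₀ ∈ Ioo (-1:ℝ) 1 := hIccsub hy₀mem
  have hint05 : IntegrableOn (fun t => u t ^ 2) (Ioo (0:ℝ) 2⁻¹) :=
    h.sq_int.mono_set (fun t ht => hIccsub (Ioo_subset_Icc_self ht))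
  have hy₀A : u y₀ ^ 2 ≤ 2 * A := by
    have h1 : (u y₀ ^ 2) * (volume (Ioo (0:ℝ) 2⁻¹)).toReal ≤ ∫ t in Ioo (0:ℝ) 2⁻¹, u t ^ 2 := by
      apply setIntegral_ge_of_const_le_real measurableSet_Ioo (by simp) ?_ hint05
      intro t ht
      exact isMinOn_iff.1 hy₀min t (Ioo_subset_Icc_self ht)
    have h2 : ∫ t in Ioo (0:ℝ) 2⁻¹, u t ^ 2 ≤ A := by
      apply setIntegral_mono_set h.sq_int
      · exact (ae_restrict_iff' measurableSet_Ioo).2 (Eventually.of_forall fun t _ => sq_nonneg _)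
      · exact HasSubset.Subset.eventuallyLE (fun t ht => hIccsub (Ioo_subset_Icc_self ht))
    have h3 : (volume (Ioo (0:ℝ) 2⁻¹)).toReal = 2⁻¹ := by
      rw [Real.volume_Ioo]; norm_num
    rw [h3] at h1
    linarith
  -- the interval [a,b]
  set a := min x y₀ with hadef
  set b := max x y₀ with hbdef
  have ha0 : 0 ≤ a := le_min hx0 hy₀mem.1
  have hb1 : b < 1 := max_lt hx1 (by linarith [hy₀mem.2])
  have hab : a ≤ b := min_le_max
  have haI : a ∈ Ioo (-1:ℝ) 1 := ⟨by linarith, lt_of_le_of_lt hab hb1⟩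
  have hbI : b ∈ Ioo (-1:ℝ) 1 := ⟨by linarith [lt_of_le_of_lt hab hb1, ha0], hb1⟩
  have hbx : (1 - x)/2 ≤ 1 - b := by
    rcases le_total x y₀ with hc | hc
    · rw [hbdef, max_eq_right hc]; linarith [hy₀mem.2]
    · rw [hbdef, max_eq_left hc]; linarith
  -- |u x - u y₀| ≤ ∫ |u'|
  set J := ∫ t in Ioc a b, |u' t| with hJdef
  have hJ0 : 0 ≤ J := setIntegral_nonneg measurableSet_Ioc fun t _ => abs_nonneg _
  have habs : |u x - u y₀| ≤ J := by
    have hux : u x - u y₀ = ∫ t in y₀..x, u' t :=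
      h.locAC y₀ x hy₀I ⟨by linarith, hx1⟩
    rw [hux, hJdef]
    rcases le_total y₀ x with hc | hc
    · have e1 : a = y₀ := by rw [hadef, min_eq_right hc]
      have e2 : b = x := by rw [hbdef, max_eq_left hc]
      rw [e1, e2]
      calc |∫ t in y₀..x, u' t| ≤ ∫ t in y₀..x, |u' t| :=
            intervalIntegral.abs_integral_le_integral_abs hc
        _ = ∫ t in Ioc y₀ x, |u' t| := intervalIntegral.integral_of_le hc
    · have e1 : a = x := by rw [hadef, min_eq_left hc]
      have e2 : b = y₀ := by rw [hbdef, max_eq_right hc]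
      rw [e1, e2]
      rw [intervalIntegral.integral_symm, abs_neg]
      calc |∫ t in x..y₀, u' t| ≤ ∫ t in x..y₀, |u' t| :=
            intervalIntegral.abs_integral_le_integral_abs hc
        _ = ∫ t in Ioc x y₀, |u' t| := intervalIntegral.integral_of_le hc
  -- Cauchy–Schwarz with weight w = (1-t)^(1+δ)
  have hw0 : ∀ t ∈ Ioc a b, 0 < (1 - t) ^ (1 + δ) := by
    intro t ht
    exact Real.rpow_pos_of_pos (by linarith [ht.2]) _
  have hwc : Continuous (fun t : ℝ => (1 - t) ^ (1 + δ)) := by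
    apply Continuous.rpow_const (continuous_const.sub continuous_id)
    intro t; right; positivity
  have hvm : AEStronglyMeasurable u' (volume.restrict (Ioc a b)) :=
    ((h.deriv_intble a b haI hbI).1).aestronglyMeasurable
  have hwinv : IntegrableOn (fun t => ((1 - t) ^ (1 + δ))⁻¹) (Ioc a b) := by
    have hc : ContinuousOn (fun t => ((1 - t) ^ (1 + δ))⁻¹) (Icc a b) := by
      apply ContinuousOn.inv₀
      · exact (continuous_const.sub continuous_id).continuousOn.rpow_const
          (fun t _ => Or.inr (by positivity))
      · intro t ht
        exact (Real.rpow_pos_of_pos (by linarith [ht.2]) _).ne'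
    exact (hc.integrableOn_Icc).mono_set Ioc_subset_Icc_self
  have hwv : IntegrableOn (fun t => (1 - t) ^ (1 + δ) * u' t ^ 2) (Ioc a b) :=
    h.w_deriv_int ha0 hab hb1 hδ0
  have hcs := cs_weighted measurableSet_Ioc hw0 hwc.aestronglyMeasurable.restrict hvm hwinv hwv
  -- bound the first factor
  have hF1 : ∫ t in Ioc a b, ((1 - t) ^ (1 + δ))⁻¹ ≤ 2 * p * (1 - x) ^ (-δ) := by
    have h6 : ∫ t in Ioc a b, ((1 - t) ^ (1 + δ))⁻¹
        = ((1 - b) ^ (-δ) - (1 - a) ^ (-δ)) / δ := by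
      rw [← intervalIntegral.integral_of_le hab, ← ftc_weight hab hb1 hδ0]
      apply intervalIntegral.integral_congr
      intro t ht
      rw [uIcc_of_le hab] at ht
      exact (Real.rpow_neg (by linarith [ht.2, hb1] : (0:ℝ) ≤ 1 - t) _).symm
    have h7 : (1 - b) ^ (-δ) ≤ ((1 - x)/2) ^ (-δ) := by
      apply Real.rpow_le_rpow_of_nonpos (by linarith) hbx (by linarith)
    have h8 : ((1 - x)/2) ^ (-δ) = (1 - x) ^ (-δ) * 2 ^ δ := by
      rw [Real.div_rpow (by linarith) (by norm_num)]
      rw [Real.rpow_neg (by norm_num : (0:ℝ) ≤ 2)]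
      field_simp
    have h9 : (2:ℝ) ^ δ ≤ 2 := by
      calc (2:ℝ) ^ δ ≤ 2 ^ (1:ℝ) :=
            Real.rpow_le_rpow_of_exponent_le (by norm_num) hδ1
        _ = 2 := Real.rpow_one 2
    have h10 : 0 ≤ (1 - a) ^ (-δ) := Real.rpow_nonneg (by linarith [lt_of_le_of_lt hab hb1]) _
    have h11 : 0 < (1 - x) ^ (-δ) := Real.rpow_pos_of_pos (by linarith) _
    have h12 : 1/δ = p := by rw [hδdef]; field_simp
    rw [h6, div_le_iff₀ hδ0]
    calc (1 - b) ^ (-δ) - (1 - a) ^ (-δ) ≤ (1 - b) ^ (-δ) := by linarith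
      _ ≤ (1 - x) ^ (-δ) * 2 ^ δ := by rw [← h8]; exact h7
      _ ≤ (1 - x) ^ (-δ) * 2 := by nlinarith
      _ ≤ 2 * p * (1 - x) ^ (-δ) * δ := by
          have : p * δ = 1 := by rw [hδdef]; field_simp
          nlinarith
  -- bound the second factor
  have hF2 : ∫ t in Ioc a b, (1 - t) ^ (1 + δ) * u' t ^ 2 ≤ B := by
    have hsub : Ioc a b ⊆ Ioo (-1:ℝ) 1 :=
      fun t ht => ⟨by linarith [ht.1, ha0], lt_of_le_of_lt ht.2 hb1⟩
    have hmaj : IntegrableOn (fun t => (1 - t ^ 2) * u' t ^ 2) (Ioc a b) :=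
      h.wsq_int.mono_set hsub
    calc ∫ t in Ioc a b, (1 - t) ^ (1 + δ) * u' t ^ 2
        ≤ ∫ t in Ioc a b, (1 - t ^ 2) * u' t ^ 2 := by
          apply setIntegral_mono_on hwv hmaj measurableSet_Ioc
          intro t ht
          have ht1 : 0 < 1 - t := by linarith [ht.2]
          have h1 : (1 - t) ^ (1 + δ) ≤ (1 - t) ^ (1:ℝ) :=
            Real.rpow_le_rpow_of_exponent_ge ht1 (by linarith [ht.1]) (by linarith)
          rw [Real.rpow_one] at h1
          have h2 : (1 - t) ≤ 1 - t ^ 2 := by nlinarith [ht.1, (hsub ht).2]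
          nlinarith [sq_nonneg (u' t)]
      _ ≤ B := by
          apply setIntegral_mono_set h.wsq_int
          · apply (ae_restrict_iff' measurableSet_Ioo).2
            apply Eventually.of_forall
            intro t ht
            simp only [Pi.zero_apply]
            exact mul_nonneg (by nlinarith [ht.1, ht.2] : (0:ℝ) ≤ 1 - t ^ 2) (sq_nonneg _)
          · exact HasSubset.Subset.eventuallyLE hsub
  -- combine
  have hF10 : 0 ≤ ∫ t in Ioc a b, (1 - t) ^ (1 + δ) * u' t ^ 2 :=
    setIntegral_nonneg measurableSet_Ioc
      (fun t ht => mul_nonneg (Real.rpow_nonneg (by linarith [ht.2]) _) (sq_nonneg _))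
  have hJsq : J ^ 2 ≤ 2 * p * (1 - x) ^ (-δ) * B := by
    calc J ^ 2 ≤ (∫ t in Ioc a b, ((1 - t) ^ (1 + δ))⁻¹)
          * ∫ t in Ioc a b, (1 - t) ^ (1 + δ) * u' t ^ 2 := hcs
      _ ≤ (2 * p * (1 - x) ^ (-δ)) * B := by
          apply mul_le_mul hF1 hF2 hF10
            (mul_nonneg (by linarith : (0:ℝ) ≤ 2 * p) (Real.rpow_nonneg (by linarith) _))
  have hx2 : u x ^ 2 ≤ 2 * u y₀ ^ 2 + 2 * J ^ 2 := by
    have h1 : |u x| ≤ |u y₀| + J := by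
      have := abs_sub_abs_le_abs_sub (u x) (u y₀)
      linarith
    nlinarith [mul_self_le_mul_self (abs_nonneg (u x)) h1, sq_abs (u x), sq_abs (u y₀),
      sq_nonneg (|u y₀| - J), abs_nonneg (u y₀)]
  have hrp1 : 1 ≤ (1 - x) ^ (-δ) :=
    Real.one_le_rpow_of_pos_of_le_one_of_nonpos (by linarith) (by linarith) (by linarith)
  have h11 : 0 < (1 - x) ^ (-δ) := by linarith
  have hpR : 1 ≤ p * (1 - x) ^ (-δ) := by nlinarith
  calc u x ^ 2 ≤ 2 * u y₀ ^ 2 + 2 * J ^ 2 := hx2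
    _ ≤ 2 * (2 * A) + 2 * (2 * p * (1 - x) ^ (-δ) * B) := by nlinarith [sq_nonneg J]
    _ ≤ 4 * p * (A + B) * (1 - x) ^ (-δ) := by nlinarith [mul_le_mul_of_nonneg_left hpR hA0]

/-- From the quadratic pointwise bound to the `p`-th power pointwise bound. -/
lemma pow_step (p : ℝ) (hp : 1 ≤ p) {y S c : ℝ} (hS : 0 ≤ S) (hc : 0 < c)
    (hy : y ^ 2 ≤ 4 * p * S * c ^ (-(1/p))) :
    |y| ^ p ≤ (4 * p) ^ (p/2) * S ^ (p/2) * c ^ (-(1/2:ℝ)) := by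
  have hp0 : 0 < p := by linarith
  have h1 : |y| ^ p = (y ^ 2) ^ (p/2) := by
    rw [← sq_abs, ← Real.rpow_natCast |y| 2, ← Real.rpow_mul (abs_nonneg y)]
    congr 1
    push_cast
    ring
  rw [h1]
  have h4pS : 0 ≤ 4 * p * S := by positivity
  have hw : (0:ℝ) ≤ c ^ (-(1/p)) := Real.rpow_nonneg hc.le _
  calc (y ^ 2) ^ (p/2) ≤ (4 * p * S * c ^ (-(1/p))) ^ (p/2) :=
        Real.rpow_le_rpow (sq_nonneg y) hy (by positivity)
    _ = (4 * p) ^ (p/2) * S ^ (p/2) * c ^ (-(1/2:ℝ)) := by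
        rw [Real.mul_rpow h4pS hw, Real.mul_rpow (by positivity : (0:ℝ) ≤ 4 * p) hS,
          ← Real.rpow_mul hc.le]
        congr 1
        field_simp

/-- Continuous embedding of `V` into `L^p(-1,1)` for every finite `p ≥ 1`. -/
theorem V_embeds_Lp (p : ℝ) (hp : 1 ≤ p) :
    ∃ C : ℝ, 0 < C ∧ ∀ u u' : ℝ → ℝ, MemV u u' →
      IntegrableOn (fun x => |u x| ^ p) (Ioo (-1:ℝ) 1) ∧
      (∫ x in Ioo (-1:ℝ) 1, |u x| ^ p) ^ (1 / p)
        ≤ C * Real.sqrt ((∫ x in Ioo (-1:ℝ) 1, u x ^ 2)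
            + ∫ x in Ioo (-1:ℝ) 1, (1 - x ^ 2) * u' x ^ 2) := by
  have hp0 : 0 < p := by linarith
  set gf : ℝ → ℝ := fun x => (1 - x) ^ (-(1/2:ℝ)) + (1 + x) ^ (-(1/2:ℝ)) with hgfdef
  have hgint : IntegrableOn gf (Ioo (-1:ℝ) 1) := by
    have h1 : IntegrableOn (fun x : ℝ => (1 - x) ^ (-(1/2:ℝ))) (Ioo (-1:ℝ) 1) := by
      have h0 := intervalIntegral.intervalIntegrable_rpow'
        (a := (2:ℝ)) (b := 0) (r := -(2⁻¹:ℝ)) (by norm_num)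
      have h2 := h0.comp_sub_left 1
      norm_num at h2
      rw [← intervalIntegrable_iff_integrableOn_Ioo_of_le (by norm_num : (-1:ℝ) ≤ 1)]
      exact h2
    have h2 : IntegrableOn (fun x : ℝ => (1 + x) ^ (-(1/2:ℝ))) (Ioo (-1:ℝ) 1) := by
      have h0 := intervalIntegral.intervalIntegrable_rpow'
        (a := (0:ℝ)) (b := 2) (r := -(2⁻¹:ℝ)) (by norm_num)
      have h2 := h0.comp_sub_right (-1)
      norm_num at h2
      have h3 : IntegrableOn (fun x : ℝ => (x + 1) ^ (-(1/2:ℝ))) (Ioo (-1:ℝ) 1) := by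
        rw [← intervalIntegrable_iff_integrableOn_Ioo_of_le (by norm_num : (-1:ℝ) ≤ 1)]
        exact h2
      exact h3.congr_fun (fun x _ => by rw [add_comm]) measurableSet_Ioo
    exact h1.add h2
  have hgf0 : ∀ x ∈ Ioo (-1:ℝ) 1, 0 ≤ gf x := by
    intro x hx
    exact add_nonneg (Real.rpow_nonneg (by linarith [hx.2]) _)
      (Real.rpow_nonneg (by linarith [hx.1]) _)
  set G : ℝ := ∫ x in Ioo (-1:ℝ) 1, gf x with hGdef
  have hG0 : 0 ≤ G := setIntegral_nonneg measurableSet_Ioo hgf0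
  set K : ℝ := (4 * p) ^ (p/2) with hKdef
  have hK0 : 0 < K := Real.rpow_pos_of_pos (by linarith) _
  refine ⟨(K * G) ^ (1/p) + 1, ?_, ?_⟩
  · have : 0 ≤ (K * G) ^ (1/p) := Real.rpow_nonneg (mul_nonneg hK0.le hG0) _
    linarith
  intro u u' hu
  set S : ℝ := (∫ x in Ioo (-1:ℝ) 1, u x ^ 2)
    + ∫ x in Ioo (-1:ℝ) 1, (1 - x ^ 2) * u' x ^ 2 with hSdef
  have hA0 : 0 ≤ ∫ x in Ioo (-1:ℝ) 1, u x ^ 2 :=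
    setIntegral_nonneg measurableSet_Ioo (fun t _ => sq_nonneg _)
  have hB0 : 0 ≤ ∫ x in Ioo (-1:ℝ) 1, (1 - x ^ 2) * u' x ^ 2 :=
    setIntegral_nonneg measurableSet_Ioo
      (fun t ht => mul_nonneg (by nlinarith [ht.1, ht.2] : (0:ℝ) ≤ 1 - t ^ 2) (sq_nonneg _))
  have hS0 : 0 ≤ S := by rw [hSdef]; linarith
  have hKS0 : 0 ≤ K * S ^ (p/2) := mul_nonneg hK0.le (Real.rpow_nonneg hS0 _)
  -- pointwise bound
  have hptw : ∀ x ∈ Ioo (-1:ℝ) 1, |u x| ^ p ≤ K * S ^ (p/2) * gf x := by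
    intro x hx
    rcases le_or_gt 0 x with hxx | hxx
    · have h1 := oneSide p hp u u' hu x hxx hx.2
      have h2 := pow_step p hp hS0 (show (0:ℝ) < 1 - x by linarith [hx.2]) h1
      calc |u x| ^ p ≤ (4 * p) ^ (p/2) * S ^ (p/2) * (1 - x) ^ (-(1/2:ℝ)) := h2
        _ ≤ K * S ^ (p/2) * gf x := by
            rw [hKdef, hgfdef]
            have hpos : 0 ≤ (1 + x) ^ (-(1/2:ℝ)) := Real.rpow_nonneg (by linarith [hx.1]) _
            have h3 : (1 - x) ^ (-(1/2:ℝ)) ≤ (1 - x) ^ (-(1/2:ℝ)) + (1 + x) ^ (-(1/2:ℝ)) := by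
              linarith
            exact mul_le_mul_of_nonneg_left h3 hKS0
    · have h1 := oneSide p hp _ _ hu.reflect (-x) (by linarith) (by linarith [hx.1])
      simp only [neg_neg, sub_neg_eq_add, neg_sq] at h1
      have hA' : (∫ t in Ioo (-1:ℝ) 1, u (-t) ^ 2) = ∫ t in Ioo (-1:ℝ) 1, u t ^ 2 := by
        simpa using reflect_integral (fun t => u t ^ 2)
      have hB' : (∫ t in Ioo (-1:ℝ) 1, (1 - t ^ 2) * u' (-t) ^ 2)
          = ∫ t in Ioo (-1:ℝ) 1, (1 - t ^ 2) * u' t ^ 2 := by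
        have := reflect_integral (fun t => (1 - t ^ 2) * u' t ^ 2)
        simpa [neg_sq] using this
      rw [hA', hB'] at h1
      have h2 := pow_step p hp hS0 (show (0:ℝ) < 1 + x by linarith [hx.1]) h1
      calc |u x| ^ p ≤ (4 * p) ^ (p/2) * S ^ (p/2) * (1 + x) ^ (-(1/2:ℝ)) := h2
        _ ≤ K * S ^ (p/2) * gf x := by
            rw [hKdef, hgfdef]
            have hpos : 0 ≤ (1 - x) ^ (-(1/2:ℝ)) := Real.rpow_nonneg (by linarith [hx.2]) _
            have h3 : (1 + x) ^ (-(1/2:ℝ)) ≤ (1 - x) ^ (-(1/2:ℝ)) + (1 + x) ^ (-(1/2:ℝ)) := by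
              linarith
            exact mul_le_mul_of_nonneg_left h3 hKS0
  -- integrability
  have hmeas : AEStronglyMeasurable (fun x => |u x| ^ p)
      (volume.restrict (Ioo (-1:ℝ) 1)) := by
    apply ContinuousOn.aestronglyMeasurable _ measurableSet_Ioo
    exact (hu.contOn.abs).rpow_const (fun x _ => Or.inr hp0.le)
  have hIntLp : IntegrableOn (fun x => |u x| ^ p) (Ioo (-1:ℝ) 1) := by
    apply Integrable.mono' (hgint.const_mul (K * S ^ (p/2))) hmeas
    apply (ae_restrict_iff' measurableSet_Ioo).2
    apply Eventually.of_forall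
    intro x hx
    rw [Real.norm_of_nonneg (Real.rpow_nonneg (abs_nonneg _) _)]
    exact hptw x hx
  refine ⟨hIntLp, ?_⟩
  have hLHS0 : 0 ≤ ∫ x in Ioo (-1:ℝ) 1, |u x| ^ p :=
    setIntegral_nonneg measurableSet_Ioo (fun t _ => Real.rpow_nonneg (abs_nonneg _) _)
  have hMono : (∫ x in Ioo (-1:ℝ) 1, |u x| ^ p) ≤ K * S ^ (p/2) * G := by
    calc (∫ x in Ioo (-1:ℝ) 1, |u x| ^ p)
        ≤ ∫ x in Ioo (-1:ℝ) 1, K * S ^ (p/2) * gf x :=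
          setIntegral_mono_on hIntLp (hgint.const_mul _) measurableSet_Ioo hptw
      _ = K * S ^ (p/2) * G := by rw [hGdef, integral_const_mul]
  calc (∫ x in Ioo (-1:ℝ) 1, |u x| ^ p) ^ (1/p)
      ≤ (K * S ^ (p/2) * G) ^ (1/p) :=
        Real.rpow_le_rpow hLHS0 hMono (by positivity)
    _ = (K * G) ^ (1/p) * Real.sqrt S := by
        rw [show K * S ^ (p/2) * G = (K * G) * S ^ (p/2) by ring]
        rw [Real.mul_rpow (mul_nonneg hK0.le hG0) (Real.rpow_nonneg hS0 _)]
        congr 1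
        rw [← Real.rpow_mul hS0, show (p/2) * (1/p) = 1/2 by field_simp,
          Real.sqrt_eq_rpow]
    _ ≤ ((K * G) ^ (1/p) + 1) * Real.sqrt S := by
        apply mul_le_mul_of_nonneg_right _ (Real.sqrt_nonneg S)
        linarith
end
end
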